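/- arXiv:2401.01027 — 4 statements merged into one kernel-verified Lean document; each statement's English description precedes it below -/
import Mathlib

section
/- For every integer n ≥ 2, Σ_{k=0}^{n−2} X_{P_k} · X_{C_{n−k}} = (n − 1) · X_{P_n}; that is, the average of the full convolution of the chromatic symmetric functions of paths and cycles with total order n is the chromatic symmetric function of the path of order n. Here X_{P_0} = 1. -/
open Finset

/-- Symmetric functions in countably many variables `x_0, x_1, x_2, …`, realized inside
the ring of formal multivariate power series over `ℚ`. -/
abbrev SymF : Type := MvPowerSeries ℕ ℚ

open Classical in
/-- The elementary symmetric function `e_k`: the sum of all squarefree monomials of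
degree `k` (so `e_0 = 1`). -/
noncomputable def esymm (k : ℕ) : SymF :=
  fun d : ℕ →₀ ℕ =>
    if (d.sum fun _ e => e) = k ∧ ∀ i, d i ≤ 1 then (1 : ℚ) else 0

/-- `e_I = e_{i_1} ⋯ e_{i_s}` for a list `I = [i_1, …, i_s]`. -/
noncomputable def esymmProd (I : List ℕ) : SymF := (I.map esymm).prod

open Classical in
/-- The chromatic symmetric function `X_G = Σ_κ ∏_v x_{κ v}`, summed over proper colorings
`κ : V → ℕ`: the coefficient of the monomial with exponent vector `d` is the number of
proper colorings all of whose color fibres have the sizes recorded by `d`. -/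
noncomputable def csf {V : Type} [Finite V] (G : SimpleGraph V) : SymF :=
  fun d : ℕ →₀ ℕ =>
    (({κ : V → ℕ | (∀ v w, G.Adj v w → κ v ≠ κ w) ∧
        ∀ i : ℕ, {v | κ v = i}.ncard = d i}).ncard : ℚ)

/-- The path `P_n` on vertices `0, 1, …, n-1`. -/
def pathG (n : ℕ) : SimpleGraph (Fin n) :=
  SimpleGraph.fromRel (fun i j => (i : ℕ) + 1 = (j : ℕ))

/-- The cycle `C_n` on vertices `0, 1, …, n-1` (for `n = 2` this is `K_2`). -/
def cycleG (n : ℕ) : SimpleGraph (Fin n) :=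
  SimpleGraph.fromRel (fun i j =>
    (i : ℕ) + 1 = (j : ℕ) ∨ ((i : ℕ) = 0 ∧ (j : ℕ) = n - 1))

namespace Stmt6

variable {V W : Type} [Fintype V] [Fintype W]

/-- Profile of a coloring of a finite vertex set. -/
noncomputable def profV (κ : V → ℕ) : ℕ →₀ ℕ := ∑ v : V, Finsupp.single (κ v) 1

lemma profV_apply (κ : V → ℕ) (i : ℕ) : profV κ i = {v | κ v = i}.ncard := by
  classical
  have h : {v | κ v = i} = ↑(Finset.univ.filter fun v => κ v = i) := by ext v; simp
  rw [h, Set.ncard_coe_finset, profV, Finsupp.finset_sum_apply]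
  rw [Finset.card_filter]
  refine Finset.sum_congr rfl fun v _ => ?_
  simp [Finsupp.single_apply]

def properC (G : SimpleGraph V) (κ : V → ℕ) : Prop := ∀ v w, G.Adj v w → κ v ≠ κ w

lemma csf_eq (G : SimpleGraph V) (d : ℕ →₀ ℕ) :
    csf G d = (Nat.card {κ : V → ℕ // properC G κ ∧ profV κ = d} : ℚ) := by
  have : csf G d = (({κ : V → ℕ | (∀ v w, G.Adj v w → κ v ≠ κ w) ∧
      ∀ i : ℕ, {v | κ v = i}.ncard = d i}).ncard : ℚ) := rfl
  rw [this, ← Nat.card_coe_set_eq]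
  congr 1
  refine Nat.card_congr (Equiv.subtypeEquivRight fun κ => ?_)
  simp only [Set.mem_setOf_eq, properC]
  constructor
  · rintro ⟨h1, h2⟩; exact ⟨h1, Finsupp.ext fun i => by rw [profV_apply]; exact h2 i⟩
  · rintro ⟨h1, h2⟩; exact ⟨h1, fun i => by rw [← profV_apply, h2]⟩

lemma profV_mem_support (κ : V → ℕ) (v : V) : κ v ∈ (profV κ).support := by
  rw [Finsupp.mem_support_iff, profV_apply]
  have : {w | κ w = κ v}.Nonempty := ⟨v, rfl⟩
  have hfin : {w | κ w = κ v}.Finite := Set.toFinite _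
  have := (Set.ncard_pos hfin).mpr this
  omega

end Stmt6

namespace Stmt6X

/-- Fiberwise counting with `Nat.card`. -/
lemma key {α : Type*} {ι : Type*} (P : α → Prop) (hfin : {x | P x}.Finite)
    (f : α → ι) (s : Finset ι) (hf : ∀ x, P x → f x ∈ s) :
    Nat.card {x // P x} = ∑ i ∈ s, Nat.card {x // P x ∧ f x = i} := by
  classical
  have h1 : Nat.card {x // P x} = hfin.toFinset.card := by
    have := Nat.card_coe_set_eq {x | P x}
    rw [Set.ncard_eq_toFinset_card _ hfin] at this
    exact this
  rw [h1, Finset.card_eq_sum_card_fiberwise (t := s) (f := f)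
    (fun x hx => hf x ((Set.Finite.mem_toFinset hfin).mp hx))]
  refine Finset.sum_congr rfl fun i _ => ?_
  have h2 : {x | P x ∧ f x = i} = ↑(hfin.toFinset.filter fun x => f x = i) := by
    ext x; simp [Set.Finite.mem_toFinset]
  have h3 : Nat.card {x // P x ∧ f x = i} = ({x | P x ∧ f x = i} : Set α).ncard :=
    Nat.card_coe_set_eq _
  rw [h3, h2, Set.ncard_coe_finset]

end Stmt6X

namespace Stmt6

variable {V W : Type} [Fintype V] [Fintype W]

lemma finite_pairs (G : SimpleGraph V) (H : SimpleGraph W) (d : ℕ →₀ ℕ) :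
    {p : (V → ℕ) × (W → ℕ) |
      (properC G p.1 ∧ properC H p.2) ∧ profV p.1 + profV p.2 = d}.Finite := by
  have hS : ∀ (U : Type) [Fintype U], {κ : U → ℕ | ∀ v, κ v ∈ (d.support : Set ℕ)}.Finite := by
    intro U _
    have := Set.Finite.pi (ι := U) (t := fun _ => (d.support : Set ℕ))
      (fun _ => d.support.finite_toSet)
    refine this.subset fun κ hκ => ?_
    rw [Set.mem_pi]; exact fun v _ => hκ v
  refine (Set.Finite.prod (hS V) (hS W)).subset ?_
  rintro ⟨a, b⟩ ⟨⟨_, _⟩, hsum⟩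
  dsimp only at hsum
  constructor
  · intro v
    have h1 := profV_mem_support a v
    rw [Finsupp.mem_support_iff] at h1
    have h2 : d (a v) ≠ 0 := by
      rw [← hsum, Finsupp.add_apply]
      intro hc
      exact h1 (by omega)
    simpa using h2
  · intro v
    have h1 := profV_mem_support b v
    rw [Finsupp.mem_support_iff] at h1
    have h2 : d (b v) ≠ 0 := by
      rw [← hsum, Finsupp.add_apply]
      intro hc
      exact h1 (by omega)
    simpa using h2

lemma coeff_csf_mul (G : SimpleGraph V) (H : SimpleGraph W) (d : ℕ →₀ ℕ) :
    (csf G * csf H) d = (Nat.card {p : (V → ℕ) × (W → ℕ) //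
      (properC G p.1 ∧ properC H p.2) ∧ profV p.1 + profV p.2 = d} : ℚ) := by
  classical
  have hm : (csf G * csf H) d = ∑ p ∈ Finset.HasAntidiagonal.antidiagonal d, csf G p.1 * csf H p.2 := by
    have := MvPowerSeries.coeff_mul (R := ℚ) d (csf G) (csf H)
    simpa only [MvPowerSeries.coeff_apply] using this
  rw [hm]
  have hterm : ∀ p : (ℕ →₀ ℕ) × (ℕ →₀ ℕ), csf G p.1 * csf H p.2 =
      ((Nat.card {a : V → ℕ // properC G a ∧ profV a = p.1} *
        Nat.card {b : W → ℕ // properC H b ∧ profV b = p.2} : ℕ) : ℚ) := by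
    intro p; rw [csf_eq, csf_eq]; push_cast; ring
  rw [Finset.sum_congr rfl fun p _ => hterm p, ← Nat.cast_sum]
  congr 1
  rw [Stmt6X.key (fun p : (V → ℕ) × (W → ℕ) =>
        (properC G p.1 ∧ properC H p.2) ∧ profV p.1 + profV p.2 = d)
      (finite_pairs G H d) (fun p => (profV p.1, profV p.2)) (Finset.HasAntidiagonal.antidiagonal d)
      (fun p hp => Finset.HasAntidiagonal.mem_antidiagonal.mpr hp.2)]
  refine Finset.sum_congr rfl fun q hq => ?_
  rw [← Nat.card_prod]
  refine Nat.card_congr ?_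
  exact
    { invFun := fun x => (⟨x.1.1, x.2.1.1.1, congrArg Prod.fst x.2.2⟩,
                         ⟨x.1.2, x.2.1.1.2, congrArg Prod.snd x.2.2⟩)
      toFun := fun ab => ⟨(ab.1.1, ab.2.1), ⟨⟨⟨ab.1.2.1, ab.2.2.1⟩,
          by
            show profV ab.1.1 + profV ab.2.1 = d
            rw [ab.1.2.2, ab.2.2.2]
            exact Finset.HasAntidiagonal.mem_antidiagonal.mp hq⟩,
          Prod.ext ab.1.2.2 ab.2.2.2⟩⟩
      left_inv := fun x => rfl
      right_inv := fun ab => rfl }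

end Stmt6

namespace Stmt6

lemma properC_pathG_iff (k : ℕ) (a : Fin k → ℕ) :
    properC (pathG k) a ↔ ∀ i j : Fin k, (i : ℕ) + 1 = (j : ℕ) → a i ≠ a j := by
  constructor
  · intro h i j hij
    refine h i j ?_
    rw [pathG, SimpleGraph.fromRel_adj]
    exact ⟨fun hc => by rw [hc] at hij; omega, Or.inl hij⟩
  · intro h v w hadj
    rw [pathG, SimpleGraph.fromRel_adj] at hadj
    rcases hadj with ⟨hne, hvw | hwv⟩
    · exact h v w hvw
    · exact Ne.symm (h w v hwv)

lemma properC_cycleG_iff (m : ℕ) (hm : 2 ≤ m) (b : Fin m → ℕ) :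
    properC (cycleG m) b ↔
      ((∀ i j : Fin m, (i : ℕ) + 1 = (j : ℕ) → b i ≠ b j) ∧
        b ⟨0, by omega⟩ ≠ b ⟨m - 1, by omega⟩) := by
  constructor
  · intro h
    constructor
    · intro i j hij
      refine h i j ?_
      rw [cycleG, SimpleGraph.fromRel_adj]
      exact ⟨fun hc => by rw [hc] at hij; omega, Or.inl (Or.inl hij)⟩
    · refine h _ _ ?_
      rw [cycleG, SimpleGraph.fromRel_adj]
      refine ⟨fun hc => ?_, Or.inl (Or.inr ⟨rfl, rfl⟩)⟩
      have := congrArg Fin.val hc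
      simp at this
      omega
  · rintro ⟨h1, h2⟩ v w hadj
    rw [cycleG, SimpleGraph.fromRel_adj] at hadj
    rcases hadj with ⟨hne, (hvw | ⟨hv0, hwm⟩) | (hwv | ⟨hw0, hvm⟩)⟩
    · exact h1 v w hvw
    · have hv : v = ⟨0, by omega⟩ := Fin.ext hv0
      have hw : w = ⟨m - 1, by omega⟩ := Fin.ext hwm
      rw [hv, hw]; exact h2
    · exact Ne.symm (h1 w v hwv)
    · have hw : w = ⟨0, by omega⟩ := Fin.ext hw0
      have hv : v = ⟨m - 1, by omega⟩ := Fin.ext hvm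
      rw [hv, hw]; exact Ne.symm h2

noncomputable def profN (n : ℕ) (f : ℕ → ℕ) : ℕ →₀ ℕ :=
  ∑ v ∈ Finset.range n, Finsupp.single (f v) 1

def Scond (n : ℕ) (d : ℕ →₀ ℕ) (k : ℕ) (f : ℕ → ℕ) : Prop :=
  (∀ i, n ≤ i → f i = 0) ∧ (∀ i, i + 1 < k → f i ≠ f (i + 1)) ∧
  (∀ i, k ≤ i → i + 1 < n → f i ≠ f (i + 1)) ∧ f k ≠ f (n - 1) ∧ profN n f = d

def Tcond (n : ℕ) (d : ℕ →₀ ℕ) (c : ℕ → ℕ) : Prop :=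
  (∀ i, n ≤ i → c i = 0) ∧ (∀ i, i + 1 < n → c i ≠ c (i + 1)) ∧ profN n c = d

lemma profV_eq_range {k : ℕ} (a : Fin k → ℕ) (g : ℕ → ℕ) (h : ∀ i : Fin k, a i = g i) :
    profV a = ∑ i ∈ Finset.range k, Finsupp.single (g i) 1 := by
  rw [profV, ← Fin.sum_univ_eq_sum_range (fun i => Finsupp.single (g i) 1) k]
  exact Finset.sum_congr rfl fun i _ => by rw [h i]

lemma profN_split (n k : ℕ) (hk : k ≤ n) (f : ℕ → ℕ) :
    profN n f = (∑ i ∈ Finset.range k, Finsupp.single (f i) 1) +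
      ∑ i ∈ Finset.range (n - k), Finsupp.single (f (k + i)) 1 := by
  rw [profN, ← Finset.sum_Ico_eq_sum_range (fun i => Finsupp.single (f i) 1) k n]
  rw [Finset.range_eq_Ico, ← Finset.sum_Ico_consecutive _ (Nat.zero_le k) hk]
  rw [Finset.range_eq_Ico]

end Stmt6

namespace Stmt6

lemma profV_eq_range' {k : ℕ} (b : Fin k → ℕ) (g : ℕ → ℕ) (t : ℕ)
    (h : ∀ i : Fin k, b i = g (t + i)) :
    profV b = ∑ i ∈ Finset.range k, Finsupp.single (g (t + i)) 1 := by
  rw [profV, ← Fin.sum_univ_eq_sum_range (fun i => Finsupp.single (g (t + i)) 1) k]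
  exact Finset.sum_congr rfl fun i _ => by rw [h i]

lemma profN_glue (n k : ℕ) (hk : k + 2 ≤ n) (a : Fin k → ℕ) (b : Fin (n - k) → ℕ) :
    profN n (fun i => if h1 : i < k then a ⟨i, h1⟩
      else if h2 : i < n then b ⟨i - k, by omega⟩ else 0) = profV a + profV b := by
  rw [profN_split n k (by omega)]
  congr 1
  · exact (profV_eq_range a
      (fun j => if h1 : j < k then a ⟨j, h1⟩ else if h2 : j < n then b ⟨j - k, by omega⟩ else 0)
      (fun i => by beta_reduce; rw [dif_pos i.isLt])).symm
  · refine (profV_eq_range' b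
      (fun j => if h1 : j < k then a ⟨j, h1⟩ else if h2 : j < n then b ⟨j - k, by omega⟩ else 0)
      k (fun i => ?_)).symm
    beta_reduce
    rw [dif_neg (by omega), dif_pos (by omega)]
    exact congrArg b (Fin.ext (by omega : (i : ℕ) = k + (i : ℕ) - k))

lemma profV_split (n k : ℕ) (hk : k ≤ n) (f : ℕ → ℕ) :
    profV (fun v : Fin k => f ↑v) + profV (fun v : Fin (n - k) => f (k + ↑v)) = profN n f := by
  rw [profN_split n k hk, profV_eq_range _ f (fun i => rfl), profV_eq_range' _ f k (fun i => rfl)]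

lemma card_pairs_eq (n k : ℕ) (hk : k + 2 ≤ n) (d : ℕ →₀ ℕ) :
    Nat.card {p : (Fin k → ℕ) × (Fin (n - k) → ℕ) //
      (properC (pathG k) p.1 ∧ properC (cycleG (n - k)) p.2) ∧
        profV p.1 + profV p.2 = d} =
    Nat.card {f : ℕ → ℕ // Scond n d k f} := by
  have hm : 2 ≤ n - k := by omega
  refine Nat.card_congr ⟨fun x => ⟨fun i => if h1 : i < k then x.1.1 ⟨i, h1⟩
      else if h2 : i < n then x.1.2 ⟨i - k, by omega⟩ else 0, ?_⟩,
    fun y => ⟨(fun v => y.1 v, fun v => y.1 (k + v)), ?_⟩, ?_, ?_⟩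
  · obtain ⟨⟨a, b⟩, ⟨hpa, hpb⟩, hsum⟩ := x
    rw [properC_pathG_iff] at hpa
    rw [properC_cycleG_iff _ hm] at hpb
    dsimp only
    refine ⟨?_, ?_, ?_, ?_, ?_⟩
    · intro i hi; beta_reduce; rw [dif_neg (by omega), dif_neg (by omega)]
    · intro i hi
      beta_reduce
      rw [dif_pos (by omega), dif_pos (by omega)]
      exact hpa _ _ rfl
    · intro i hki hin
      beta_reduce
      rw [dif_neg (by omega), dif_pos (by omega), dif_neg (by omega), dif_pos (by omega)]
      exact hpb.1 ⟨i - k, by omega⟩ ⟨i + 1 - k, by omega⟩ (by omega : i - k + 1 = i + 1 - k)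
    · beta_reduce
      rw [dif_neg (by omega), dif_pos (by omega), dif_neg (by omega), dif_pos (by omega)]
      have e1 : ((⟨k - k, by omega⟩ : Fin (n - k))) = ⟨0, by omega⟩ :=
        Fin.ext (by omega : k - k = 0)
      have e2 : ((⟨n - 1 - k, by omega⟩ : Fin (n - k))) = ⟨n - k - 1, by omega⟩ :=
        Fin.ext (by omega : n - 1 - k = n - k - 1)
      rw [e1, e2]
      exact hpb.2
    · exact (profN_glue n k hk a b).trans hsum
  · obtain ⟨f, hz, hp, hc, hw, hprof⟩ := y
    dsimp only
    refine ⟨⟨?_, ?_⟩, ?_⟩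
    · rw [properC_pathG_iff]
      intro i j hij
      have : (j : ℕ) = (i : ℕ) + 1 := hij.symm
      rw [this]
      exact hp i (by omega)
    · rw [properC_cycleG_iff _ hm]
      constructor
      · intro i j hij
        have : k + (j : ℕ) = (k + (i : ℕ)) + 1 := by omega
        rw [this]
        exact hc (k + i) (by omega) (by omega)
      · have e1 : k + (0 : ℕ) = k := by omega
        have e2 : k + (n - k - 1) = n - 1 := by omega
        show f (k + ((⟨0, by omega⟩ : Fin (n - k)) : ℕ)) ≠
          f (k + ((⟨n - k - 1, by omega⟩ : Fin (n - k)) : ℕ))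
        rw [show ((⟨0, by omega⟩ : Fin (n - k)) : ℕ) = 0 from rfl,
          show ((⟨n - k - 1, by omega⟩ : Fin (n - k)) : ℕ) = n - k - 1 from rfl, e1, e2]
        exact hw
    · exact (profV_split n k (by omega) f).trans hprof
  · rintro ⟨⟨a, b⟩, hx⟩
    refine Subtype.ext (Prod.ext ?_ ?_)
    · funext v
      exact dif_pos v.isLt
    · funext v
      show (if h1 : k + (v : ℕ) < k then a ⟨k + v, h1⟩
        else if h2 : k + (v : ℕ) < n then b ⟨k + v - k, by omega⟩ else 0) = b v
      rw [dif_neg (by omega), dif_pos (by omega)]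
      exact congrArg b (Fin.ext (by omega : k + (v : ℕ) - k = (v : ℕ)))
  · rintro ⟨f, hz, hp, hc, hw, hprof⟩
    refine Subtype.ext ?_
    funext i
    show (if h1 : i < k then f i else if h2 : i < n then f (k + (i - k)) else 0) = f i
    by_cases h1 : i < k
    · rw [dif_pos h1]
    · rw [dif_neg h1]
      by_cases h2 : i < n
      · rw [dif_pos h2]
        congr 1
        omega
      · rw [dif_neg h2]
        exact (hz i (by omega)).symm

lemma card_T_eq (n : ℕ) (hn : 1 ≤ n) (d : ℕ →₀ ℕ) :
    Nat.card {c : Fin n → ℕ // properC (pathG n) c ∧ profV c = d} =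
    Nat.card {f : ℕ → ℕ // Tcond n d f} := by
  refine Nat.card_congr ⟨fun x => ⟨fun i => if h1 : i < n then x.1 ⟨i, h1⟩ else 0, ?_⟩,
    fun y => ⟨fun v => y.1 v, ?_⟩, ?_, ?_⟩
  · obtain ⟨c, hpc, hprof⟩ := x
    rw [properC_pathG_iff] at hpc
    dsimp only
    refine ⟨?_, ?_, ?_⟩
    · intro i hi; beta_reduce; rw [dif_neg (by omega)]
    · intro i hi
      beta_reduce
      rw [dif_pos (by omega), dif_pos (by omega)]
      exact hpc _ _ rfl
    · rw [profN, ← Fin.sum_univ_eq_sum_range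
        (fun i => Finsupp.single (if h1 : i < n then c ⟨i, h1⟩ else 0) 1) n, ← hprof, profV]
      exact Finset.sum_congr rfl fun i _ => by rw [dif_pos i.isLt]
  · obtain ⟨f, hz, hp, hprof⟩ := y
    dsimp only
    constructor
    · rw [properC_pathG_iff]
      intro i j hij
      have : (j : ℕ) = (i : ℕ) + 1 := hij.symm
      rw [this]
      exact hp i (by omega)
    · rw [profV_eq_range _ f (fun i => rfl)]
      exact hprof
  · rintro ⟨c, hx⟩
    refine Subtype.ext ?_
    funext v
    exact dif_pos v.isLt
  · rintro ⟨f, hz, hp, hprof⟩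
    refine Subtype.ext ?_
    funext i
    show (if h1 : i < n then f i else 0) = f i
    by_cases h1 : i < n
    · rw [dif_pos h1]
    · rw [dif_neg h1]
      exact (hz i (by omega)).symm

end Stmt6

namespace Stmt6

lemma profN_comp (n : ℕ) (f g : ℕ → ℕ) (σ τ : ℕ → ℕ)
    (hσ : ∀ v, v < n → σ v < n) (hτ : ∀ v, v < n → τ v < n)
    (hτσ : ∀ v, v < n → τ (σ v) = v) (hστ : ∀ v, v < n → σ (τ v) = v)
    (hg : ∀ v, v < n → g v = f (σ v)) : profN n g = profN n f := by
  unfold profN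
  refine Finset.sum_nbij' σ τ (fun a ha => ?_) (fun a ha => ?_)
    (fun a ha => ?_) (fun a ha => ?_) (fun a ha => ?_)
  · exact Finset.mem_range.mpr (hσ a (Finset.mem_range.mp ha))
  · exact Finset.mem_range.mpr (hτ a (Finset.mem_range.mp ha))
  · exact hτσ a (Finset.mem_range.mp ha)
  · exact hστ a (Finset.mem_range.mp ha)
  · rw [hg a (Finset.mem_range.mp ha)]

/-- Cut-and-glue map: from a (path ⊔ cycle) coloring to a path coloring. -/
def fwdFun (n : ℕ) (p : ℕ × (ℕ → ℕ)) : ℕ × (ℕ → ℕ) :=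
  if p.2 (p.1 - 1) = p.2 p.1 ∧ p.1 ≠ 0 then
    (p.1 - 1, fun i => if i < p.1 then p.2 i else if i < n - 1 then p.2 (i + 1)
      else if i = n - 1 then p.2 p.1 else 0)
  else p

def bwdFun (n : ℕ) (p : ℕ × (ℕ → ℕ)) : ℕ × (ℕ → ℕ) :=
  if p.2 p.1 = p.2 (n - 1) then
    (p.1 + 1, fun i => if i ≤ p.1 then p.2 i else if i = p.1 + 1 then p.2 (n - 1)
      else if i < n then p.2 (i - 1) else 0)
  else p

lemma fwd_mem (n : ℕ) (hn : 2 ≤ n) (d : ℕ →₀ ℕ) (p : ℕ × (ℕ → ℕ))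
    (h : p.1 < n - 1 ∧ Scond n d p.1 p.2) :
    (fwdFun n p).1 < n - 1 ∧ Tcond n d (fwdFun n p).2 := by
  obtain ⟨hk, hz, hp, hc, hw, hprof⟩ := h
  obtain ⟨k, f⟩ := p
  dsimp only at hk hz hp hc hw hprof ⊢
  rw [fwdFun]
  by_cases hcl : f (k - 1) = f k ∧ k ≠ 0
  · rw [if_pos hcl]
    dsimp only
    refine ⟨by omega, ?_, ?_, ?_⟩
    · intro i hi
      beta_reduce
      split_ifs <;> omega
    · intro i hi
      beta_reduce
      by_cases h1 : i + 1 < k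
      · rw [if_pos (by omega), if_pos (by omega)]
        exact hp i (by omega)
      · by_cases h2 : i + 1 = k
        · rw [if_pos (by omega), if_neg (by omega), if_pos (by omega)]
          rw [← h2] at hcl
          have h3 := hcl.1
          rw [show i + 1 - 1 = i by omega] at h3
          rw [h3]
          exact hc (i + 1) (by omega) (by omega)
        · -- k ≤ i
          by_cases h3 : i + 1 < n - 1
          · rw [if_neg (by omega), if_pos (by omega), if_neg (by omega), if_pos (by omega)]
            exact hc (i + 1) (by omega) (by omega)
          · -- i + 1 = n - 1
            rw [if_neg (by omega), if_pos (by omega), if_neg (by omega), if_neg (by omega),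
              if_pos (by omega)]
            have := hw
            rw [show i + 1 = n - 1 by omega]
            exact fun hx => hw hx.symm
    · refine Eq.trans ?_ hprof
      refine profN_comp n f _ (fun v => if v < k then v else if v < n - 1 then v + 1 else k)
        (fun v => if v < k then v else if v = k then n - 1 else v - 1)
        (fun v hv => ?_) (fun v hv => ?_) (fun v hv => ?_) (fun v hv => ?_) (fun v hv => ?_)
      · beta_reduce; split_ifs <;> omega
      · beta_reduce; split_ifs <;> omega
      · beta_reduce; split_ifs <;> omega
      · beta_reduce; split_ifs <;> omega
      · beta_reduce
        split_ifs <;> first | rfl | omega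
  · rw [if_neg hcl]
    refine ⟨hk, hz, ?_, hprof⟩
    intro i hi
    by_cases h1 : i + 1 < k
    · exact hp i h1
    · by_cases h2 : i + 1 = k
      · intro hx
        refine hcl ⟨?_, by omega⟩
        rw [show i = k - 1 by omega] at hx
        rwa [show k - 1 + 1 = k by omega] at hx
      · exact hc i (by omega) (by omega)

end Stmt6

namespace Stmt6

lemma bwd_mem (n : ℕ) (hn : 2 ≤ n) (d : ℕ →₀ ℕ) (p : ℕ × (ℕ → ℕ))
    (h : p.1 < n - 1 ∧ Tcond n d p.2) :
    (bwdFun n p).1 < n - 1 ∧ Scond n d (bwdFun n p).1 (bwdFun n p).2 := by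
  obtain ⟨hj, hz, hpc, hprof⟩ := h
  obtain ⟨j, c⟩ := p
  dsimp only at hj hz hpc hprof ⊢
  rw [bwdFun]
  by_cases hcl : c j = c (n - 1)
  · rw [if_pos hcl]
    dsimp only
    have hj3 : j < n - 2 := by
      by_contra hq
      have hj2 : j = n - 2 := by omega
      have h2 := hpc (n - 2) (by omega)
      rw [show n - 2 + 1 = n - 1 by omega] at h2
      rw [hj2] at hcl
      exact h2 hcl
    refine ⟨by omega, ?_, ?_, ?_, ?_, ?_⟩
    · intro i hi; beta_reduce; split_ifs <;> omega
    · intro i hi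
      beta_reduce
      rw [if_pos (by omega), if_pos (by omega)]
      exact hpc i (by omega)
    · intro i hki hin
      beta_reduce
      by_cases h1 : i = j + 1
      · rw [if_neg (by omega), if_pos (by omega), if_neg (by omega), if_neg (by omega),
          if_pos (by omega)]
        rw [show i + 1 - 1 = j + 1 by omega, ← hcl]
        exact hpc j (by omega)
      · rw [if_neg (by omega), if_neg (by omega), if_pos (by omega), if_neg (by omega),
          if_neg (by omega), if_pos (by omega)]
        rw [show i + 1 - 1 = (i - 1) + 1 by omega]
        exact hpc (i - 1) (by omega)
    · beta_reduce
      rw [if_neg (by omega), if_pos rfl, if_neg (by omega), if_neg (by omega),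
        if_pos (by omega)]
      have h2 := hpc (n - 2) (by omega)
      rw [show n - 2 + 1 = n - 1 by omega] at h2
      rw [show n - 1 - 1 = n - 2 by omega]
      exact fun hx => h2 hx.symm
    · refine Eq.trans ?_ hprof
      refine profN_comp n c _ (fun v => if v ≤ j then v else if v = j + 1 then n - 1 else v - 1)
        (fun v => if v ≤ j then v else if v < n - 1 then v + 1 else j + 1)
        (fun v hv => ?_) (fun v hv => ?_) (fun v hv => ?_) (fun v hv => ?_) (fun v hv => ?_)
      · beta_reduce; split_ifs <;> omega
      · beta_reduce; split_ifs <;> omega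
      · beta_reduce; split_ifs <;> omega
      · beta_reduce; split_ifs <;> omega
      · beta_reduce; split_ifs <;> first | rfl | omega
  · rw [if_neg hcl]
    refine ⟨hj, hz, ?_, ?_, hcl, hprof⟩
    · intro i hi; exact hpc i (by omega)
    · intro i hki hin; exact hpc i (by omega)

end Stmt6

namespace Stmt6

lemma bwd_fwd (n : ℕ) (hn : 2 ≤ n) (d : ℕ →₀ ℕ) (p : ℕ × (ℕ → ℕ))
    (h : p.1 < n - 1 ∧ Scond n d p.1 p.2) : bwdFun n (fwdFun n p) = p := by
  obtain ⟨hk, hz, hp, hc, hw, hprof⟩ := h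
  obtain ⟨k, f⟩ := p
  dsimp only at hk hz hp hc hw hprof ⊢
  rw [fwdFun]
  by_cases hcl : f (k - 1) = f k ∧ k ≠ 0
  · rw [if_pos hcl, bwdFun]
    dsimp only
    have e1 : (if k - 1 < k then f (k - 1) else if k - 1 < n - 1 then f (k - 1 + 1)
        else if k - 1 = n - 1 then f k else 0) = f (k - 1) := if_pos (by omega)
    have e2 : (if n - 1 < k then f (n - 1) else if n - 1 < n - 1 then f (n - 1 + 1)
        else if n - 1 = n - 1 then f k else 0) = f k := by
      rw [if_neg (by omega), if_neg (by omega), if_pos rfl]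
    have e2' : (if n - 1 < k then f (n - 1) else if n - 1 < n - 1 then f (n - 1 + 1)
        else if True then f k else 0) = f k := by
      rw [if_neg (by omega), if_neg (by omega), if_pos trivial]
    simp only [e1, e2']
    rw [if_pos hcl.1]
    refine Prod.ext (by omega) ?_
    dsimp only
    funext i
    beta_reduce
    split_ifs <;>
      first | rfl | omega | (congr 1; omega) | exact (hz i (by omega)).symm
  · rw [if_neg hcl, bwdFun]
    dsimp only
    rw [if_neg hw]

lemma fwd_bwd (n : ℕ) (hn : 2 ≤ n) (d : ℕ →₀ ℕ) (p : ℕ × (ℕ → ℕ))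
    (h : p.1 < n - 1 ∧ Tcond n d p.2) : fwdFun n (bwdFun n p) = p := by
  obtain ⟨hj, hz, hpc, hprof⟩ := h
  obtain ⟨j, c⟩ := p
  dsimp only at hj hz hpc hprof ⊢
  rw [bwdFun]
  by_cases hcl : c j = c (n - 1)
  · rw [if_pos hcl, fwdFun]
    dsimp only
    have e1 : (if j + 1 - 1 ≤ j then c (j + 1 - 1) else if j + 1 - 1 = j + 1 then c (n - 1)
        else if j + 1 - 1 < n then c (j + 1 - 1 - 1) else 0) = c j := by
      rw [if_pos (by omega)]
      norm_num
    have e2 : (if j + 1 ≤ j then c (j + 1) else if j + 1 = j + 1 then c (n - 1)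
        else if j + 1 < n then c (j + 1 - 1) else 0) = c (n - 1) := by
      rw [if_neg (by omega), if_pos rfl]
    have e2' : (if j + 1 ≤ j then c (j + 1) else if True then c (n - 1)
        else if j + 1 < n then c (j + 1 - 1) else 0) = c (n - 1) := by
      rw [if_neg (by omega), if_pos trivial]
    simp only [e1, e2']
    rw [if_pos ⟨hcl, by omega⟩]
    refine Prod.ext (by omega) ?_
    dsimp only
    funext i
    beta_reduce
    split_ifs <;>
      first | rfl | omega | (congr 1; omega) | exact (hz i (by omega)).symm
  · rw [if_neg hcl, fwdFun]
    dsimp only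
    rw [if_neg ?_]
    rintro ⟨hx, hj0⟩
    have h2 := hpc (j - 1) (by omega)
    rw [show j - 1 + 1 = j by omega] at h2
    exact h2 hx

end Stmt6

namespace Stmt6

lemma profN_pos (n : ℕ) (f : ℕ → ℕ) (v : ℕ) (hv : v < n) : profN n f (f v) ≠ 0 := by
  intro h0
  rw [profN, Finsupp.finset_sum_apply] at h0
  have h1 := Finset.sum_eq_zero_iff.mp h0 v (Finset.mem_range.mpr hv)
  rw [Finsupp.single_eq_same] at h1
  exact one_ne_zero h1

lemma finite_profN (n : ℕ) (d : ℕ →₀ ℕ) :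
    {f : ℕ → ℕ | (∀ i, n ≤ i → f i = 0) ∧ profN n f = d}.Finite := by
  have h1 : {g : Fin n → ℕ | ∀ v, g v ∈ (d.support : Set ℕ)}.Finite := by
    have := Set.Finite.pi (ι := Fin n) (t := fun _ => (d.support : Set ℕ))
      (fun _ => d.support.finite_toSet)
    refine this.subset fun g hg => ?_
    rw [Set.mem_pi]; exact fun v _ => hg v
  refine Set.Finite.of_finite_image (f := fun f (x : Fin n) => f ↑x) (h1.subset ?_) ?_
  · rintro _ ⟨f, ⟨hz, hprof⟩, rfl⟩
    intro x
    simp only [Finset.coe_sort_coe, Finset.mem_coe, Finsupp.mem_support_iff]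
    rw [← hprof]
    exact profN_pos n f ↑x x.isLt
  · rintro f ⟨hzf, hpf⟩ g ⟨hzg, hpg⟩ heq
    funext i
    by_cases hi : i < n
    · exact congrFun heq ⟨i, hi⟩
    · rw [hzf i (by omega), hzg i (by omega)]

lemma finite_S (n : ℕ) (d : ℕ →₀ ℕ) :
    {p : ℕ × (ℕ → ℕ) | p.1 < n - 1 ∧ Scond n d p.1 p.2}.Finite := by
  refine ((Set.finite_Iio (n - 1)).prod (finite_profN n d)).subset ?_
  rintro ⟨k, f⟩ ⟨hk, hz, _, _, _, hprof⟩
  exact ⟨hk, hz, hprof⟩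

lemma finite_T (n : ℕ) (d : ℕ →₀ ℕ) :
    {p : ℕ × (ℕ → ℕ) | p.1 < n - 1 ∧ Tcond n d p.2}.Finite := by
  refine ((Set.finite_Iio (n - 1)).prod (finite_profN n d)).subset ?_
  rintro ⟨k, f⟩ ⟨hk, hz, _, hprof⟩
  exact ⟨hk, hz, hprof⟩

lemma card_RHS (n : ℕ) (hn : 2 ≤ n) (d : ℕ →₀ ℕ) :
    Nat.card {p : ℕ × (ℕ → ℕ) // p.1 < n - 1 ∧ Tcond n d p.2}
      = (n - 1) * Nat.card {f : ℕ → ℕ // Tcond n d f} := by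
  have h1 : Nat.card (Fin (n - 1) × {f : ℕ → ℕ // Tcond n d f})
      = (n - 1) * Nat.card {f : ℕ → ℕ // Tcond n d f} := by
    rw [Nat.card_prod, Nat.card_eq_fintype_card, Fintype.card_fin]
  rw [← h1]
  exact Nat.card_congr ⟨fun x => (⟨x.1.1, x.2.1⟩, ⟨x.1.2, x.2.2⟩),
    fun y => ⟨(y.1, y.2.1), y.1.2, y.2.2⟩, fun x => rfl, fun y => rfl⟩

lemma card_LHS (n : ℕ) (d : ℕ →₀ ℕ) :
    Nat.card {p : ℕ × (ℕ → ℕ) // p.1 < n - 1 ∧ Scond n d p.1 p.2}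
      = ∑ k ∈ Finset.range (n - 1), Nat.card {f : ℕ → ℕ // Scond n d k f} := by
  rw [Stmt6X.key (fun p : ℕ × (ℕ → ℕ) => p.1 < n - 1 ∧ Scond n d p.1 p.2) (finite_S n d)
      (fun p => p.1) (Finset.range (n - 1)) (fun p hp => Finset.mem_range.mpr hp.1)]
  refine Finset.sum_congr rfl fun k hk => ?_
  refine Nat.card_congr ⟨fun x => ⟨x.1.2, by obtain ⟨⟨h1, h2⟩, h3⟩ := x.2; rwa [h3] at h2⟩,
    fun y => ⟨(k, y.1), ⟨Finset.mem_range.mp hk, y.2⟩, rfl⟩, ?_, ?_⟩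
  · intro x
    exact Subtype.ext (Prod.ext x.2.2.symm rfl)
  · intro y
    rfl

lemma card_main (n : ℕ) (hn : 2 ≤ n) (d : ℕ →₀ ℕ) :
    Nat.card {p : ℕ × (ℕ → ℕ) // p.1 < n - 1 ∧ Scond n d p.1 p.2}
      = Nat.card {p : ℕ × (ℕ → ℕ) // p.1 < n - 1 ∧ Tcond n d p.2} :=
  Nat.card_congr ⟨fun x => ⟨fwdFun n x.1, fwd_mem n hn d x.1 x.2⟩,
    fun y => ⟨bwdFun n y.1, bwd_mem n hn d y.1 y.2⟩,
    fun x => Subtype.ext (bwd_fwd n hn d x.1 x.2),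
    fun y => Subtype.ext (fwd_bwd n hn d y.1 y.2)⟩

end Stmt6

/-- For `n ≥ 2`, `Σ_{k=0}^{n-2} X_{P_k} X_{C_{n-k}} = (n - 1) X_{P_n}`,
where `X_{P_0} = 1`. -/
theorem stmt_6 (n : ℕ) (hn : 2 ≤ n) :
    ∑ k ∈ Finset.range (n - 1), csf (pathG k) * csf (cycleG (n - k)) =
      ((n : ℚ) - 1) • csf (pathG n) := by
  apply MvPowerSeries.ext
  intro d
  rw [map_sum, MvPowerSeries.coeff_smul, MvPowerSeries.coeff_apply]
  have hterm : ∀ k ∈ Finset.range (n - 1),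
      (MvPowerSeries.coeff d) (csf (pathG k) * csf (cycleG (n - k))) =
        ((Nat.card {f : ℕ → ℕ // Stmt6.Scond n d k f} : ℕ) : ℚ) := by
    intro k hk
    have hk2 : k + 2 ≤ n := by
      have := Finset.mem_range.mp hk
      omega
    rw [MvPowerSeries.coeff_apply, Stmt6.coeff_csf_mul]
    exact_mod_cast congrArg (Nat.cast : ℕ → ℚ) (Stmt6.card_pairs_eq n k hk2 d)
  rw [Finset.sum_congr rfl hterm]
  rw [Stmt6.csf_eq (pathG n) d, Stmt6.card_T_eq n (by omega) d, ← Nat.cast_sum]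
  have h2 : ∑ k ∈ Finset.range (n - 1), Nat.card {f : ℕ → ℕ // Stmt6.Scond n d k f}
      = (n - 1) * Nat.card {f : ℕ → ℕ // Stmt6.Tcond n d f} := by
    rw [← Stmt6.card_LHS n d, Stmt6.card_main n hn d, Stmt6.card_RHS n hn d]
  rw [h2]
  push_cast [Nat.cast_sub (by omega : 1 ≤ n)]
  ring
end

section
/- Let a ≥ 1 and 0 ≤ b ≤ a. Then X_{K(ab)} = (a−1)! · b! · Σ_{i=0}^{b} (a + b − 2i) · e_{a+b−i} · e_i, and X_{K(a1b)} = (a−1)! · b! · ( (a−1)(b+1) · e_a · e_{b+1} + Σ_{i=0}^{b} (a + b + 1 − 2i) · e_{a+b+1−i} · e_i ), where e_0 = 1. -/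
open Finset

/-- The barbell `K(a 1^b c)` on `a + b + c` vertices: a clique on `{0, …, a-1}`, a path
`a-1, a, …, a+b-1`, and a clique on `{a+b-1, …, a+b+c-1}` (the `K`-chain of the
composition `(a, 1, …, 1, c)` with `b` middle parts `1`). -/
def barbellG (a b c : ℕ) : SimpleGraph (Fin (a + b + c)) :=
  SimpleGraph.fromRel (fun i j =>
    ((i : ℕ) < a ∧ (j : ℕ) < a) ∨
    ((i : ℕ) + 1 = (j : ℕ) ∧ a ≤ (j : ℕ) ∧ (j : ℕ) + 1 ≤ a + b) ∨
    (a + b ≤ (i : ℕ) + 1 ∧ a + b ≤ (j : ℕ) + 1))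

open Function


lemma telescope (m q : ℕ) :
    ∑ j ∈ Finset.range (q + 1), (((m:ℚ) - 2 * j) * (m.choose j : ℚ))
      = ((q:ℚ) + 1) * (m.choose (q+1) : ℚ) := by
  induction q with
  | zero => simp
  | succ q ih =>
    rw [Finset.sum_range_succ, ih]
    by_cases h : q + 1 ≤ m
    · have h2 := Nat.choose_succ_right_eq m (q+1)
      have h2' : ((m.choose (q+2) : ℚ)) * ((q:ℚ)+2) = (m.choose (q+1):ℚ) * ((m:ℚ) - ((q:ℚ)+1)) := by
        have := congrArg (Nat.cast : ℕ → ℚ) h2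
        push_cast [Nat.cast_sub h] at this
        convert this using 2 <;> push_cast <;> ring
      push_cast
      nlinarith [h2']
    · have h1 : m.choose (q+1) = 0 := Nat.choose_eq_zero_of_lt (by omega)
      have h2 : m.choose (q+1+1) = 0 := Nat.choose_eq_zero_of_lt (by omega)
      rw [h1, h2]
      push_cast
      ring

lemma core_fact (p q m : ℕ) (hm : m = p + q) :
    m.choose q * q.factorial * p.factorial = m.factorial := by
  have h := Nat.choose_mul_factorial_mul_factorial (show q ≤ m by omega)
  rwa [show m - q = p by omega] at h

lemma nat1 (a b i0 m : ℕ) (ha : 1 ≤ a) (hb : b ≤ a) (hib : i0 ≤ b)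
    (hn : 2 * i0 + m = a + b) :
    (a-1).descFactorial i0 * b.descFactorial i0 * m.factorial
      = (a-1).factorial * b.factorial * ((b - i0 + 1) * m.choose (b - i0 + 1)) := by
  by_cases hia : i0 ≤ a - 1
  · have e1 := Nat.factorial_mul_descFactorial hia
    have e2 := Nat.factorial_mul_descFactorial hib
    have e3 := core_fact (a-1-i0) (b-i0+1) m (by omega)
    apply Nat.eq_of_mul_eq_mul_left (show 0 < (a-1-i0).factorial * (b-i0).factorial by positivity)
    calc ((a-1-i0).factorial * (b-i0).factorial) *
          ((a-1).descFactorial i0 * b.descFactorial i0 * m.factorial)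
        = ((a-1-i0).factorial * (a-1).descFactorial i0) *
          ((b-i0).factorial * b.descFactorial i0) * m.factorial := by ring
      _ = (a-1).factorial * b.factorial * m.factorial := by rw [e1, e2]
      _ = (a-1).factorial * b.factorial *
          (m.choose (b-i0+1) * (b-i0+1).factorial * (a-1-i0).factorial) := by rw [e3]
      _ = ((a-1-i0).factorial * (b-i0).factorial) *
          ((a-1).factorial * b.factorial * ((b - i0 + 1) * m.choose (b - i0 + 1))) := by
            rw [Nat.factorial_succ]
            ring
  · rw [Nat.descFactorial_eq_zero_iff_lt.mpr (by omega),
      Nat.choose_eq_zero_of_lt (by omega : m < b - i0 + 1)]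
    simp

lemma alg1 (a b i0 m : ℕ) (ha : 1 ≤ a) (hb : b ≤ a) (hn : 2 * i0 + m = a + b) :
    (((a-1).descFactorial i0 * b.descFactorial i0 * m.factorial : ℕ) : ℚ)
      = (((a-1).factorial * b.factorial : ℕ) : ℚ) *
        ∑ i ∈ Finset.range (b+1), (((a:ℚ) + (b:ℚ)) - 2*i) *
          (if i0 ≤ i then (m.choose (i - i0) : ℚ) else 0) := by
  by_cases hib : i0 ≤ b
  swap
  · rw [Finset.sum_eq_zero (fun i hi => by
      rw [Finset.mem_range] at hi
      rw [if_neg (by omega)]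
      ring)]
    rw [Nat.descFactorial_eq_zero_iff_lt.mpr (show b < i0 by omega)]
    push_cast
    ring
  · have hsum : ∑ i ∈ Finset.range (b+1), (((a:ℚ) + (b:ℚ)) - 2*i) *
        (if i0 ≤ i then (m.choose (i - i0) : ℚ) else 0)
        = (((b - i0 : ℕ) : ℚ) + 1) * (m.choose (b - i0 + 1) : ℚ) := by
      rw [Finset.range_eq_Ico,
        ← Finset.sum_Ico_consecutive _ (Nat.zero_le i0) (show i0 ≤ b+1 by omega)]
      rw [Finset.sum_eq_zero (fun i hi => by
        rw [Finset.mem_Ico] at hi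
        rw [if_neg (by omega)]
        ring), zero_add]
      rw [Finset.sum_Ico_eq_sum_range]
      have hm : (m : ℚ) = (a:ℚ) + (b:ℚ) - 2*(i0:ℚ) := by
        have : (2*i0 + m : ℕ) = (a+b : ℕ) := hn
        have := congrArg (Nat.cast : ℕ → ℚ) this
        push_cast at this
        linarith
      have hconv : ∀ j ∈ Finset.range (b+1-i0),
          (((a:ℚ) + (b:ℚ)) - 2*((i0 + j : ℕ):ℚ)) *
            (if i0 ≤ i0 + j then (m.choose (i0 + j - i0) : ℚ) else 0)
          = ((m:ℚ) - 2*(j:ℚ)) * (m.choose j : ℚ) := by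
        intro j _
        rw [if_pos (by omega), show i0 + j - i0 = j by omega, hm]
        push_cast
        ring
      rw [Finset.sum_congr rfl hconv, show b+1-i0 = (b-i0)+1 by omega, telescope m (b-i0)]
    rw [hsum]
    have := nat1 a b i0 m ha hb hib hn
    have := congrArg (Nat.cast : ℕ → ℚ) this
    push_cast at this ⊢
    linarith

lemma nat2core (a b k m : ℕ) (ha : 1 ≤ a) (hkb : k ≤ b) (hka : k ≤ a - 1)
    (hm : m = (a - 1 - k) + (b - k)) :
    (a-1).descFactorial k * b.descFactorial k * m.factorial
      = (a-1).factorial * b.factorial * m.choose (b - k) := by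
  have e1 := Nat.factorial_mul_descFactorial hka
  have e2 := Nat.factorial_mul_descFactorial hkb
  have e3 := core_fact (a-1-k) (b-k) m hm
  apply Nat.eq_of_mul_eq_mul_left (show 0 < (a-1-k).factorial * (b-k).factorial by positivity)
  calc ((a-1-k).factorial * (b-k).factorial) *
        ((a-1).descFactorial k * b.descFactorial k * m.factorial)
      = ((a-1-k).factorial * (a-1).descFactorial k) *
        ((b-k).factorial * b.descFactorial k) * m.factorial := by ring
    _ = (a-1).factorial * b.factorial * m.factorial := by rw [e1, e2]
    _ = (a-1).factorial * b.factorial *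
        (m.choose (b-k) * (b-k).factorial * (a-1-k).factorial) := by rw [e3]
    _ = ((a-1-k).factorial * (b-k).factorial) *
        ((a-1).factorial * b.factorial * m.choose (b - k)) := by ring

lemma nat2 (a b i0 m : ℕ) (ha : 1 ≤ a) (hb : b ≤ a) (hib : i0 ≤ b + 1)
    (hn : 2 * i0 + m = a + 1 + b) :
    a.descFactorial i0 * (b+1).descFactorial i0 * m.factorial
        + (a-1).factorial * b.factorial * (i0 * m.choose (b + 1 - i0))
      = (a-1).factorial * b.factorial * (a * (b+1) * m.choose (b + 1 - i0))
        + i0 * ((a-1).descFactorial (i0-1) * b.descFactorial (i0-1)) * m.factorial := by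
  rcases Nat.eq_zero_or_pos i0 with rfl | hpos
  · simp only [Nat.descFactorial_zero, Nat.sub_zero, one_mul, Nat.mul_zero, Nat.zero_mul,
      add_zero, zero_mul]
    have e3 := core_fact a (b+1) m (by omega)
    have : m.factorial = (a-1).factorial * b.factorial * (a * (b+1) * m.choose (b+1)) := by
      rw [← e3, Nat.factorial_succ b,
        show a.factorial = a * (a-1).factorial by
          rw [← Nat.succ_pred_eq_of_pos (show 0 < a by omega), Nat.factorial_succ]
          simp [Nat.succ_pred_eq_of_pos (show 0 < a by omega)]]
      ring
    omega
  · obtain ⟨k, rfl⟩ : ∃ k, i0 = k + 1 := ⟨i0 - 1, by omega⟩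
    simp only [Nat.add_sub_cancel]
    obtain ⟨a', rfl⟩ : ∃ a', a = a' + 1 := ⟨a - 1, by omega⟩
    simp only [Nat.succ_sub_one, Nat.add_sub_cancel] at *
    rw [Nat.succ_descFactorial_succ a', Nat.succ_descFactorial_succ b]
    by_cases hka : k ≤ a'
    · have hD := nat2core (a'+1) b k m (by omega) (by omega) (by simpa using hka) (by omega)
      simp only [Nat.succ_sub_one, Nat.add_sub_cancel] at hD
      have hq : b + 1 - (k+1) = b - k := by omega
      rw [hq]
      have goal' : (a'+1) * (b+1) * (a'.descFactorial k * b.descFactorial k * m.factorial)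
            + (k+1) * (a'.factorial * b.factorial * m.choose (b-k))
          = (a'+1)*(b+1)*(a'.factorial * b.factorial * m.choose (b-k))
            + (k+1)*(a'.descFactorial k * b.descFactorial k * m.factorial) := by rw [hD]
      linarith [goal']
    · have h1 : a'.descFactorial k = 0 := Nat.descFactorial_eq_zero_iff_lt.mpr (by omega)
      have h3 : m.choose (b+1-(k+1)) = 0 := Nat.choose_eq_zero_of_lt (by omega)
      rw [h1, h3]
      simp
lemma alg2 (a b i0 m : ℕ) (ha : 1 ≤ a) (hb : b ≤ a) (hn : 2 * i0 + m = a + 1 + b) :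
    (((a.descFactorial i0 * (b+1).descFactorial i0 : ℕ) : ℚ) -
        ((i0 * ((a-1).descFactorial (i0 - 1) * b.descFactorial (i0 - 1)) : ℕ) : ℚ)) *
      ((m.factorial : ℕ) : ℚ)
      = (((a-1).factorial * b.factorial : ℕ) : ℚ) *
        ( ((a:ℚ) - 1) * ((b:ℚ) + 1) * (if i0 ≤ b + 1 then (m.choose (b + 1 - i0) : ℚ) else 0)
          + ∑ i ∈ Finset.range (b+1), (((a:ℚ) + (b:ℚ) + 1) - 2*i) *
              (if i0 ≤ i then (m.choose (i - i0) : ℚ) else 0) ) := by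
  by_cases hib : i0 ≤ b + 1
  swap
  · rw [if_neg hib, Finset.sum_eq_zero (fun i hi => by
      rw [Finset.mem_range] at hi
      rw [if_neg (by omega)]
      ring)]
    rw [Nat.descFactorial_eq_zero_iff_lt.mpr (show b+1 < i0 by omega),
      Nat.descFactorial_eq_zero_iff_lt.mpr (show b < i0 - 1 by omega)]
    push_cast
    ring
  · have hsum : ∑ i ∈ Finset.range (b+1), (((a:ℚ) + (b:ℚ) + 1) - 2*i) *
        (if i0 ≤ i then (m.choose (i - i0) : ℚ) else 0)
        = ((b + 1 - i0 : ℕ) : ℚ) * (m.choose (b + 1 - i0) : ℚ) := by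
      by_cases hib2 : i0 ≤ b
      · rw [Finset.range_eq_Ico,
          ← Finset.sum_Ico_consecutive _ (Nat.zero_le i0) (show i0 ≤ b+1 by omega)]
        rw [Finset.sum_eq_zero (fun i hi => by
          rw [Finset.mem_Ico] at hi
          rw [if_neg (by omega)]
          ring), zero_add, Finset.sum_Ico_eq_sum_range]
        have hm : (m:ℚ) = (a:ℚ) + (b:ℚ) + 1 - 2*(i0:ℚ) := by
          have := congrArg (Nat.cast : ℕ → ℚ) hn
          push_cast at this
          linarith
        have hconv : ∀ j ∈ Finset.range (b+1-i0),
            (((a:ℚ) + (b:ℚ) + 1) - 2*((i0+j : ℕ):ℚ)) *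
              (if i0 ≤ i0+j then (m.choose (i0+j-i0):ℚ) else 0)
            = ((m:ℚ) - 2*(j:ℚ)) * (m.choose j : ℚ) := by
          intro j _
          rw [if_pos (by omega), show i0+j-i0 = j by omega, hm]
          push_cast
          ring
        rw [Finset.sum_congr rfl hconv, show b+1-i0 = (b-i0)+1 from by omega,
          telescope m (b-i0)]
        push_cast [Nat.cast_sub hib2]
        ring
      · have hieq : i0 = b + 1 := by omega
        subst hieq
        rw [Finset.sum_eq_zero (fun i hi => by
          rw [Finset.mem_range] at hi
          rw [if_neg (by omega)]
          ring)]
        simp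
    rw [hsum, if_pos hib]
    have h2 := nat2 a b i0 m ha hb hib hn
    have h2' := congrArg (Nat.cast : ℕ → ℚ) h2
    push_cast at h2'
    have hq : ((b+1-i0 : ℕ) : ℚ) = (b:ℚ) + 1 - (i0:ℚ) := by
      rw [Nat.cast_sub (by omega : i0 ≤ b+1)]
      push_cast
      ring
    rw [hq]
    push_cast
    linear_combination h2'


lemma tot_add (p q : ℕ →₀ ℕ) : ((p+q).sum fun _ e => e) = (p.sum fun _ e => e) + (q.sum fun _ e => e) := by
  apply Finsupp.sum_add_index' <;> simp

open Classical in
lemma splits_card (D2 D1 : Finset ℕ) (hD : Disjoint D2 D1) (d : ℕ →₀ ℕ)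
    (hd : ∀ c, d c = if c ∈ D2 then 2 else if c ∈ D1 then 1 else 0)
    (i j : ℕ) (hij : j + i = 2 * D2.card + D1.card) :
    (Finset.filter (fun p : (ℕ →₀ ℕ) × (ℕ →₀ ℕ) =>
        ((p.1.sum fun _ e => e) = j ∧ ∀ c, p.1 c ≤ 1) ∧
        ((p.2.sum fun _ e => e) = i ∧ ∀ c, p.2 c ≤ 1))
      (Finset.HasAntidiagonal.antidiagonal d)).card
    = if D2.card ≤ i then D1.card.choose (i - D2.card) else 0 := by
  classical
  have key : ∀ p : (ℕ →₀ ℕ) × (ℕ →₀ ℕ), p ∈ Finset.HasAntidiagonal.antidiagonal d →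
      (((p.1.sum fun _ e => e) = j ∧ ∀ c, p.1 c ≤ 1) ∧
        ((p.2.sum fun _ e => e) = i ∧ ∀ c, p.2 c ≤ 1)) →
      p.2.support = D2 ∪ (p.2.support ∩ D1) ∧ (∀ c ∈ p.2.support, p.2 c = 1)
        ∧ (p.2.support ∩ D1).card = i - D2.card ∧ D2.card ≤ i := by
    intro p hp hfilt
    rw [Finset.HasAntidiagonal.mem_antidiagonal] at hp
    have hval : ∀ c, p.1 c + p.2 c = d c := by
      intro c; rw [← hp]; rfl
    have hsupp : p.2.support = D2 ∪ (p.2.support ∩ D1) := by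
      ext c
      simp only [Finset.mem_union, Finset.mem_inter, Finsupp.mem_support_iff]
      constructor
      · intro hc
        by_cases h2 : c ∈ D2
        · left; exact h2
        · right
          refine ⟨hc, ?_⟩
          have h3 := hval c
          have h4 := hd c
          by_contra h1
          simp [h2, h1] at h4
          have h5 := hfilt.2.2 c
          omega
      · rintro (hc | ⟨hc, _⟩)
        · have h3 := hval c
          have hdc := hd c
          have h1 := hfilt.1.2 c
          simp [hc] at hdc
          omega
        · exact hc
    have hone : ∀ c ∈ p.2.support, p.2 c = 1 := by
      intro c hc
      rw [Finsupp.mem_support_iff] at hc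
      have := hfilt.2.2 c
      omega
    have htot : (p.2.sum fun _ e => e) = p.2.support.card := by
      rw [Finsupp.sum, Finset.sum_congr rfl hone]
      simp
    have hc1 : (D2 ∪ (p.2.support ∩ D1)).card = D2.card + (p.2.support ∩ D1).card :=
      Finset.card_union_of_disjoint (hD.mono_right Finset.inter_subset_right)
    have hc2 : p.2.support.card = (D2 ∪ (p.2.support ∩ D1)).card := by rw [← hsupp]
    have := hfilt.2.1
    exact ⟨hsupp, hone, by omega, by omega⟩
  rw [Finset.card_filter]
  by_cases hii : D2.card ≤ i
  swap
  · rw [if_neg hii]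
    rw [Finset.sum_eq_zero]
    intro p hp
    rw [ite_eq_right_iff]
    intro hfilt
    exact absurd (key p hp hfilt).2.2.2 hii
  rw [if_pos hii, ← Finset.card_filter, ← Finset.card_powersetCard]
  refine Finset.card_bij' (fun p _ => p.2.support ∩ D1)
      (fun S _ => (d - Finsupp.indicator (D2 ∪ S) (fun _ _ => 1),
        Finsupp.indicator (D2 ∪ S) (fun _ _ => 1))) ?hi ?hj ?lef ?rig
  case hi =>
    intro p hp
    rw [Finset.mem_filter] at hp
    obtain ⟨hp, hfilt⟩ := hp
    obtain ⟨hsupp, hone, hcard, _⟩ := key p hp hfilt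
    rw [Finset.mem_powersetCard]
    exact ⟨Finset.inter_subset_right, hcard⟩
  case hj =>
    intro S hS
    rw [Finset.mem_powersetCard] at hS
    obtain ⟨hS1, hS2⟩ := hS
    set dS := Finsupp.indicator (D2 ∪ S) (fun _ _ => 1) with hdS
    have hdSval : ∀ c, dS c = if c ∈ D2 ∪ S then 1 else 0 := by
      intro c
      rw [hdS, Finsupp.indicator_apply]
      split <;> rfl
    have hle : ∀ c, dS c ≤ d c := by
      intro c
      rw [hdSval, hd]
      have h1 : c ∈ S → c ∈ D1 := fun h => hS1 h
      split_ifs <;>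
        first
          | omega
          | (rename_i hu h2 hd1
             exact absurd (h1 ((Finset.mem_union.mp hu).resolve_left h2)) hd1)
    have hanti : (d - dS) + dS = d := by
      ext c
      have := hle c
      simp only [Finsupp.add_apply, Finsupp.tsub_apply]
      omega
    have htotdS : (dS.sum fun _ e => e) = i := by
      have hsupp : dS.support = D2 ∪ S := by
        ext c
        rw [Finsupp.mem_support_iff, hdSval]
        split
        · rename_i h; simpa using h
        · rename_i h; simpa using h
      rw [Finsupp.sum, hsupp, Finset.sum_congr rfl (fun c hc => hdSval c ▸ if_pos hc)]
      rw [Finset.sum_const, smul_eq_mul, mul_one,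
        Finset.card_union_of_disjoint (hD.mono_right hS1)]
      omega
    rw [Finset.mem_filter, Finset.HasAntidiagonal.mem_antidiagonal]
    have htotd : (d.sum fun _ e => e) = 2 * D2.card + D1.card := by
      have hsupp : d.support = D2 ∪ D1 := by
        ext c
        rw [Finsupp.mem_support_iff, hd]
        split_ifs with h2 h1
        · simp [h2]
        · simp [h1]
        · simp [h2, h1]
      have e1 : ∑ c ∈ D2, d c = 2 * D2.card := by
        rw [Finset.sum_congr rfl (fun c hc => show d c = 2 by rw [hd]; simp [hc])]
        simp [mul_comm]
      have e2 : ∑ c ∈ D1, d c = D1.card := by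
        rw [Finset.sum_congr rfl (fun c (hc : c ∈ D1) => show d c = 1 by
          rw [hd, if_neg (Finset.disjoint_right.mp hD hc), if_pos hc])]
        simp
      rw [Finsupp.sum, hsupp, Finset.sum_union hD, e1, e2]
    refine ⟨hanti, ⟨?_, ?_⟩, htotdS, ?_⟩
    · show ((d - dS).sum fun _ e => e) = j
      have h := tot_add (d - dS) dS
      rw [hanti] at h
      omega
    · intro c
      show (d - dS) c ≤ 1
      have h0 := hle c
      rw [Finsupp.tsub_apply]
      have h2 := hd c
      have h3 := hdSval c
      have h4 : c ∈ D2 → c ∈ D2 ∪ S := fun h => Finset.mem_union_left _ h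
      by_cases hc2 : c ∈ D2
      · simp only [hc2, if_true] at h2
        rw [h3, if_pos (h4 hc2)] at h0 ⊢
        omega
      · simp only [hc2, if_false] at h2
        split_ifs at h2 <;> omega
    · intro c
      rw [hdSval]
      split <;> omega
  case lef =>
    intro p hp
    rw [Finset.mem_filter] at hp
    obtain ⟨hp, hfilt⟩ := hp
    obtain ⟨hsupp, hone, _, _⟩ := key p hp hfilt
    have hdSeq : Finsupp.indicator (D2 ∪ (p.2.support ∩ D1)) (fun _ _ => 1) = p.2 := by
      ext c
      rw [Finsupp.indicator_apply]
      split
      · rename_i h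
        rw [← hsupp] at h
        exact (hone c h).symm
      · rename_i h
        rw [← hsupp] at h
        rw [Finsupp.mem_support_iff, not_not] at h
        exact h.symm
    rw [Finset.HasAntidiagonal.mem_antidiagonal] at hp
    have h2 : d - p.2 = p.1 := by
      ext c
      have : p.1 c + p.2 c = d c := by rw [← hp]; rfl
      rw [Finsupp.tsub_apply]
      omega
    rw [hdSeq, h2]
  case rig =>
    intro S hS
    dsimp only
    rw [Finset.mem_powersetCard] at hS
    ext c
    simp only [Finset.mem_inter, Finsupp.mem_support_iff, Finsupp.indicator_apply]
    constructor
    · rintro ⟨hne, hc1⟩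
      by_cases h : c ∈ D2 ∪ S
      · rcases Finset.mem_union.mp h with h2 | hs
        · exact absurd hc1 (Finset.disjoint_left.mp hD h2)
        · exact hs
      · simp [h] at hne
    · intro hc
      have hu : c ∈ D2 ∪ S := Finset.mem_union_right _ hc
      refine ⟨?_, hS.1 hc⟩
      simp [hu]

open Classical in
lemma esymm_apply (k : ℕ) (d : ℕ →₀ ℕ) :
    esymm k d = if (d.sum fun _ e => e) = k ∧ ∀ i, d i ≤ 1 then (1 : ℚ) else 0 := rfl

lemma coeff_apply (f : SymF) (d : ℕ →₀ ℕ) : MvPowerSeries.coeff d f = f d := rfl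

open Classical in
lemma esymm_mul_apply (j i : ℕ) (d : ℕ →₀ ℕ) :
    (esymm j * esymm i) d =
      ((Finset.filter (fun p : (ℕ →₀ ℕ) × (ℕ →₀ ℕ) =>
          ((p.1.sum fun _ e => e) = j ∧ ∀ c, p.1 c ≤ 1) ∧
          ((p.2.sum fun _ e => e) = i ∧ ∀ c, p.2 c ≤ 1))
        (Finset.HasAntidiagonal.antidiagonal d)).card : ℚ) := by
  classical
  have : (esymm j * esymm i) d = MvPowerSeries.coeff d (esymm j * esymm i) := rfl
  rw [this, MvPowerSeries.coeff_mul]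
  rw [Finset.card_filter]
  push_cast
  apply Finset.sum_congr rfl
  intro p _
  rw [coeff_apply, coeff_apply, esymm_apply, esymm_apply]
  by_cases h1 : ((p.1.sum fun _ e => e) = j ∧ ∀ c, p.1 c ≤ 1) <;>
    by_cases h2 : ((p.2.sum fun _ e => e) = i ∧ ∀ c, p.2 c ≤ 1) <;>
      simp [h1, h2]


open Classical in
noncomputable def buildK {n : ℕ} {D2 D1 : Finset ℕ}
    (P Q : {x // x ∈ D2} → Fin n) (s : {x // x ∈ D1} → Fin n) (v : Fin n) : ℕ :=
  if h : ∃ c, P c = v then ↑h.choose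
  else if h : ∃ c, Q c = v then ↑h.choose
  else if h : ∃ c, s c = v then ↑h.choose
  else 0

section Build
variable {n : ℕ} {D2 D1 : Finset ℕ}
  (P Q : {x // x ∈ D2} → Fin n) (s : {x // x ∈ D1} → Fin n)

lemma buildK_P (hPi : Injective P) (c : {x // x ∈ D2}) :
    buildK P Q s (P c) = ↑c := by
  have h' : ∃ c', P c' = P c := ⟨c, rfl⟩
  rw [buildK, dif_pos h']
  exact congrArg _ (hPi h'.choose_spec)

lemma buildK_Q (hQi : Injective Q) (hPQ : ∀ c c', P c ≠ Q c')
    (c : {x // x ∈ D2}) : buildK P Q s (Q c) = ↑c := by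
  have h' : ∃ c', Q c' = Q c := ⟨c, rfl⟩
  rw [buildK, dif_neg (by push_neg; intro c'; exact hPQ c' c), dif_pos h']
  exact congrArg _ (hQi h'.choose_spec)

lemma buildK_s (hsi : Injective s) (hPs : ∀ c c', P c ≠ s c')
    (hQs : ∀ c c', Q c ≠ s c') (c : {x // x ∈ D1}) : buildK P Q s (s c) = ↑c := by
  have h' : ∃ c', s c' = s c := ⟨c, rfl⟩
  rw [buildK, dif_neg (by push_neg; intro c'; exact hPs c' c),
    dif_neg (by push_neg; intro c'; exact hQs c' c), dif_pos h']
  exact congrArg _ (hsi h'.choose_spec)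

variable (hD : Disjoint D2 D1)
  (hPi : Injective P) (hQi : Injective Q) (hsi : Injective s)
  (hPQ : ∀ c c', P c ≠ Q c') (hPs : ∀ c c', P c ≠ s c') (hQs : ∀ c c', Q c ≠ s c')
  (htot : ∀ v, (∃ c, P c = v) ∨ (∃ c, Q c = v) ∨ (∃ c, s c = v))

include hD hPi hQi hsi hPQ hPs hQs htot

lemma buildK_fiber2 {c : ℕ} (hc : c ∈ D2) :
    {v | buildK P Q s v = c} = {P ⟨c, hc⟩, Q ⟨c, hc⟩} := by
  ext v
  simp only [Set.mem_setOf_eq, Set.mem_insert_iff, Set.mem_singleton_iff]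
  constructor
  · intro hv
    rcases htot v with ⟨c', rfl⟩ | ⟨c', rfl⟩ | ⟨c', rfl⟩
    · rw [buildK_P P Q s hPi] at hv
      left; rw [show (⟨c, hc⟩ : {x // x ∈ D2}) = c' from Subtype.ext hv.symm]
    · rw [buildK_Q P Q s hQi hPQ] at hv
      right; rw [show (⟨c, hc⟩ : {x // x ∈ D2}) = c' from Subtype.ext hv.symm]
    · rw [buildK_s P Q s hsi hPs hQs] at hv
      exact absurd hc (by rw [← hv]; exact fun h => Finset.disjoint_left.mp hD h c'.2)
  · rintro (rfl | rfl)
    · exact buildK_P P Q s hPi _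
    · exact buildK_Q P Q s hQi hPQ _

lemma buildK_fiber1 {c : ℕ} (hc : c ∈ D1) :
    {v | buildK P Q s v = c} = {s ⟨c, hc⟩} := by
  ext v
  simp only [Set.mem_setOf_eq, Set.mem_singleton_iff]
  constructor
  · intro hv
    rcases htot v with ⟨c', rfl⟩ | ⟨c', rfl⟩ | ⟨c', rfl⟩
    · rw [buildK_P P Q s hPi] at hv
      exact absurd hc (by rw [← hv]; exact fun h => Finset.disjoint_left.mp hD c'.2 h)
    · rw [buildK_Q P Q s hQi hPQ] at hv
      exact absurd hc (by rw [← hv]; exact fun h => Finset.disjoint_left.mp hD c'.2 h)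
    · rw [buildK_s P Q s hsi hPs hQs] at hv
      rw [show (⟨c, hc⟩ : {x // x ∈ D1}) = c' from Subtype.ext hv.symm]
  · rintro rfl
    exact buildK_s P Q s hsi hPs hQs _

lemma buildK_fiber0 {c : ℕ} (hc2 : c ∉ D2) (hc1 : c ∉ D1) :
    {v | buildK P Q s v = c} = ∅ := by
  ext v
  simp only [Set.mem_setOf_eq, Set.mem_empty_iff_false, iff_false]
  intro hv
  rcases htot v with ⟨c', rfl⟩ | ⟨c', rfl⟩ | ⟨c', rfl⟩
  · rw [buildK_P P Q s hPi] at hv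
    exact hc2 (hv ▸ c'.2)
  · rw [buildK_Q P Q s hQi hPQ] at hv
    exact hc2 (hv ▸ c'.2)
  · rw [buildK_s P Q s hsi hPs hQs] at hv
    exact hc1 (hv ▸ c'.2)

end Build

open Classical in
lemma master {n : ℕ} (G : SimpleGraph (Fin n)) (A B : Finset (Fin n))
    (Bad : Fin n → Fin n → Prop)
    (hAB : Disjoint A B)
    (hAdj : ∀ v w : Fin n, G.Adj v w ↔ v ≠ w ∧
      ¬((v ∈ A ∧ w ∈ B ∧ ¬ Bad v w) ∨ (w ∈ A ∧ v ∈ B ∧ ¬ Bad w v)))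
    (D2 D1 : Finset ℕ) (hD : Disjoint D2 D1)
    (d : ℕ →₀ ℕ) (hd : ∀ c, d c = if c ∈ D2 then 2 else if c ∈ D1 then 1 else 0)
    (hn : 2 * D2.card + D1.card = n) :
    {κ : Fin n → ℕ | (∀ v w, G.Adj v w → κ v ≠ κ w) ∧ ∀ i : ℕ, {v | κ v = i}.ncard = d i}.ncard
      = Nat.card {pq : ({x // x ∈ D2} ↪ {x // x ∈ A}) × ({x // x ∈ D2} ↪ {x // x ∈ B}) //
          ∀ c, ¬ Bad ↑(pq.1 c) ↑(pq.2 c)} * (D1.card).factorial := by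
  classical
  rw [← Nat.card_coe_set_eq]
  set S := {κ : Fin n → ℕ | (∀ v w, G.Adj v w → κ v ≠ κ w) ∧
      ∀ i : ℕ, {v | κ v = i}.ncard = d i} with hSdef
  set PQt := {pq : ({x // x ∈ D2} ↪ {x // x ∈ A}) × ({x // x ∈ D2} ↪ {x // x ∈ B}) //
          ∀ c, ¬ Bad ↑(pq.1 c) ↑(pq.2 c)} with hPQdef
  let fP : PQt → {x // x ∈ D2} → Fin n := fun pq c => ↑(pq.1.1 c)
  let fQ : PQt → {x // x ∈ D2} → Fin n := fun pq c => ↑(pq.1.2 c)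
  have hfPA : ∀ pq c, fP pq c ∈ A := fun pq c => (pq.1.1 c).2
  have hfQB : ∀ pq c, fQ pq c ∈ B := fun pq c => (pq.1.2 c).2
  have hfPi : ∀ pq, Injective (fP pq) :=
    fun pq => Subtype.val_injective.comp (pq.1.1.injective)
  have hfQi : ∀ pq, Injective (fQ pq) :=
    fun pq => Subtype.val_injective.comp (pq.1.2.injective)
  have hfPQ : ∀ pq c c', fP pq c ≠ fQ pq c' := fun pq c c' h =>
    Finset.disjoint_left.mp hAB (hfPA pq c) (h ▸ hfQB pq c')
  let Rest : PQt → Set (Fin n) := fun pq => {v | (∀ c, fP pq c ≠ v) ∧ (∀ c, fQ pq c ≠ v)}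
  have hRest : ∀ pq, (Rest pq).ncard = n - 2 * D2.card := by
    intro pq
    have hre : Rest pq = (Set.univ : Set (Fin n)) \ (Set.range (fP pq) ∪ Set.range (fQ pq)) := by
      ext v
      simp only [Rest, Set.mem_setOf_eq, Set.mem_diff, Set.mem_univ, true_and,
        Set.mem_union, Set.mem_range, not_or, not_exists]
    have h1 : (Set.range (fP pq)).ncard = D2.card := by
      rw [← Set.image_univ, Set.ncard_image_of_injective _ (hfPi pq), Set.ncard_univ,
        Nat.card_eq_fintype_card, Fintype.card_coe]
    have h2 : (Set.range (fQ pq)).ncard = D2.card := by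
      rw [← Set.image_univ, Set.ncard_image_of_injective _ (hfQi pq), Set.ncard_univ,
        Nat.card_eq_fintype_card, Fintype.card_coe]
    have hdisj : Disjoint (Set.range (fP pq)) (Set.range (fQ pq)) := by
      rw [Set.disjoint_left]
      rintro x ⟨c, rfl⟩ ⟨c', hc'⟩
      exact hfPQ pq c c' hc'.symm
    rw [hre, Set.ncard_diff (Set.subset_univ _), Set.ncard_univ, Nat.card_eq_fintype_card,
      Fintype.card_fin, Set.ncard_union_eq hdisj, h1, h2]
    omega
  set T := (pq : PQt) × ({x // x ∈ D1} ≃ ↥(Rest pq)) with hTdef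
  -- the coloring associated to structured data
  let bk : T → (Fin n → ℕ) := fun t =>
    buildK (fP t.1) (fQ t.1) (fun c => ↑(t.2 c))
  have hsi : ∀ t : T, Injective (fun c => (↑(t.2 c) : Fin n)) :=
    fun t => Subtype.val_injective.comp t.2.injective
  have hPs : ∀ (t : T) c c', fP t.1 c ≠ ↑(t.2 c') := fun t c c' h => ((t.2 c').2.1 c) h
  have hQs : ∀ (t : T) c c', fQ t.1 c ≠ ↑(t.2 c') := fun t c c' h => ((t.2 c').2.2 c) h
  have htot : ∀ (t : T) v, (∃ c, fP t.1 c = v) ∨ (∃ c, fQ t.1 c = v) ∨ (∃ c, ↑(t.2 c) = v) := by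
    intro t v
    by_contra hcon
    push_neg at hcon
    obtain ⟨h1, h2, h3⟩ := hcon
    refine h3 (t.2.symm ⟨v, h1, h2⟩) ?_
    rw [Equiv.apply_symm_apply]
  have hfib2 : ∀ (t : T) (c : ℕ) (hc : c ∈ D2),
      {v | bk t v = c} = {fP t.1 ⟨c, hc⟩, fQ t.1 ⟨c, hc⟩} := fun t c hc =>
    buildK_fiber2 (fP t.1) (fQ t.1) _ hD (hfPi t.1) (hfQi t.1) (hsi t) (hfPQ t.1)
      (hPs t) (hQs t) (htot t) hc
  have hfib1 : ∀ (t : T) (c : ℕ) (hc : c ∈ D1),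
      {v | bk t v = c} = {(↑(t.2 ⟨c, hc⟩) : Fin n)} := fun t c hc =>
    buildK_fiber1 (fP t.1) (fQ t.1) _ hD (hfPi t.1) (hfQi t.1) (hsi t) (hfPQ t.1)
      (hPs t) (hQs t) (htot t) hc
  have hfib0 : ∀ (t : T) (c : ℕ), c ∉ D2 → c ∉ D1 → {v | bk t v = c} = ∅ := fun t c hc2 hc1 =>
    buildK_fiber0 (fP t.1) (fQ t.1) _ hD (hfPi t.1) (hfQi t.1) (hsi t) (hfPQ t.1)
      (hPs t) (hQs t) (htot t) hc2 hc1
  have hmem : ∀ t : T, bk t ∈ S := by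
    intro t
    constructor
    · -- properness
      intro v w hadj heq
      rcases (hAdj v w).mp hadj with ⟨hne, hcross⟩
      by_cases hc2 : bk t v ∈ D2
      · have hv : v ∈ {x | bk t x = bk t v} := rfl
        have hw : w ∈ {x | bk t x = bk t v} := heq.symm
        rw [hfib2 t (bk t v) hc2] at hv hw
        rcases hv with hv | hv <;> rcases hw with hw | hw
        · exact hne (hv.trans hw.symm)
        · exact hcross (Or.inl ⟨hv ▸ hfPA t.1 _, hw ▸ hfQB t.1 _, by
            rw [hv, hw]; exact t.1.2 _⟩)
        · exact hcross (Or.inr ⟨hw ▸ hfPA t.1 _, hv ▸ hfQB t.1 _, by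
            rw [hv, hw]; exact t.1.2 _⟩)
        · exact hne (hv.trans hw.symm)
      · by_cases hc1 : bk t v ∈ D1
        · have hv : v ∈ {x | bk t x = bk t v} := rfl
          have hw : w ∈ {x | bk t x = bk t v} := heq.symm
          rw [hfib1 t (bk t v) hc1] at hv hw
          exact hne (hv.trans hw.symm)
        · have hv : v ∈ {x | bk t x = bk t v} := rfl
          rw [hfib0 t (bk t v) hc2 hc1] at hv
          exact hv
    · -- fiber sizes
      intro c
      rw [hd c]
      by_cases hc2 : c ∈ D2
      · rw [if_pos hc2, hfib2 t c hc2, Set.ncard_pair (hfPQ t.1 _ _)]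
      · by_cases hc1 : c ∈ D1
        · rw [if_neg hc2, if_pos hc1, hfib1 t c hc1, Set.ncard_singleton]
        · rw [if_neg hc2, if_neg hc1, hfib0 t c hc2 hc1, Set.ncard_empty]
  let Φ : T → ↥S := fun t => ⟨bk t, hmem t⟩
  have hbij : Function.Bijective Φ := by
    constructor
    · -- injectivity
      rintro ⟨pq, s⟩ ⟨pq', s'⟩ heq
      have heqf : bk ⟨pq, s⟩ = bk ⟨pq', s'⟩ := congrArg Subtype.val heq
      have hpqeq : pq = pq' := by
        apply Subtype.ext
        have hcomp : ∀ c : {x // x ∈ D2}, pq.1.1 c = pq'.1.1 c ∧ pq.1.2 c = pq'.1.2 c := by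
          intro c
          have h2 := hfib2 ⟨pq, s⟩ ↑c c.2
          have h2' := hfib2 ⟨pq', s'⟩ ↑c c.2
          rw [heqf] at h2
          have hpair : ({fP pq' c, fQ pq' c} : Set (Fin n)) = {fP pq c, fQ pq c} :=
            h2'.symm.trans h2
          have hx : fP pq' c ∈ ({fP pq c, fQ pq c} : Set (Fin n)) := by
            rw [← hpair]; left; rfl
          have hy : fQ pq' c ∈ ({fP pq c, fQ pq c} : Set (Fin n)) := by
            rw [← hpair]; right; rfl
          constructor
          · rcases hx with hx | hx
            · exact Subtype.ext hx.symm
            · exact (Finset.disjoint_left.mp hAB (hfPA pq' c)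
                (by rw [hx]; exact hfQB pq c)).elim
          · rcases hy with hy | hy
            · exact (Finset.disjoint_left.mp hAB (hfPA pq c)
                (by rw [← hy]; exact hfQB pq' c)).elim
            · exact Subtype.ext hy.symm
        exact Prod.ext (Function.Embedding.ext fun c => (hcomp c).1)
          (Function.Embedding.ext fun c => (hcomp c).2)
      subst hpqeq
      have hseq : s = s' := by
        apply Equiv.ext
        intro c
        have h1 := hfib1 ⟨pq, s⟩ ↑c c.2
        have h1' := hfib1 ⟨pq, s'⟩ ↑c c.2
        rw [heqf] at h1
        have := h1'.symm.trans h1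
        apply Subtype.ext
        exact (Set.singleton_eq_singleton_iff.mp this).symm
      rw [hseq]
    · -- surjectivity
      rintro ⟨κ, hκp, hκf⟩
      have hfibpair : ∀ c : {x // x ∈ D2}, ∃ p : Fin n × Fin n,
          p.1 ∈ A ∧ p.2 ∈ B ∧ ¬ Bad p.1 p.2 ∧ {v | κ v = ↑c} = {p.1, p.2} := by
        intro c
        have hc2 := hκf ↑c
        rw [hd, if_pos c.2] at hc2
        obtain ⟨x, y, hxy, hset⟩ := Set.ncard_eq_two.mp hc2
        have hx : κ x = ↑c := by
          have : x ∈ {v | κ v = ↑c} := by rw [hset]; left; rfl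
          exact this
        have hy : κ y = ↑c := by
          have : y ∈ {v | κ v = ↑c} := by rw [hset]; right; rfl
          exact this
        have hnadj : ¬ G.Adj x y := fun h => hκp x y h (hx.trans hy.symm)
        rw [hAdj] at hnadj
        push_neg at hnadj
        have hcross := hnadj hxy
        rcases hcross with ⟨h1, h2, h3⟩ | ⟨h1, h2, h3⟩
        · exact ⟨(x, y), h1, h2, h3, hset⟩
        · exact ⟨(y, x), h1, h2, h3, hset.trans (Set.pair_comm x y)⟩
      choose Fp hFA hFB hFBad hFset using hfibpair
      have hfibone : ∀ c : {x // x ∈ D1}, ∃ z, {v | κ v = ↑c} = {z} := by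
        intro c
        have hc1 := hκf ↑c
        rw [hd, if_neg (Finset.disjoint_right.mp hD c.2), if_pos c.2] at hc1
        exact Set.ncard_eq_one.mp hc1
      choose Fz hFz using hfibone
      have hκFp : ∀ c, κ (Fp c).1 = ↑c := by
        intro c
        have : (Fp c).1 ∈ {v | κ v = ↑c} := by rw [hFset c]; left; rfl
        exact this
      have hκFq : ∀ c, κ (Fp c).2 = ↑c := by
        intro c
        have : (Fp c).2 ∈ {v | κ v = ↑c} := by rw [hFset c]; right; rfl
        exact this
      have hκFz : ∀ c, κ (Fz c) = ↑c := by
        intro c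
        have : Fz c ∈ {v | κ v = ↑c} := by rw [hFz c]; rfl
        exact this
      let P : {x // x ∈ D2} ↪ {x // x ∈ A} :=
        ⟨fun c => ⟨(Fp c).1, hFA c⟩, by
          intro c c' h
          have hval : (Fp c).1 = (Fp c').1 := congrArg Subtype.val h
          have : (↑c : ℕ) = ↑c' := by rw [← hκFp c, ← hκFp c', hval]
          exact Subtype.ext this⟩
      let Q : {x // x ∈ D2} ↪ {x // x ∈ B} :=
        ⟨fun c => ⟨(Fp c).2, hFB c⟩, by
          intro c c' h
          have hval : (Fp c).2 = (Fp c').2 := congrArg Subtype.val h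
          have : (↑c : ℕ) = ↑c' := by rw [← hκFq c, ← hκFq c', hval]
          exact Subtype.ext this⟩
      let pq : PQt := ⟨(P, Q), fun c => hFBad c⟩
      have hzRest : ∀ c : {x // x ∈ D1}, Fz c ∈ Rest pq := by
        intro c
        constructor
        · intro c' h
          have h1 : κ (Fz c) = ↑c' := by rw [← h]; exact hκFp c'
          have heqc : (↑c' : ℕ) = ↑c := h1.symm.trans (hκFz c)
          exact Finset.disjoint_left.mp hD c'.2 (by rw [heqc]; exact c.2)
        · intro c' h
          have h1 : κ (Fz c) = ↑c' := by rw [← h]; exact hκFq c'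
          have heqc : (↑c' : ℕ) = ↑c := h1.symm.trans (hκFz c)
          exact Finset.disjoint_left.mp hD c'.2 (by rw [heqc]; exact c.2)
      let sfun : {x // x ∈ D1} → ↥(Rest pq) := fun c => ⟨Fz c, hzRest c⟩
      have hsbij : Function.Bijective sfun := by
        constructor
        · intro c c' h
          have hval : Fz c = Fz c' := congrArg Subtype.val h
          have : (↑c : ℕ) = ↑c' := by rw [← hκFz c, ← hκFz c', hval]
          exact Subtype.ext this
        · rintro ⟨v, hv⟩
          by_cases hc2 : κ v ∈ D2
          · exfalso
            have hvfib : v ∈ {w | κ w = κ v} := rfl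
            rw [hFset ⟨κ v, hc2⟩] at hvfib
            rcases hvfib with hveq | hveq
            · exact hv.1 ⟨κ v, hc2⟩ hveq.symm
            · exact hv.2 ⟨κ v, hc2⟩ hveq.symm
          · by_cases hc1 : κ v ∈ D1
            · refine ⟨⟨κ v, hc1⟩, ?_⟩
              have hvfib : v ∈ {w | κ w = κ v} := rfl
              rw [hFz ⟨κ v, hc1⟩] at hvfib
              exact Subtype.ext hvfib.symm
            · exfalso
              have h0 := hκf (κ v)
              rw [hd, if_neg hc2, if_neg hc1] at h0
              have hempty : {w | κ w = κ v} = ∅ :=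
                (Set.ncard_eq_zero (Set.toFinite _)).mp h0
              have hvfib : v ∈ {w | κ w = κ v} := rfl
              rw [hempty] at hvfib
              exact hvfib
      refine ⟨⟨pq, Equiv.ofBijective sfun hsbij⟩, ?_⟩
      apply Subtype.ext
      show bk ⟨pq, Equiv.ofBijective sfun hsbij⟩ = κ
      funext v
      set t : T := ⟨pq, Equiv.ofBijective sfun hsbij⟩ with ht
      by_cases hc2 : κ v ∈ D2
      · have hvfib : v ∈ {w | κ w = κ v} := rfl
        rw [hFset ⟨κ v, hc2⟩] at hvfib
        rcases hvfib with hveq | hveq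
        · have : bk t (fP t.1 ⟨κ v, hc2⟩) = κ v :=
            buildK_P (fP t.1) (fQ t.1) _ (hfPi t.1) ⟨κ v, hc2⟩
          rw [show fP t.1 ⟨κ v, hc2⟩ = v from hveq.symm] at this
          rw [this]
        · have : bk t (fQ t.1 ⟨κ v, hc2⟩) = κ v :=
            buildK_Q (fP t.1) (fQ t.1) _ (hfQi t.1) (hfPQ t.1) ⟨κ v, hc2⟩
          rw [show fQ t.1 ⟨κ v, hc2⟩ = v from hveq.symm] at this
          rw [this]
      · by_cases hc1 : κ v ∈ D1
        · have hvfib : v ∈ {w | κ w = κ v} := rfl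
          rw [hFz ⟨κ v, hc1⟩] at hvfib
          have : bk t (↑(t.2 ⟨κ v, hc1⟩)) = κ v :=
            buildK_s (fP t.1) (fQ t.1) _ (hsi t) (hPs t) (hQs t) ⟨κ v, hc1⟩
          have hval : (↑(t.2 ⟨κ v, hc1⟩) : Fin n) = Fz ⟨κ v, hc1⟩ := rfl
          rw [hval, ← hvfib] at this
          rw [this]
        · exfalso
          have h0 := hκf (κ v)
          rw [hd, if_neg hc2, if_neg hc1] at h0
          have hempty : {w | κ w = κ v} = ∅ :=
            (Set.ncard_eq_zero (Set.toFinite _)).mp h0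
          have hvfib : v ∈ {w | κ w = κ v} := rfl
          rw [hempty] at hvfib
          exact hvfib
  rw [← Nat.card_eq_of_bijective Φ hbij]
  -- compute Nat.card T
  letI : Fintype PQt := Fintype.ofFinite _
  letI : ∀ pq : PQt, Fintype ↥(Rest pq) := fun pq => Fintype.ofFinite _
  have hcard1 : ∀ pq : PQt, Fintype.card ({x // x ∈ D1} ≃ ↥(Rest pq)) = (D1.card).factorial := by
    intro pq
    have hcards : Fintype.card {x // x ∈ D1} = Fintype.card ↥(Rest pq) := by
      rw [Fintype.card_coe, ← Nat.card_eq_fintype_card, Nat.card_coe_set_eq, hRest pq]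
      omega
    rw [Fintype.card_equiv (Fintype.equivOfCardEq hcards), Fintype.card_coe]
  rw [Nat.card_eq_fintype_card, Fintype.card_sigma,
    Finset.sum_congr rfl (fun pq _ => hcard1 pq), Finset.sum_const, smul_eq_mul,
    Finset.card_univ, Nat.card_eq_fintype_card]


lemma card_filter_lt (n hi : ℕ) (h : hi ≤ n) :
    (Finset.filter (fun v : Fin n => (v : ℕ) < hi) Finset.univ).card = hi := by
  have he : Finset.filter (fun v : Fin n => (v : ℕ) < hi) Finset.univ
      = Finset.attachFin (Finset.range hi) (fun m hm => lt_of_lt_of_le (Finset.mem_range.mp hm) h) := by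
    ext v
    simp [Finset.mem_attachFin]
  rw [he, Finset.card_attachFin, Finset.card_range]

lemma card_filter_ge (n lo : ℕ) :
    (Finset.filter (fun v : Fin n => lo ≤ (v : ℕ)) Finset.univ).card = n - lo := by
  have he : Finset.filter (fun v : Fin n => lo ≤ (v : ℕ)) Finset.univ
      = Finset.attachFin (Finset.Ico lo n) (fun m hm => (Finset.mem_Ico.mp hm).2) := by
    ext v
    simp [Finset.mem_attachFin, Finset.mem_Ico, v.isLt]
  rw [he, Finset.card_attachFin, Nat.card_Ico]

open Classical in
lemma card_emb_fix {α β : Type*} [Fintype α] [Fintype β] (c : α) (v : β) :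
    Nat.card {P : α ↪ β // P c = v}
      = (Fintype.card β - 1).descFactorial (Fintype.card α - 1) := by
  classical
  have E : {P : α ↪ β // P c = v} ≃ ({x : α // x ≠ c} ↪ {y : β // y ≠ v}) := by
    refine ⟨fun P => ⟨fun x => ⟨P.1 x, fun h => x.2 (P.1.injective (h.trans P.2.symm))⟩,
      fun x x' h => Subtype.ext (P.1.injective (congrArg Subtype.val h))⟩,
      fun f => ⟨⟨fun x => if h : x = c then v else ↑(f ⟨x, h⟩), ?_⟩, by simp⟩, ?_, ?_⟩
    · intro x x' h
      simp only at h
      by_cases hx : x = c <;> by_cases hx' : x' = c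
      · rw [hx, hx']
      · rw [dif_pos hx, dif_neg hx'] at h
        exact absurd h.symm (f ⟨x', hx'⟩).2
      · rw [dif_neg hx, dif_pos hx'] at h
        exact absurd h (f ⟨x, hx⟩).2
      · rw [dif_neg hx, dif_neg hx'] at h
        have := f.injective (Subtype.ext h)
        exact congrArg Subtype.val this
    · rintro ⟨P, hP⟩
      apply Subtype.ext
      apply Function.Embedding.ext
      intro x
      show (if h : x = c then v else P x) = P x
      by_cases hx : x = c
      · rw [dif_pos hx, hx, hP]
      · rw [dif_neg hx]
    · intro f
      apply Function.Embedding.ext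
      intro x
      apply Subtype.ext
      show (if h : (x : α) = c then v else ↑(f ⟨↑x, h⟩)) = ↑(f x)
      rw [dif_neg x.2]
  rw [Nat.card_congr E, Nat.card_eq_fintype_card, Fintype.card_embedding_eq]
  congr 1
  · rw [Fintype.card_subtype_compl, Fintype.card_subtype_eq]
  · rw [Fintype.card_subtype_compl, Fintype.card_subtype_eq]

open Classical in
lemma card_pq_bad {α βA βB : Type*} [Fintype α] [Fintype βA] [Fintype βB]
    (va : βA) (wb : βB) :
    Nat.card {pq : (α ↪ βA) × (α ↪ βB) // ∃ c, pq.1 c = va ∧ pq.2 c = wb}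
      = Fintype.card α * ((Fintype.card βA - 1).descFactorial (Fintype.card α - 1) *
          (Fintype.card βB - 1).descFactorial (Fintype.card α - 1)) := by
  classical
  have E : {pq : (α ↪ βA) × (α ↪ βB) // ∃ c, pq.1 c = va ∧ pq.2 c = wb}
      ≃ Σ _c : α, ({P : α ↪ βA // P _c = va} × {Q : α ↪ βB // Q _c = wb}) := by
    refine ⟨fun pq => ⟨pq.2.choose, ⟨pq.1.1, pq.2.choose_spec.1⟩, ⟨pq.1.2, pq.2.choose_spec.2⟩⟩,
      fun t => ⟨(t.2.1.1, t.2.2.1), ⟨t.1, t.2.1.2, t.2.2.2⟩⟩, ?_, ?_⟩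
    · rintro ⟨⟨P, Q⟩, h⟩
      rfl
    · rintro ⟨c, ⟨P, hP⟩, ⟨Q, hQ⟩⟩
      have hex : ∃ c', P c' = va ∧ Q c' = wb := ⟨c, hP, hQ⟩
      have hc : hex.choose = c := P.injective (hex.choose_spec.1.trans hP.symm)
      subst hc
      rfl
  rw [Nat.card_congr E, Nat.card_eq_fintype_card, Fintype.card_sigma]
  have hterm : ∀ c : α, Fintype.card ({P : α ↪ βA // P c = va} × {Q : α ↪ βB // Q c = wb})
      = (Fintype.card βA - 1).descFactorial (Fintype.card α - 1) *
        (Fintype.card βB - 1).descFactorial (Fintype.card α - 1) := by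
    intro c
    rw [Fintype.card_prod, ← Nat.card_eq_fintype_card, ← Nat.card_eq_fintype_card,
      card_emb_fix c va, card_emb_fix c wb]
  rw [Finset.sum_congr rfl (fun c _ => hterm c), Finset.sum_const, smul_eq_mul, Finset.card_univ]

open Classical in
lemma count_ab (a b : ℕ) (ha : 1 ≤ a) (D2 D1 : Finset ℕ) (hD : Disjoint D2 D1)
    (d : ℕ →₀ ℕ) (hd : ∀ c, d c = if c ∈ D2 then 2 else if c ∈ D1 then 1 else 0)
    (hn : 2 * D2.card + D1.card = a + 0 + b) :
    {κ : Fin (a + 0 + b) → ℕ | (∀ v w, (barbellG a 0 b).Adj v w → κ v ≠ κ w) ∧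
        ∀ i : ℕ, {v | κ v = i}.ncard = d i}.ncard
      = (a - 1).descFactorial D2.card * b.descFactorial D2.card * (D1.card).factorial := by
  classical
  set A : Finset (Fin (a+0+b)) := Finset.filter (fun v => (v : ℕ) < a - 1) Finset.univ with hA
  set B : Finset (Fin (a+0+b)) := Finset.filter (fun v => a ≤ (v : ℕ)) Finset.univ with hB
  have hAB : Disjoint A B := by
    rw [Finset.disjoint_left]
    intro v hv hv'
    rw [hA, Finset.mem_filter] at hv
    rw [hB, Finset.mem_filter] at hv'
    omega
  have hAdj : ∀ v w : Fin (a+0+b), (barbellG a 0 b).Adj v w ↔ v ≠ w ∧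
      ¬((v ∈ A ∧ w ∈ B ∧ ¬ (fun _ _ => False) v w) ∨
        (w ∈ A ∧ v ∈ B ∧ ¬ (fun _ _ => False) w v)) := by
    intro v w
    rw [show (barbellG a 0 b).Adj v w ↔ _ from SimpleGraph.fromRel_adj _ v w]
    simp only [hA, hB, Finset.mem_filter, Finset.mem_univ, true_and, not_false_eq_true, and_true]
    apply and_congr_right
    intro hne
    have hvne : (v : ℕ) ≠ (w : ℕ) := fun h => hne (Fin.ext h)
    omega
  rw [master (barbellG a 0 b) A B (fun _ _ => False) hAB hAdj D2 D1 hD d hd hn]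
  have hcA : Fintype.card {x // x ∈ A} = a - 1 := by
    rw [Fintype.card_coe, hA, card_filter_lt _ _ (by omega)]
  have hcB : Fintype.card {x // x ∈ B} = b := by
    rw [Fintype.card_coe, hB, card_filter_ge]
    omega
  have hPQ : Nat.card {pq : ({x // x ∈ D2} ↪ {x // x ∈ A}) × ({x // x ∈ D2} ↪ {x // x ∈ B}) //
      ∀ c, ¬ (fun _ _ => False) (↑(pq.1 c) : Fin (a+0+b)) (↑(pq.2 c) : Fin (a+0+b))}
      = (a-1).descFactorial D2.card * b.descFactorial D2.card := by
    rw [Nat.card_congr (Equiv.subtypeUnivEquiv (fun pq => fun c => not_false))]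
    rw [Nat.card_prod, Nat.card_eq_fintype_card, Nat.card_eq_fintype_card,
      Fintype.card_embedding_eq, Fintype.card_embedding_eq, hcA, hcB, Fintype.card_coe]
  rw [hPQ]

open Classical in
lemma count_a1b (a b : ℕ) (ha : 1 ≤ a) (D2 D1 : Finset ℕ) (hD : Disjoint D2 D1)
    (d : ℕ →₀ ℕ) (hd : ∀ c, d c = if c ∈ D2 then 2 else if c ∈ D1 then 1 else 0)
    (hn : 2 * D2.card + D1.card = a + 1 + b) :
    ({κ : Fin (a + 1 + b) → ℕ | (∀ v w, (barbellG a 1 b).Adj v w → κ v ≠ κ w) ∧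
        ∀ i : ℕ, {v | κ v = i}.ncard = d i}.ncard : ℚ)
      = ((a.descFactorial D2.card * (b+1).descFactorial D2.card : ℕ) -
          (D2.card * ((a-1).descFactorial (D2.card - 1) * b.descFactorial (D2.card - 1)) : ℕ)) *
        ((D1.card).factorial : ℕ) := by
  classical
  set A : Finset (Fin (a+1+b)) := Finset.filter (fun v => (v : ℕ) < a) Finset.univ with hA
  set B : Finset (Fin (a+1+b)) := Finset.filter (fun v => a ≤ (v : ℕ)) Finset.univ with hB
  set Bad : Fin (a+1+b) → Fin (a+1+b) → Prop :=
    fun v w => (v : ℕ) = a - 1 ∧ (w : ℕ) = a with hBad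
  have hAB : Disjoint A B := by
    rw [Finset.disjoint_left]
    intro v hv hv'
    rw [hA, Finset.mem_filter] at hv
    rw [hB, Finset.mem_filter] at hv'
    omega
  have hAdj : ∀ v w : Fin (a+1+b), (barbellG a 1 b).Adj v w ↔ v ≠ w ∧
      ¬((v ∈ A ∧ w ∈ B ∧ ¬ Bad v w) ∨ (w ∈ A ∧ v ∈ B ∧ ¬ Bad w v)) := by
    intro v w
    rw [show (barbellG a 1 b).Adj v w ↔ _ from SimpleGraph.fromRel_adj _ v w]
    simp only [hA, hB, hBad, Finset.mem_filter, Finset.mem_univ, true_and]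
    apply and_congr_right
    intro hne
    have hvne : (v : ℕ) ≠ (w : ℕ) := fun h => hne (Fin.ext h)
    omega
  rw [master (barbellG a 1 b) A B Bad hAB hAdj D2 D1 hD d hd hn]
  have hcA : Fintype.card {x // x ∈ A} = a := by
    rw [Fintype.card_coe, hA, card_filter_lt _ _ (by omega)]
  have hcB : Fintype.card {x // x ∈ B} = b + 1 := by
    rw [Fintype.card_coe, hB, card_filter_ge]
    omega
  have hva : a - 1 < a + 1 + b := by omega
  have hwa : a < a + 1 + b := by omega
  have hmemA : (⟨a - 1, hva⟩ : Fin (a+1+b)) ∈ A := by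
    rw [hA, Finset.mem_filter]
    refine ⟨Finset.mem_univ _, ?_⟩
    show a - 1 < a
    omega
  have hmemB : (⟨a, hwa⟩ : Fin (a+1+b)) ∈ B := by
    rw [hB, Finset.mem_filter]
    exact ⟨Finset.mem_univ _, le_refl a⟩
  set vA : {x // x ∈ A} := ⟨⟨a - 1, hva⟩, hmemA⟩ with hvA
  set wB : {x // x ∈ B} := ⟨⟨a, hwa⟩, hmemB⟩ with hwB
  have hiff : ∀ pq : ({x // x ∈ D2} ↪ {x // x ∈ A}) × ({x // x ∈ D2} ↪ {x // x ∈ B}),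
      (∀ c, ¬ Bad (↑(pq.1 c) : Fin (a+1+b)) (↑(pq.2 c) : Fin (a+1+b))) ↔
        ¬ ∃ c, pq.1 c = vA ∧ pq.2 c = wB := by
    intro pq
    rw [not_exists]
    apply forall_congr'
    intro c
    constructor
    · intro h hc
      exact h ⟨by rw [hc.1, hvA], by rw [hc.2, hwB]⟩
    · intro h hc
      exact h ⟨Subtype.ext (Fin.ext hc.1), Subtype.ext (Fin.ext hc.2)⟩
  rw [Nat.card_congr (Equiv.subtypeEquivRight hiff), Nat.card_eq_fintype_card,
    Fintype.card_subtype_compl]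
  have hbadcard : Fintype.card {pq : ({x // x ∈ D2} ↪ {x // x ∈ A}) ×
      ({x // x ∈ D2} ↪ {x // x ∈ B}) // ∃ c, pq.1 c = vA ∧ pq.2 c = wB}
      = D2.card * ((a-1).descFactorial (D2.card - 1) * b.descFactorial (D2.card - 1)) := by
    rw [← Nat.card_eq_fintype_card, card_pq_bad vA wB, hcA, hcB, Fintype.card_coe]
    simp
  have htotcard : Fintype.card (({x // x ∈ D2} ↪ {x // x ∈ A}) ×
      ({x // x ∈ D2} ↪ {x // x ∈ B}))
      = a.descFactorial D2.card * (b+1).descFactorial D2.card := by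
    rw [Fintype.card_prod, Fintype.card_embedding_eq, Fintype.card_embedding_eq, hcA, hcB,
      Fintype.card_coe]
  have hle : Fintype.card {pq : ({x // x ∈ D2} ↪ {x // x ∈ A}) ×
      ({x // x ∈ D2} ↪ {x // x ∈ B}) // ∃ c, pq.1 c = vA ∧ pq.2 c = wB}
      ≤ Fintype.card (({x // x ∈ D2} ↪ {x // x ∈ A}) × ({x // x ∈ D2} ↪ {x // x ∈ B})) :=
    Fintype.card_subtype_le _
  rw [hbadcard, htotcard] at hle ⊢
  push_cast [Nat.cast_sub hle]
  ring


-- fibers of proper colorings have at most 2 elements when covered by two cliques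
lemma fiber_le_two {n : ℕ} (G : SimpleGraph (Fin n)) (C1 C2 : Fin n → Prop)
    (hcov : ∀ v, C1 v ∨ C2 v)
    (hC1 : ∀ v w, C1 v → C1 w → v ≠ w → G.Adj v w)
    (hC2 : ∀ v w, C2 v → C2 w → v ≠ w → G.Adj v w)
    (κ : Fin n → ℕ) (hκ : ∀ v w, G.Adj v w → κ v ≠ κ w) (c : ℕ) :
    {v | κ v = c}.ncard ≤ 2 := by
  classical
  have hsub : {v | κ v = c} ⊆ ({v | κ v = c ∧ C1 v} ∪ {v | κ v = c ∧ C2 v}) := by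
    intro v hv
    rcases hcov v with h | h
    · exact Or.inl ⟨hv, h⟩
    · exact Or.inr ⟨hv, h⟩
  have h1 : {v | κ v = c ∧ C1 v}.ncard ≤ 1 := by
    rw [Set.ncard_le_one_iff (Set.toFinite _)]
    rintro v w ⟨hv1, hv2⟩ ⟨hw1, hw2⟩
    by_contra hne
    exact hκ v w (hC1 v w hv2 hw2 hne) (hv1.trans hw1.symm)
  have h2 : {v | κ v = c ∧ C2 v}.ncard ≤ 1 := by
    rw [Set.ncard_le_one_iff (Set.toFinite _)]
    rintro v w ⟨hv1, hv2⟩ ⟨hw1, hw2⟩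
    by_contra hne
    exact hκ v w (hC2 v w hv2 hw2 hne) (hv1.trans hw1.symm)
  calc {v | κ v = c}.ncard
      ≤ ({v | κ v = c ∧ C1 v} ∪ {v | κ v = c ∧ C2 v}).ncard :=
        Set.ncard_le_ncard hsub (Set.toFinite _)
    _ ≤ _ := Set.ncard_union_le _ _
    _ ≤ 2 := by omega

-- any coloring with prescribed fiber sizes forces the total of d vertices
lemma tot_eq_card {n : ℕ} (κ : Fin n → ℕ) (d : ℕ →₀ ℕ)
    (hκf : ∀ i : ℕ, {v | κ v = i}.ncard = d i) :
    (d.sum fun _ e => e) = n := by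
  classical
  have hfib : ∀ c : ℕ, (Finset.univ.filter (fun v : Fin n => κ v = c)).card = d c := by
    intro c
    rw [← hκf c]
    rw [← Set.ncard_coe_finset]
    congr 1
    ext v
    simp
  have hmem : ∀ v : Fin n, v ∈ Finset.univ → κ v ∈ d.support := by
    intro v _
    rw [Finsupp.mem_support_iff]
    intro h0
    have := hfib (κ v)
    rw [h0, Finset.card_eq_zero, Finset.filter_eq_empty_iff] at this
    exact this (Finset.mem_univ v) rfl
  have := Finset.card_eq_sum_card_fiberwise hmem
  rw [Finset.card_univ, Fintype.card_fin] at this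
  rw [Finsupp.sum]
  rw [this, Finset.sum_congr rfl (fun c _ => hfib c)]

lemma good_decomp (d : ℕ →₀ ℕ) (hsq : ∀ c, d c ≤ 2) :
    ∃ D2 D1 : Finset ℕ, Disjoint D2 D1 ∧
      (∀ c, d c = if c ∈ D2 then 2 else if c ∈ D1 then 1 else 0) ∧
      2 * D2.card + D1.card = (d.sum fun _ e => e) := by
  classical
  set s2 : Finset ℕ := d.support.filter (fun c => d c = 2) with hs2
  set s1 : Finset ℕ := d.support.filter (fun c => d c = 1) with hs1
  have hm2 : ∀ c, c ∈ s2 ↔ d c = 2 := by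
    intro c
    rw [hs2, Finset.mem_filter, Finsupp.mem_support_iff]
    omega
  have hm1 : ∀ c, c ∈ s1 ↔ d c = 1 := by
    intro c
    rw [hs1, Finset.mem_filter, Finsupp.mem_support_iff]
    omega
  refine ⟨s2, s1, ?_, ?_, ?_⟩
  · rw [Finset.disjoint_left]
    intro c hc hc'
    rw [hm2] at hc
    rw [hm1] at hc'
    omega
  · intro c
    have h := hsq c
    split_ifs with h2 h1
    · exact (hm2 c).mp h2
    · exact (hm1 c).mp h1
    · rw [hm2] at h2
      rw [hm1] at h1
      omega
  · have hsupp : d.support = s2 ∪ s1 := by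
      ext c
      rw [Finset.mem_union, hm2, hm1, Finsupp.mem_support_iff]
      have := hsq c
      omega
    have hdisj : Disjoint s2 s1 := by
      rw [Finset.disjoint_left]
      intro c hc hc'
      rw [hm2] at hc
      rw [hm1] at hc'
      omega
    rw [Finsupp.sum, hsupp, Finset.sum_union hdisj,
      Finset.sum_congr rfl (fun c hc => (hm2 c).mp hc),
      Finset.sum_congr rfl (fun c (hc : c ∈ s1) => (hm1 c).mp hc),
      Finset.sum_const, Finset.sum_const, smul_eq_mul, smul_eq_mul, mul_one]
    ring

open Classical in
lemma splits_card_zero (d : ℕ →₀ ℕ) (i j : ℕ)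
    (h : (d.sum fun _ e => e) ≠ j + i ∨ ∃ c0, 3 ≤ d c0) :
    (Finset.filter (fun p : (ℕ →₀ ℕ) × (ℕ →₀ ℕ) =>
        ((p.1.sum fun _ e => e) = j ∧ ∀ c, p.1 c ≤ 1) ∧
        ((p.2.sum fun _ e => e) = i ∧ ∀ c, p.2 c ≤ 1))
      (Finset.HasAntidiagonal.antidiagonal d)).card = 0 := by
  rw [Finset.card_eq_zero, Finset.filter_eq_empty_iff]
  intro p hp
  rw [Finset.HasAntidiagonal.mem_antidiagonal] at hp
  intro hfilt
  rcases h with h | ⟨c0, hc0⟩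
  · exact h (by rw [← hp, tot_add, hfilt.1.1, hfilt.2.1])
  · have h1 := hfilt.1.2 c0
    have h2 := hfilt.2.2 c0
    have h3 : p.1 c0 + p.2 c0 = d c0 := by rw [← hp]; rfl
    omega


/-- For `a ≥ 1` and `0 ≤ b ≤ a`,
`X_{K(ab)} = (a-1)! b! Σ_{i=0}^{b} (a+b-2i) e_{a+b-i} e_i` and
`X_{K(a1b)} = (a-1)! b! ((a-1)(b+1) e_a e_{b+1} + Σ_{i=0}^{b} (a+b+1-2i) e_{a+b+1-i} e_i)`. -/
theorem stmt_14 (a b : ℕ) (ha : 1 ≤ a) (hb : b ≤ a) :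
    (csf (barbellG a 0 b) =
      (((a - 1).factorial * b.factorial : ℕ) : ℚ) •
        ∑ i ∈ Finset.range (b + 1),
          (((a : ℚ) + b) - 2 * i) • (esymm (a + b - i) * esymm i)) ∧
    (csf (barbellG a 1 b) =
      (((a - 1).factorial * b.factorial : ℕ) : ℚ) •
        ((((a : ℚ) - 1) * ((b : ℚ) + 1)) • (esymm a * esymm (b + 1)) +
          ∑ i ∈ Finset.range (b + 1),
            (((a : ℚ) + b + 1) - 2 * i) • (esymm (a + b + 1 - i) * esymm i))) := by
  constructor
  · -- K(ab)
    funext d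
    have hlhs : csf (barbellG a 0 b) d
        = (({κ : Fin (a+0+b) → ℕ | (∀ v w, (barbellG a 0 b).Adj v w → κ v ≠ κ w) ∧
            ∀ i : ℕ, {v | κ v = i}.ncard = d i}).ncard : ℚ) := rfl
    have hrhs : (((((a - 1).factorial * b.factorial : ℕ) : ℚ) •
        ∑ i ∈ Finset.range (b + 1),
          (((a : ℚ) + b) - 2 * i) • (esymm (a + b - i) * esymm i)) : SymF) d
        = (((a - 1).factorial * b.factorial : ℕ) : ℚ) *
          ∑ i ∈ Finset.range (b + 1),
            (((a : ℚ) + b) - 2 * i) * ((esymm (a + b - i) * esymm i) d) := by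
      have hco : ∀ f : SymF, f d = MvPowerSeries.coeff d f := fun _ => rfl
      rw [hco ((((a - 1).factorial * b.factorial : ℕ) : ℚ) •
        ∑ i ∈ Finset.range (b + 1),
          (((a : ℚ) + b) - 2 * i) • (esymm (a + b - i) * esymm i)),
        map_smul, map_sum, smul_eq_mul]
      refine congrArg _ (Finset.sum_congr rfl fun i _ => ?_)
      rw [map_smul, smul_eq_mul, ← hco (esymm (a + b - i) * esymm i)]
    rw [hlhs, hrhs]
    by_cases hsq : ∀ c, d c ≤ 2
    · by_cases htot : (d.sum fun _ e => e) = a + 0 + b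
      · obtain ⟨D2, D1, hD, hd, hcard⟩ := good_decomp d hsq
        rw [htot] at hcard
        rw [count_ab a b ha D2 D1 hD d hd hcard]
        have hterm : ∀ i ∈ Finset.range (b+1),
            (((a : ℚ) + b) - 2 * i) * ((esymm (a + b - i) * esymm i) d)
            = (((a : ℚ) + b) - 2 * i) *
              (if D2.card ≤ i then (D1.card.choose (i - D2.card) : ℚ) else 0) := by
          intro i hi
          rw [Finset.mem_range] at hi
          rw [esymm_mul_apply, splits_card D2 D1 hD d hd i (a + b - i) (by omega)]
          congr 1
          split_ifs <;> simp
        rw [Finset.sum_congr rfl hterm]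
        exact alg1 a b D2.card D1.card ha hb (by omega)
      · have hempty : {κ : Fin (a+0+b) → ℕ | (∀ v w, (barbellG a 0 b).Adj v w → κ v ≠ κ w) ∧
            ∀ i : ℕ, {v | κ v = i}.ncard = d i} = ∅ := by
          ext κ
          simp only [Set.mem_setOf_eq, Set.mem_empty_iff_false, iff_false, not_and]
          intro _ hf
          exact htot (tot_eq_card κ d hf)
        have hterm : ∀ i ∈ Finset.range (b+1),
            (((a : ℚ) + b) - 2 * i) * ((esymm (a + b - i) * esymm i) d) = 0 := by
          intro i hi
          rw [Finset.mem_range] at hi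
          rw [esymm_mul_apply, splits_card_zero d i (a + b - i)
            (Or.inl (by rw [show a + b - i + i = a + 0 + b by omega]; exact htot))]
          simp
        rw [Finset.sum_eq_zero hterm, hempty]
        simp
    · push_neg at hsq
      obtain ⟨c0, hc0⟩ := hsq
      have hempty : {κ : Fin (a+0+b) → ℕ | (∀ v w, (barbellG a 0 b).Adj v w → κ v ≠ κ w) ∧
          ∀ i : ℕ, {v | κ v = i}.ncard = d i} = ∅ := by
        ext κ
        simp only [Set.mem_setOf_eq, Set.mem_empty_iff_false, iff_false, not_and]
        intro hp hf
        have h2 := fiber_le_two (barbellG a 0 b) (fun v => (v:ℕ) < a) (fun v => a - 1 ≤ (v:ℕ))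
          (fun v => by omega)
          (fun v w hv hw hne => by
            rw [show (barbellG a 0 b).Adj v w ↔ _ from SimpleGraph.fromRel_adj _ v w]
            exact ⟨hne, Or.inl (Or.inl ⟨hv, hw⟩)⟩)
          (fun v w hv hw hne => by
            rw [show (barbellG a 0 b).Adj v w ↔ _ from SimpleGraph.fromRel_adj _ v w]
            exact ⟨hne, Or.inl (Or.inr (Or.inr ⟨by omega, by omega⟩))⟩)
          κ hp c0
        rw [hf c0] at h2
        omega
      have hterm : ∀ i ∈ Finset.range (b+1),
          (((a : ℚ) + b) - 2 * i) * ((esymm (a + b - i) * esymm i) d) = 0 := by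
        intro i _
        rw [esymm_mul_apply, splits_card_zero d i (a + b - i) (Or.inr ⟨c0, by omega⟩)]
        simp
      rw [Finset.sum_eq_zero hterm, hempty]
      simp
  · -- K(a1b)
    funext d
    have hlhs : csf (barbellG a 1 b) d
        = (({κ : Fin (a+1+b) → ℕ | (∀ v w, (barbellG a 1 b).Adj v w → κ v ≠ κ w) ∧
            ∀ i : ℕ, {v | κ v = i}.ncard = d i}).ncard : ℚ) := rfl
    have hrhs : (((((a - 1).factorial * b.factorial : ℕ) : ℚ) •
        ((((a : ℚ) - 1) * ((b : ℚ) + 1)) • (esymm a * esymm (b + 1)) +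
          ∑ i ∈ Finset.range (b + 1),
            (((a : ℚ) + b + 1) - 2 * i) • (esymm (a + b + 1 - i) * esymm i))) : SymF) d
        = (((a - 1).factorial * b.factorial : ℕ) : ℚ) *
          ((((a : ℚ) - 1) * ((b : ℚ) + 1)) * ((esymm a * esymm (b + 1)) d) +
            ∑ i ∈ Finset.range (b + 1),
              (((a : ℚ) + b + 1) - 2 * i) * ((esymm (a + b + 1 - i) * esymm i) d)) := by
      have hco : ∀ f : SymF, f d = MvPowerSeries.coeff d f := fun _ => rfl
      rw [hco ((((a - 1).factorial * b.factorial : ℕ) : ℚ) •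
        ((((a : ℚ) - 1) * ((b : ℚ) + 1)) • (esymm a * esymm (b + 1)) +
          ∑ i ∈ Finset.range (b + 1),
            (((a : ℚ) + b + 1) - 2 * i) • (esymm (a + b + 1 - i) * esymm i))),
        map_smul, map_add, map_smul, map_sum, smul_eq_mul, smul_eq_mul]
      rw [← hco (esymm a * esymm (b + 1))]
      refine congrArg _ (congrArg _ (Finset.sum_congr rfl fun i _ => ?_))
      rw [map_smul, smul_eq_mul, ← hco (esymm (a + b + 1 - i) * esymm i)]
    rw [hlhs, hrhs]
    by_cases hsq : ∀ c, d c ≤ 2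
    · by_cases htot : (d.sum fun _ e => e) = a + 1 + b
      · obtain ⟨D2, D1, hD, hd, hcard⟩ := good_decomp d hsq
        rw [htot] at hcard
        rw [count_a1b a b ha D2 D1 hD d hd hcard]
        have hterm : ∀ i ∈ Finset.range (b+1),
            (((a : ℚ) + b + 1) - 2 * i) * ((esymm (a + b + 1 - i) * esymm i) d)
            = (((a : ℚ) + b + 1) - 2 * i) *
              (if D2.card ≤ i then (D1.card.choose (i - D2.card) : ℚ) else 0) := by
          intro i hi
          rw [Finset.mem_range] at hi
          rw [esymm_mul_apply, splits_card D2 D1 hD d hd i (a + b + 1 - i) (by omega)]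
          congr 1
          split_ifs <;> simp
        have hfirst : ((esymm a * esymm (b + 1)) d)
            = (if D2.card ≤ b + 1 then (D1.card.choose (b + 1 - D2.card) : ℚ) else 0) := by
          rw [esymm_mul_apply, splits_card D2 D1 hD d hd (b+1) a (by omega)]
          split_ifs <;> simp
        rw [Finset.sum_congr rfl hterm, hfirst]
        exact alg2 a b D2.card D1.card ha hb (by omega)
      · have hempty : {κ : Fin (a+1+b) → ℕ | (∀ v w, (barbellG a 1 b).Adj v w → κ v ≠ κ w) ∧
            ∀ i : ℕ, {v | κ v = i}.ncard = d i} = ∅ := by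
          ext κ
          simp only [Set.mem_setOf_eq, Set.mem_empty_iff_false, iff_false, not_and]
          intro _ hf
          exact htot (tot_eq_card κ d hf)
        have hterm : ∀ i ∈ Finset.range (b+1),
            (((a : ℚ) + b + 1) - 2 * i) * ((esymm (a + b + 1 - i) * esymm i) d) = 0 := by
          intro i hi
          rw [Finset.mem_range] at hi
          rw [esymm_mul_apply, splits_card_zero d i (a + b + 1 - i)
            (Or.inl (by rw [show a + b + 1 - i + i = a + 1 + b by omega]; exact htot))]
          simp
        have hfirst : ((esymm a * esymm (b + 1)) d) = 0 := by
          rw [esymm_mul_apply, splits_card_zero d (b+1) a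
            (Or.inl (by rw [show a + (b+1) = a + 1 + b by omega]; exact htot))]
          simp
        rw [Finset.sum_eq_zero hterm, hfirst, hempty]
        simp
    · push_neg at hsq
      obtain ⟨c0, hc0⟩ := hsq
      have hempty : {κ : Fin (a+1+b) → ℕ | (∀ v w, (barbellG a 1 b).Adj v w → κ v ≠ κ w) ∧
          ∀ i : ℕ, {v | κ v = i}.ncard = d i} = ∅ := by
        ext κ
        simp only [Set.mem_setOf_eq, Set.mem_empty_iff_false, iff_false, not_and]
        intro hp hf
        have h2 := fiber_le_two (barbellG a 1 b) (fun v => (v:ℕ) < a) (fun v => a ≤ (v:ℕ))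
          (fun v => by omega)
          (fun v w hv hw hne => by
            rw [show (barbellG a 1 b).Adj v w ↔ _ from SimpleGraph.fromRel_adj _ v w]
            exact ⟨hne, Or.inl (Or.inl ⟨hv, hw⟩)⟩)
          (fun v w hv hw hne => by
            rw [show (barbellG a 1 b).Adj v w ↔ _ from SimpleGraph.fromRel_adj _ v w]
            exact ⟨hne, Or.inl (Or.inr (Or.inr ⟨by omega, by omega⟩))⟩)
          κ hp c0
        rw [hf c0] at h2
        omega
      have hterm : ∀ i ∈ Finset.range (b+1),
          (((a : ℚ) + b + 1) - 2 * i) * ((esymm (a + b + 1 - i) * esymm i) d) = 0 := by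
        intro i _
        rw [esymm_mul_apply, splits_card_zero d i (a + b + 1 - i) (Or.inr ⟨c0, by omega⟩)]
        simp
      have hfirst : ((esymm a * esymm (b + 1)) d) = 0 := by
        rw [esymm_mul_apply, splits_card_zero d (b+1) a (Or.inr ⟨c0, by omega⟩)]
        simp
      rw [Finset.sum_eq_zero hterm, hfirst, hempty]
      simp
end

section
/- For integers m ≥ 3 and a, b ≥ 0, the chromatic symmetric function of the hat satisfies the recurrence X_{H_{a,m,b}} = X_{H_{a+1, m−1, b}} + X_{S(a+1, m−2, b)} − X_{P_{a+1}} · X_{T_{m−1, b}}. -/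
open Finset

/-- The tadpole `T_{m,l}`: the cycle `C_m` on vertices `0, …, m-1` (consecutive edges
together with the edge `{0, m-1}`), whose vertex `m-1` is joined by an edge to one end of
the path `m, m+1, …, m+l-1` on `l` vertices. -/
def tadpoleG (m l : ℕ) : SimpleGraph (Fin (m + l)) :=
  SimpleGraph.fromRel (fun i j =>
    (i : ℕ) + 1 = (j : ℕ) ∨ ((i : ℕ) = 0 ∧ (j : ℕ) = m - 1))

/-- The hat `H_{a,m,b}`: the path on vertices `0, 1, …, a+m+b-1` together with the extra
edge joining vertex `a` to vertex `a+m-1` (in 1-indexed terms, the edge `v_{a+1} v_{a+m}`). -/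
def hatG (a m b : ℕ) : SimpleGraph (Fin (a + m + b)) :=
  SimpleGraph.fromRel (fun i j =>
    (i : ℕ) + 1 = (j : ℕ) ∨ ((i : ℕ) = a ∧ (j : ℕ) = a + m - 1))

/-- The spider `S(a, b, c)`: the tree on `a + b + c + 1` vertices obtained by identifying
one endpoint of three paths with `a`, `b` and `c` edges respectively.  The centre is `0`,
and the legs are `1, …, a`, then `a+1, …, a+b`, then `a+b+1, …, a+b+c`. -/
def spiderG (a b c : ℕ) : SimpleGraph (Fin (a + b + c + 1)) :=
  SimpleGraph.fromRel (fun i j =>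
    ((i : ℕ) + 1 = (j : ℕ) ∧ (j : ℕ) ≠ a + 1 ∧ (j : ℕ) ≠ a + b + 1) ∨
    ((i : ℕ) = 0 ∧ ((j : ℕ) = a + 1 ∨ (j : ℕ) = a + b + 1)))


section infra

variable {V W : Type} [Fintype V] [Fintype W]

noncomputable def fibF (κ : V → ℕ) : ℕ →₀ ℕ := ∑ v : V, Finsupp.single (κ v) 1

noncomputable def pc (P : (V → ℕ) → Prop) : SymF :=
  fun d => (({κ : V → ℕ | P κ ∧ fibF κ = d}).ncard : ℚ)

lemma fibF_apply (κ : V → ℕ) (i : ℕ) : fibF κ i = {v | κ v = i}.ncard := by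
  classical
  rw [fibF, Finsupp.finset_sum_apply, Set.ncard_eq_toFinset_card', Set.toFinset_setOf,
    Finset.card_filter]
  congr 1; ext v
  simp [Finsupp.single_apply, eq_comm]

lemma fibF_ne_zero (κ : V → ℕ) (v : V) : fibF κ (κ v) ≠ 0 := by
  rw [fibF_apply]
  have h : v ∈ {w | κ w = κ v} := rfl
  have hfin : {w | κ w = κ v}.Finite := Set.toFinite _
  intro h0
  exact (Set.eq_empty_iff_forall_notMem.mp ((Set.ncard_eq_zero hfin).mp h0)) v h

lemma fibF_finite (d : ℕ →₀ ℕ) : {κ : V → ℕ | fibF κ = d}.Finite := by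
  apply Set.Finite.subset (Set.Finite.pi (fun _ : V => (d.support : Set ℕ).toFinite))
  intro κ hκ
  intro v _
  have := fibF_ne_zero κ v
  rw [hκ] at this
  simpa using this

lemma pcFinite (P : (V → ℕ) → Prop) (d : ℕ →₀ ℕ) : {κ : V → ℕ | P κ ∧ fibF κ = d}.Finite :=
  (fibF_finite d).subset (fun κ h => h.2)

lemma csf_eq_pc (G : SimpleGraph V) :
    csf G = pc (fun κ => ∀ v w, G.Adj v w → κ v ≠ κ w) := by
  funext d
  unfold csf pc
  congr 2
  ext κ
  simp only [Set.mem_setOf_eq, and_congr_right_iff]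
  intro _
  rw [Finsupp.ext_iff]
  exact forall_congr' fun i => by rw [fibF_apply]

lemma pc_congr {P Q : (V → ℕ) → Prop} (h : ∀ κ, P κ ↔ Q κ) : pc P = pc Q := by
  have hs : ∀ d, {κ : V → ℕ | P κ ∧ fibF κ = d} = {κ | Q κ ∧ fibF κ = d} := fun d => by
    ext κ; simp [h κ]
  funext d; unfold pc; rw [hs d]

lemma pc_add {P Q : (V → ℕ) → Prop} (h : ∀ κ, ¬ (P κ ∧ Q κ)) :
    pc (fun κ => P κ ∨ Q κ) = pc P + pc Q := by
  funext d
  show _ = pc P d + pc Q d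
  unfold pc
  rw [← Nat.cast_add]
  congr 1
  have : {κ : V → ℕ | (P κ ∨ Q κ) ∧ fibF κ = d}
      = {κ | P κ ∧ fibF κ = d} ∪ {κ | Q κ ∧ fibF κ = d} := by
    ext κ; simp only [Set.mem_setOf_eq, Set.mem_union]; tauto
  rw [this, Set.ncard_union_eq _ (pcFinite P d) (pcFinite Q d)]
  rw [Set.disjoint_left]
  rintro κ ⟨hP, _⟩ ⟨hQ, _⟩
  exact h κ ⟨hP, hQ⟩

lemma fibF_comp_equiv (e : W ≃ V) (κ : V → ℕ) : fibF (κ ∘ e) = fibF κ :=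
  Equiv.sum_comp e (fun v => Finsupp.single (κ v) 1)

lemma pc_comp (e : W ≃ V) (P : (W → ℕ) → Prop) :
    pc (fun κ : V → ℕ => P (κ ∘ e)) = pc P := by
  funext d
  unfold pc
  congr 1
  have himg : {κ : V → ℕ | P (κ ∘ e) ∧ fibF κ = d}
      = (fun lam : W → ℕ => lam ∘ e.symm) '' {lam | P lam ∧ fibF lam = d} := by
    ext κ
    simp only [Set.mem_setOf_eq, Set.mem_image]
    constructor
    · intro h
      exact ⟨κ ∘ e, by simpa [fibF_comp_equiv] using h, by ext v; simp⟩
    · rintro ⟨lam, ⟨h1, h2⟩, rfl⟩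
      constructor
      · have : (lam ∘ e.symm) ∘ e = lam := by ext w; simp
        rwa [this]
      · rw [fibF_comp_equiv e.symm lam]; exact h2
  rw [himg, Set.ncard_image_of_injective _ (fun f g hfg => by
    ext w
    have := congrFun hfg (e.symm.symm w)
    simpa using this)]
end infra

section more
variable {V W : Type} [Fintype V] [Fintype W]

lemma ncard_biUnion {α β : Type*} (s : Finset α) (f : α → Set β)
    (hf : ∀ a ∈ s, (f a).Finite)
    (hd : ∀ a ∈ s, ∀ b ∈ s, a ≠ b → Disjoint (f a) (f b)) :
    (⋃ a ∈ s, f a).ncard = ∑ a ∈ s, (f a).ncard := by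
  classical
  induction s using Finset.induction with
  | empty => simp
  | @insert a s ha ih =>
    rw [Finset.sum_insert ha]
    have hrw : (⋃ x ∈ insert a s, f x) = f a ∪ ⋃ x ∈ s, f x := by
      simp [Set.biUnion_insert]
    have hfin : (⋃ x ∈ s, f x).Finite := by
      apply Set.Finite.biUnion s.finite_toSet
      exact fun x hx => hf x (Finset.mem_insert_of_mem hx)
    have hdisj : Disjoint (f a) (⋃ x ∈ s, f x) := by
      apply Set.disjoint_iUnion_right.mpr
      intro x
      apply Set.disjoint_iUnion_right.mpr
      intro hx
      exact hd a (Finset.mem_insert_self a s) x (Finset.mem_insert_of_mem hx)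
        (fun h => ha (h ▸ hx))
    rw [hrw, Set.ncard_union_eq hdisj (hf a (Finset.mem_insert_self a s)) hfin]
    rw [ih (fun x hx => hf x (Finset.mem_insert_of_mem hx))
        (fun x hx y hy => hd x (Finset.mem_insert_of_mem hx) y (Finset.mem_insert_of_mem hy))]

lemma ncard_sprod {α β : Type*} (A : Set α) (B : Set β) :
    (A ×ˢ B).ncard = A.ncard * B.ncard := by
  rw [← Nat.card_coe_set_eq, ← Nat.card_coe_set_eq, ← Nat.card_coe_set_eq,
    Nat.card_congr (Equiv.Set.prod A B), Nat.card_prod]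

lemma fibF_sum (κ : V ⊕ W → ℕ) :
    fibF κ = fibF (κ ∘ Sum.inl) + fibF (κ ∘ Sum.inr) := by
  unfold fibF
  rw [Fintype.sum_sum_type]
  rfl

lemma pc_mul (P : (V → ℕ) → Prop) (Q : (W → ℕ) → Prop) :
    pc (fun κ : V ⊕ W → ℕ => P (κ ∘ Sum.inl) ∧ Q (κ ∘ Sum.inr)) = pc P * pc Q := by
  classical
  funext d
  have hco : (pc P * pc Q) d = ∑ p ∈ antidiagonal d, pc P p.1 * pc Q p.2 :=
    MvPowerSeries.coeff_mul d _ _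
  have main : {κ : V ⊕ W → ℕ | (P (κ ∘ Sum.inl) ∧ Q (κ ∘ Sum.inr)) ∧ fibF κ = d}.ncard
      = ∑ p ∈ antidiagonal d,
          {κ1 : V → ℕ | P κ1 ∧ fibF κ1 = p.1}.ncard * {κ2 : W → ℕ | Q κ2 ∧ fibF κ2 = p.2}.ncard := by
    set τ := Equiv.sumArrowEquivProdArrow V W ℕ with hτ
    have hset : {κ : V ⊕ W → ℕ | (P (κ ∘ Sum.inl) ∧ Q (κ ∘ Sum.inr)) ∧ fibF κ = d}
        = τ.symm '' {q : (V → ℕ) × (W → ℕ) | (P q.1 ∧ Q q.2) ∧ fibF q.1 + fibF q.2 = d} := by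
      rw [Equiv.image_eq_preimage_symm, Equiv.symm_symm]
      ext κ
      simp only [Set.mem_setOf_eq, Set.mem_preimage, hτ, Equiv.sumArrowEquivProdArrow,
        Equiv.coe_fn_mk]
      rw [fibF_sum κ]
    rw [hset, Set.ncard_image_of_injective _ τ.symm.injective]
    have hT : {q : (V → ℕ) × (W → ℕ) | (P q.1 ∧ Q q.2) ∧ fibF q.1 + fibF q.2 = d}
        = ⋃ p ∈ antidiagonal d,
            ({κ1 | P κ1 ∧ fibF κ1 = p.1} ×ˢ {κ2 | Q κ2 ∧ fibF κ2 = p.2}) := by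
      ext q
      simp only [Set.mem_setOf_eq, Set.mem_iUnion, Set.mem_prod, Finset.mem_antidiagonal]
      constructor
      · rintro ⟨⟨h1, h2⟩, h3⟩
        exact ⟨(fibF q.1, fibF q.2), Finset.HasAntidiagonal.mem_antidiagonal.mpr h3, ⟨h1, rfl⟩, ⟨h2, rfl⟩⟩
      · rintro ⟨p, hp, ⟨h1, e1⟩, ⟨h2, e2⟩⟩
        exact ⟨⟨h1, h2⟩, by rw [e1, e2, Finset.HasAntidiagonal.mem_antidiagonal.mp hp]⟩
    rw [hT, ncard_biUnion]
    · exact Finset.sum_congr rfl (fun p _ => ncard_sprod _ _)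
    · exact fun p _ => Set.Finite.prod (pcFinite P p.1) (pcFinite Q p.2)
    · intro p _ q _ hpq
      rw [Set.disjoint_left]
      rintro x ⟨⟨_, e1⟩, ⟨_, e2⟩⟩ ⟨⟨_, e3⟩, ⟨_, e4⟩⟩
      exact hpq (Prod.ext (e1 ▸ e3.symm ▸ rfl) (e2 ▸ e4.symm ▸ rfl))
  show pc _ d = (pc P * pc Q) d
  rw [hco]
  unfold pc
  rw [main, Nat.cast_sum]
  exact Finset.sum_congr rfl fun p _ => by push_cast; ring

lemma key (R : (V → ℕ) → Prop) (F G H : (V → ℕ) → ℕ) :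
    pc (fun κ => R κ ∧ F κ ≠ G κ ∧ F κ ≠ H κ) + pc (fun κ => R κ ∧ G κ ≠ H κ)
      = pc (fun κ => R κ ∧ F κ ≠ G κ ∧ G κ ≠ H κ) + pc (fun κ => R κ ∧ F κ ≠ H κ) := by
  have h1 : pc (fun κ => R κ ∧ F κ ≠ H κ)
      = pc (fun κ => R κ ∧ F κ ≠ G κ ∧ F κ ≠ H κ)
        + pc (fun κ => R κ ∧ F κ = G κ ∧ F κ ≠ H κ) := by
    rw [← pc_add (by intro κ; tauto)]
    apply pc_congr; intro κ; by_cases hfg : F κ = G κ <;> tauto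
  have h2 : pc (fun κ => R κ ∧ G κ ≠ H κ)
      = pc (fun κ => R κ ∧ F κ ≠ G κ ∧ G κ ≠ H κ)
        + pc (fun κ => R κ ∧ F κ = G κ ∧ G κ ≠ H κ) := by
    rw [← pc_add (by intro κ; tauto)]
    apply pc_congr; intro κ; by_cases hfg : F κ = G κ <;> tauto
  have h3 : pc (fun κ => R κ ∧ F κ = G κ ∧ F κ ≠ H κ)
      = pc (fun κ => R κ ∧ F κ = G κ ∧ G κ ≠ H κ) := by
    apply pc_congr; intro κ
    constructor <;> rintro ⟨hR, he, hne⟩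
    · exact ⟨hR, he, by rw [← he]; exact hne⟩
    · exact ⟨hR, he, by rw [he]; exact hne⟩
  rw [h1, h2, h3]
  ring
end more

def extD {N : ℕ} (κ : Fin N → ℕ) (t : ℕ) : ℕ := if h : t < N then κ ⟨t, h⟩ else 0

lemma extD_lt {N : ℕ} (κ : Fin N → ℕ) {t : ℕ} (h : t < N) : extD κ t = κ ⟨t, h⟩ := dif_pos h

lemma prop_iff {N : ℕ} (r : Fin N → Fin N → Prop) (f : ℕ → ℕ → Prop)
    (hrf : ∀ i j : Fin N, r i j ↔ f i.1 j.1)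
    (hirr : ∀ s t, f s t → s ≠ t) (κ : Fin N → ℕ) :
    (∀ x y, (SimpleGraph.fromRel r).Adj x y → κ x ≠ κ y) ↔
    (∀ s t, s < N → t < N → f s t → extD κ s ≠ extD κ t) := by
  constructor
  · intro h s t hs ht hf
    rw [extD_lt κ hs, extD_lt κ ht]
    apply h
    rw [SimpleGraph.fromRel_adj]
    exact ⟨Fin.ne_of_val_ne (hirr _ _ hf), Or.inl ((hrf _ _).mpr hf)⟩
  · intro h x y hxy
    rw [SimpleGraph.fromRel_adj] at hxy
    obtain ⟨hne, hr | hr⟩ := hxy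
    · have := h x.1 y.1 x.2 y.2 ((hrf x y).mp hr)
      rwa [extD_lt κ x.2, extD_lt κ y.2, Fin.eta, Fin.eta] at this
    · have := h y.1 x.1 y.2 x.2 ((hrf y x).mp hr)
      rw [extD_lt κ y.2, extD_lt κ x.2, Fin.eta, Fin.eta] at this
      exact this.symm

lemma forall_ne_congr {N' : ℕ} (f : ℕ → ℕ → Prop) (u v : ℕ → ℕ)
    (h : ∀ s, s < N' → u s = v s) :
    (∀ s t, s < N' → t < N' → f s t → u s ≠ u t) ↔
    (∀ s t, s < N' → t < N' → f s t → v s ≠ v t) := by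
  constructor <;> intro H s t hs ht hf
  · rw [← h s hs, ← h t ht]; exact H s t hs ht hf
  · rw [h s hs, h t ht]; exact H s t hs ht hf

def Rp (a : ℕ) {N : ℕ} (κ : Fin N → ℕ) : Prop :=
  ∀ s, s + 1 < N → s ≠ a → extD κ s ≠ extD κ (s + 1)

lemma hat_pc (a m b : ℕ) (hm : 3 ≤ m) :
    csf (hatG a m b) = pc (fun κ : Fin (a + m + b) → ℕ =>
      Rp a κ ∧ extD κ a ≠ extD κ (a + 1) ∧ extD κ a ≠ extD κ (a + m - 1)) := by
  rw [csf_eq_pc]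
  apply pc_congr
  intro κ
  refine Iff.trans (prop_iff _ (fun s t => s + 1 = t ∨ (s = a ∧ t = a + m - 1))
    (fun i j => Iff.rfl) (fun s t hf => by omega) κ) ?_
  constructor
  · intro h
    exact ⟨fun s hs _ => h s (s + 1) (by omega) hs (Or.inl rfl),
      h a (a + 1) (by omega) (by omega) (Or.inl rfl),
      h a (a + m - 1) (by omega) (by omega) (Or.inr ⟨rfl, rfl⟩)⟩
  · rintro ⟨hR, huv, huw⟩ s t hs ht hf
    rcases hf with h1 | ⟨rfl, rfl⟩
    · subst h1
      rcases eq_or_ne s a with rfl | hne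
      · exact huv
      · exact hR s ht hne
    · exact huw

lemma extD_congr {N M : ℕ} (h : N = M) (κ : Fin M → ℕ) :
    ∀ s, extD (κ ∘ finCongr h) s = extD κ s := by
  subst h
  intro s
  unfold extD
  split_ifs with hs
  · rfl
  · rfl

lemma hat'_pc (a m b : ℕ) (hm : 3 ≤ m) :
    csf (hatG (a + 1) (m - 1) b) = pc (fun κ : Fin (a + m + b) → ℕ =>
      Rp a κ ∧ extD κ a ≠ extD κ (a + 1) ∧ extD κ (a + 1) ≠ extD κ (a + m - 1)) := by
  have hEq : (a + 1) + (m - 1) + b = a + m + b := by omega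
  rw [csf_eq_pc, ← pc_comp (finCongr hEq)]
  apply pc_congr
  intro κ
  refine Iff.trans (prop_iff _
      (fun s t => s + 1 = t ∨ (s = a + 1 ∧ t = (a + 1) + (m - 1) - 1))
      (fun i j => Iff.rfl) (fun s t hf => by omega) (κ ∘ finCongr hEq)) ?_
  refine Iff.trans (forall_ne_congr _ _ (extD κ) (fun s _ => extD_congr hEq κ s)) ?_
  constructor
  · intro h
    refine ⟨fun s hs _ => h s (s + 1) (by omega) (by omega) (Or.inl rfl),
      h a (a + 1) (by omega) (by omega) (Or.inl rfl), ?_⟩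
    have := h (a + 1) ((a + 1) + (m - 1) - 1) (by omega) (by omega) (Or.inr ⟨rfl, rfl⟩)
    rwa [show (a + 1) + (m - 1) - 1 = a + m - 1 by omega] at this
  · rintro ⟨hR, huv, hvw⟩ s t hs ht hf
    rcases hf with h1 | ⟨rfl, rfl⟩
    · subst h1
      rcases eq_or_ne s a with rfl | hne
      · exact huv
      · exact hR s (by omega) hne
    · rw [show (a + 1) + (m - 1) - 1 = a + m - 1 by omega]
      exact hvw

lemma pt_pc (a m b : ℕ) (hm : 3 ≤ m) :
    csf (pathG (a + 1)) * csf (tadpoleG (m - 1) b) = pc (fun κ : Fin (a + m + b) → ℕ =>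
      Rp a κ ∧ extD κ (a + 1) ≠ extD κ (a + m - 1)) := by
  have hEq : (a + 1) + ((m - 1) + b) = a + m + b := by omega
  set E : (Fin (a + 1) ⊕ Fin ((m - 1) + b)) ≃ Fin (a + m + b) :=
    finSumFinEquiv.trans (finCongr hEq) with hE
  rw [csf_eq_pc, csf_eq_pc, ← pc_mul, ← pc_comp E]
  apply pc_congr
  intro κ
  have hinl : ∀ s, s < a + 1 → extD ((κ ∘ E) ∘ Sum.inl) s = extD κ s := by
    intro s hs
    rw [extD_lt _ hs, extD_lt κ (show s < a + m + b by omega)]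
    rfl
  have hinr : ∀ t, t < (m - 1) + b →
      extD ((κ ∘ E) ∘ Sum.inr) t = extD κ (a + 1 + t) := by
    intro t ht
    rw [extD_lt _ ht, extD_lt κ (show a + 1 + t < a + m + b by omega)]
    rfl
  refine Iff.trans (and_congr
    (Iff.trans (prop_iff _ (fun s t => s + 1 = t) (fun i j => Iff.rfl)
      (fun s t hf => by omega) ((κ ∘ E) ∘ Sum.inl))
      (forall_ne_congr _ _ (extD κ) hinl))
    (Iff.trans (prop_iff _ (fun s t => s + 1 = t ∨ (s = 0 ∧ t = (m - 1) - 1))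
      (fun i j => Iff.rfl) (fun s t hf => by omega) ((κ ∘ E) ∘ Sum.inr))
      (forall_ne_congr _ _ (fun t => extD κ (a + 1 + t)) hinr))) ?_
  constructor
  · rintro ⟨hP, hT⟩
    constructor
    · intro s hs hne
      rcases Nat.lt_or_ge s a with h1 | h1
      · exact hP s (s + 1) (by omega) (by omega) rfl
      · have h2 : a < s := by omega
        have h3 : extD κ (a + 1 + (s - a - 1)) ≠ extD κ (a + 1 + (s - a)) :=
          hT (s - a - 1) (s - a) (by omega) (by omega) (Or.inl (by omega))
        rwa [show a + 1 + (s - a - 1) = s by omega, show a + 1 + (s - a) = s + 1 by omega] at h3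
    · have h3 : extD κ (a + 1 + 0) ≠ extD κ (a + 1 + ((m - 1) - 1)) :=
        hT 0 ((m - 1) - 1) (by omega) (by omega) (Or.inr ⟨rfl, rfl⟩)
      rwa [show a + 1 + 0 = a + 1 by omega, show a + 1 + ((m - 1) - 1) = a + m - 1 by omega] at h3
  · rintro ⟨hR, hvw⟩
    constructor
    · intro s t hs ht h1
      subst h1
      exact hR s (by omega) (by omega)
    · intro s t hs ht hf
      rcases hf with h1 | ⟨rfl, rfl⟩
      · subst h1
        have := hR (a + 1 + s) (by omega) (by omega)
        rwa [show a + 1 + s + 1 = a + 1 + (s + 1) by omega] at this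
      · show extD κ (a + 1 + 0) ≠ extD κ (a + 1 + ((m - 1) - 1))
        rwa [show a + 1 + 0 = a + 1 by omega, show a + 1 + ((m - 1) - 1) = a + m - 1 by omega]

def phiv (a m : ℕ) : ℕ → ℕ := fun j =>
  if j = 0 then a + m - 1 else if j ≤ a + 1 then a + 1 - j
  else if j ≤ a + m - 1 then 2 * a + m - j else j

def psiv (a m : ℕ) : ℕ → ℕ := fun t =>
  if t = a + m - 1 then 0 else if t ≤ a then a + 1 - t
  else if t ≤ a + m - 2 then 2 * a + m - t else t

def phiE (a m b : ℕ) (hm : 3 ≤ m) : Fin ((a + 1) + (m - 2) + b + 1) ≃ Fin (a + m + b) where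
  toFun i := ⟨phiv a m i.1, by
    have := i.2; unfold phiv; split_ifs <;> omega⟩
  invFun t := ⟨psiv a m t.1, by
    have := t.2; unfold psiv; split_ifs <;> omega⟩
  left_inv i := by
    have := i.2
    apply Fin.ext
    simp only [phiv, psiv]
    split_ifs <;> omega
  right_inv t := by
    have := t.2
    apply Fin.ext
    simp only [phiv, psiv]
    split_ifs <;> omega


lemma phiv0 (a m : ℕ) : phiv a m 0 = a + m - 1 := if_pos rfl

lemma phiv1 {a m j : ℕ} (h0 : ¬ j = 0) (h1 : j ≤ a + 1) : phiv a m j = a + 1 - j := by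
  unfold phiv; rw [if_neg h0, if_pos h1]

lemma phiv2 {a m j : ℕ} (h0 : ¬ j = 0) (h1 : ¬ j ≤ a + 1) (h2 : j ≤ a + m - 1) :
    phiv a m j = 2 * a + m - j := by
  unfold phiv; rw [if_neg h0, if_neg h1, if_pos h2]

lemma phiv3 {a m j : ℕ} (h0 : ¬ j = 0) (h1 : ¬ j ≤ a + 1) (h2 : ¬ j ≤ a + m - 1) :
    phiv a m j = j := by
  unfold phiv; rw [if_neg h0, if_neg h1, if_neg h2]

lemma phiv_lt (a m b : ℕ) (hm : 3 ≤ m) {j : ℕ} (hj : j < (a + 1) + (m - 2) + b + 1) :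
    phiv a m j < a + m + b := by
  unfold phiv; split_ifs <;> omega

lemma spider_pc (a m b : ℕ) (hm : 3 ≤ m) :
    csf (spiderG (a + 1) (m - 2) b) = pc (fun κ : Fin (a + m + b) → ℕ =>
      Rp a κ ∧ extD κ a ≠ extD κ (a + m - 1)) := by
  rw [csf_eq_pc, ← pc_comp (phiE a m b hm)]
  apply pc_congr
  intro κ
  have hcomp : ∀ s, s < (a + 1) + (m - 2) + b + 1 →
      extD (κ ∘ (phiE a m b hm)) s = extD κ (phiv a m s) := by
    intro s hs
    rw [extD_lt _ hs, extD_lt κ (phiv_lt a m b hm hs)]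
    rfl
  refine Iff.trans (prop_iff _
      (fun s t => (s + 1 = t ∧ t ≠ (a + 1) + 1 ∧ t ≠ (a + 1) + (m - 2) + 1)
        ∨ (s = 0 ∧ (t = (a + 1) + 1 ∨ t = (a + 1) + (m - 2) + 1)))
      (fun i j => Iff.rfl) (fun s t hf => by omega) (κ ∘ (phiE a m b hm))) ?_
  refine Iff.trans (forall_ne_congr _ _ (fun s => extD κ (phiv a m s)) hcomp) ?_
  have hv : ∀ x y : ℕ, phiv a m x = y →
      ∀ s t (_ : phiv a m s = x) (_ : phiv a m t = y), True := fun _ _ _ _ _ _ _ => trivial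
  constructor
  · intro h
    constructor
    · intro s hs hne
      rcases Nat.lt_or_ge s a with h1 | h1
      · -- s < a : use spider edge (a-s, a-s+1)
        have e1 : phiv a m (a - s) = s + 1 := by (first | exact phiv0 a m | rw [phiv1 (by omega) (by omega)] | rw [phiv2 (by omega) (by omega) (by omega)] | rw [phiv3 (by omega) (by omega) (by omega)]) <;> omega
        have e2 : phiv a m (a - s + 1) = s := by (first | exact phiv0 a m | rw [phiv1 (by omega) (by omega)] | rw [phiv2 (by omega) (by omega) (by omega)] | rw [phiv3 (by omega) (by omega) (by omega)]) <;> omega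
        have h3 : extD κ (phiv a m (a - s)) ≠ extD κ (phiv a m (a - s + 1)) :=
          h (a - s) (a - s + 1) (by omega) (by omega) (Or.inl ⟨rfl, by omega, by omega⟩)
        rw [e1, e2] at h3
        exact h3.symm
      rcases Nat.lt_or_ge s (a + m - 2) with h2 | h2
      · -- a ≤ s < a+m-2, s ≠ a so a < s : edge (2a+m-s-1, 2a+m-s)
        have ha : a < s := by omega
        have e1 : phiv a m (2 * a + m - s - 1) = s + 1 := by
          (first | exact phiv0 a m | rw [phiv1 (by omega) (by omega)] | rw [phiv2 (by omega) (by omega) (by omega)] | rw [phiv3 (by omega) (by omega) (by omega)]) <;> omega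
        have e2 : phiv a m (2 * a + m - s) = s := by
          (first | exact phiv0 a m | rw [phiv1 (by omega) (by omega)] | rw [phiv2 (by omega) (by omega) (by omega)] | rw [phiv3 (by omega) (by omega) (by omega)]) <;> omega
        have h3 : extD κ (phiv a m (2 * a + m - s - 1)) ≠ extD κ (phiv a m (2 * a + m - s)) :=
          h (2 * a + m - s - 1) (2 * a + m - s) (by omega) (by omega)
            (Or.inl ⟨by omega, by omega, by omega⟩)
        rw [e1, e2] at h3
        exact h3.symm
      rcases Nat.lt_or_ge s (a + m - 1) with h3 | h3
      · -- s = a+m-2 : spider edge (0, a+2)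
        have hs' : s = a + m - 2 := by omega
        have e1 : phiv a m 0 = a + m - 1 := by (first | exact phiv0 a m | rw [phiv1 (by omega) (by omega)] | rw [phiv2 (by omega) (by omega) (by omega)] | rw [phiv3 (by omega) (by omega) (by omega)]) <;> omega
        have e2 : phiv a m ((a + 1) + 1) = a + m - 2 := by (first | exact phiv0 a m | rw [phiv1 (by omega) (by omega)] | rw [phiv2 (by omega) (by omega) (by omega)] | rw [phiv3 (by omega) (by omega) (by omega)]) <;> omega
        have h4 : extD κ (phiv a m 0) ≠ extD κ (phiv a m ((a + 1) + 1)) :=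
          h 0 ((a + 1) + 1) (by omega) (by omega) (Or.inr ⟨rfl, Or.inl rfl⟩)
        rw [e1, e2] at h4
        rw [hs', show a + m - 2 + 1 = a + m - 1 by omega]
        exact h4.symm
      rcases Nat.lt_or_ge s (a + m) with h4 | h4
      · -- s = a+m-1 : spider edge (0, a+m)
        have hs' : s = a + m - 1 := by omega
        have e1 : phiv a m 0 = a + m - 1 := by (first | exact phiv0 a m | rw [phiv1 (by omega) (by omega)] | rw [phiv2 (by omega) (by omega) (by omega)] | rw [phiv3 (by omega) (by omega) (by omega)]) <;> omega
        have e2 : phiv a m ((a + 1) + (m - 2) + 1) = a + m := by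
          (first | exact phiv0 a m | rw [phiv1 (by omega) (by omega)] | rw [phiv2 (by omega) (by omega) (by omega)] | rw [phiv3 (by omega) (by omega) (by omega)]) <;> omega
        have h5 : extD κ (phiv a m 0) ≠ extD κ (phiv a m ((a + 1) + (m - 2) + 1)) :=
          h 0 ((a + 1) + (m - 2) + 1) (by omega) (by omega) (Or.inr ⟨rfl, Or.inr rfl⟩)
        rw [e1, e2] at h5
        rw [hs', show a + m - 1 + 1 = a + m by omega]
        exact h5
      · -- s ≥ a+m : identity
        have e1 : phiv a m s = s := by (first | exact phiv0 a m | rw [phiv1 (by omega) (by omega)] | rw [phiv2 (by omega) (by omega) (by omega)] | rw [phiv3 (by omega) (by omega) (by omega)]) <;> omega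
        have e2 : phiv a m (s + 1) = s + 1 := by (first | exact phiv0 a m | rw [phiv1 (by omega) (by omega)] | rw [phiv2 (by omega) (by omega) (by omega)] | rw [phiv3 (by omega) (by omega) (by omega)]) <;> omega
        have h5 : extD κ (phiv a m s) ≠ extD κ (phiv a m (s + 1)) :=
          h s (s + 1) (by omega) (by omega) (Or.inl ⟨rfl, by omega, by omega⟩)
        rwa [e1, e2] at h5
    · -- chord : spider edge (0,1)
      have e1 : phiv a m 0 = a + m - 1 := by (first | exact phiv0 a m | rw [phiv1 (by omega) (by omega)] | rw [phiv2 (by omega) (by omega) (by omega)] | rw [phiv3 (by omega) (by omega) (by omega)]) <;> omega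
      have e2 : phiv a m 1 = a := by (first | exact phiv0 a m | rw [phiv1 (by omega) (by omega)] | rw [phiv2 (by omega) (by omega) (by omega)] | rw [phiv3 (by omega) (by omega) (by omega)]) <;> omega
      have h3 : extD κ (phiv a m 0) ≠ extD κ (phiv a m 1) :=
        h 0 1 (by omega) (by omega) (Or.inl ⟨rfl, by omega, by omega⟩)
      rw [e1, e2] at h3
      exact h3.symm
  · rintro ⟨hR, hc⟩ s t hs ht hf
    rcases hf with ⟨h1, h2, h3⟩ | ⟨rfl, h2⟩
    · subst h1
      rcases Nat.eq_zero_or_pos s with rfl | hpos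
      · -- edge (0,1) ↦ chord
        have e1 : phiv a m 0 = a + m - 1 := by (first | exact phiv0 a m | rw [phiv1 (by omega) (by omega)] | rw [phiv2 (by omega) (by omega) (by omega)] | rw [phiv3 (by omega) (by omega) (by omega)]) <;> omega
        have e2 : phiv a m 1 = a := by (first | exact phiv0 a m | rw [phiv1 (by omega) (by omega)] | rw [phiv2 (by omega) (by omega) (by omega)] | rw [phiv3 (by omega) (by omega) (by omega)]) <;> omega
        show extD κ (phiv a m 0) ≠ extD κ (phiv a m 1)
        rw [e1, e2]
        exact hc.symm
      rcases Nat.lt_or_ge s (a + 1) with h4 | h4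
      · -- 1 ≤ s ≤ a
        have e1 : phiv a m s = a + 1 - s := by (first | exact phiv0 a m | rw [phiv1 (by omega) (by omega)] | rw [phiv2 (by omega) (by omega) (by omega)] | rw [phiv3 (by omega) (by omega) (by omega)]) <;> omega
        have e2 : phiv a m (s + 1) = a - s := by (first | exact phiv0 a m | rw [phiv1 (by omega) (by omega)] | rw [phiv2 (by omega) (by omega) (by omega)] | rw [phiv3 (by omega) (by omega) (by omega)]) <;> omega
        show extD κ (phiv a m s) ≠ extD κ (phiv a m (s + 1))
        rw [e1, e2]
        have h5 := hR (a - s) (by omega) (by omega)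
        rw [show a - s + 1 = a + 1 - s by omega] at h5
        exact h5.symm
      rcases Nat.lt_or_ge s (a + m - 1) with h5 | h5
      · -- a+2 ≤ s ≤ a+m-2 (s = a+1 excluded by h2)
        have ha2 : a + 2 ≤ s := by omega
        have e1 : phiv a m s = 2 * a + m - s := by (first | exact phiv0 a m | rw [phiv1 (by omega) (by omega)] | rw [phiv2 (by omega) (by omega) (by omega)] | rw [phiv3 (by omega) (by omega) (by omega)]) <;> omega
        have e2 : phiv a m (s + 1) = 2 * a + m - s - 1 := by
          (first | exact phiv0 a m | rw [phiv1 (by omega) (by omega)] | rw [phiv2 (by omega) (by omega) (by omega)] | rw [phiv3 (by omega) (by omega) (by omega)]) <;> omega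
        show extD κ (phiv a m s) ≠ extD κ (phiv a m (s + 1))
        rw [e1, e2]
        have h6 := hR (2 * a + m - s - 1) (by omega) (by omega)
        rw [show 2 * a + m - s - 1 + 1 = 2 * a + m - s by omega] at h6
        exact h6.symm
      · -- s ≥ a+m-1 ; s = a+m-1 excluded by h3, so s ≥ a+m
        have ha3 : a + m ≤ s := by omega
        have e1 : phiv a m s = s := by (first | exact phiv0 a m | rw [phiv1 (by omega) (by omega)] | rw [phiv2 (by omega) (by omega) (by omega)] | rw [phiv3 (by omega) (by omega) (by omega)]) <;> omega
        have e2 : phiv a m (s + 1) = s + 1 := by (first | exact phiv0 a m | rw [phiv1 (by omega) (by omega)] | rw [phiv2 (by omega) (by omega) (by omega)] | rw [phiv3 (by omega) (by omega) (by omega)]) <;> omega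
        show extD κ (phiv a m s) ≠ extD κ (phiv a m (s + 1))
        rw [e1, e2]
        exact hR s (by omega) (by omega)
    · rcases h2 with rfl | rfl
      · -- edge (0, a+2)
        have e1 : phiv a m 0 = a + m - 1 := by (first | exact phiv0 a m | rw [phiv1 (by omega) (by omega)] | rw [phiv2 (by omega) (by omega) (by omega)] | rw [phiv3 (by omega) (by omega) (by omega)]) <;> omega
        have e2 : phiv a m ((a + 1) + 1) = a + m - 2 := by (first | exact phiv0 a m | rw [phiv1 (by omega) (by omega)] | rw [phiv2 (by omega) (by omega) (by omega)] | rw [phiv3 (by omega) (by omega) (by omega)]) <;> omega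
        show extD κ (phiv a m 0) ≠ extD κ (phiv a m ((a + 1) + 1))
        rw [e1, e2]
        have h5 := hR (a + m - 2) (by omega) (by omega)
        rw [show a + m - 2 + 1 = a + m - 1 by omega] at h5
        exact h5.symm
      · -- edge (0, a+m)
        have e1 : phiv a m 0 = a + m - 1 := by (first | exact phiv0 a m | rw [phiv1 (by omega) (by omega)] | rw [phiv2 (by omega) (by omega) (by omega)] | rw [phiv3 (by omega) (by omega) (by omega)]) <;> omega
        have e2 : phiv a m ((a + 1) + (m - 2) + 1) = a + m := by
          (first | exact phiv0 a m | rw [phiv1 (by omega) (by omega)] | rw [phiv2 (by omega) (by omega) (by omega)] | rw [phiv3 (by omega) (by omega) (by omega)]) <;> omega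
        show extD κ (phiv a m 0) ≠ extD κ (phiv a m ((a + 1) + (m - 2) + 1))
        rw [e1, e2]
        have h5 := hR (a + m - 1) (by omega) (by omega)
        rw [show a + m - 1 + 1 = a + m by omega] at h5
        exact h5


/-- For `m ≥ 3` and `a, b ≥ 0`,
`X_{H_{a,m,b}} = X_{H_{a+1,m-1,b}} + X_{S(a+1,m-2,b)} - X_{P_{a+1}} X_{T_{m-1,b}}`. -/
theorem stmt_18 (a m b : ℕ) (hm : 3 ≤ m) :
    csf (hatG a m b) =
      csf (hatG (a + 1) (m - 1) b) + csf (spiderG (a + 1) (m - 2) b) -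
        csf (pathG (a + 1)) * csf (tadpoleG (m - 1) b) := by
  rw [hat_pc a m b hm, hat'_pc a m b hm, spider_pc a m b hm, pt_pc a m b hm,
    eq_sub_iff_add_eq]
  exact key (Rp a) (fun κ => extD κ a) (fun κ => extD κ (a + 1)) (fun κ => extD κ (a + m - 1))
end

section
/- For integers a ≥ 1, b ≥ 0 and c ≥ 2, the chromatic symmetric function of the barbell satisfies X_{K(a1^b c)} = c! · X_{K(a 1^{b+c})} − Σ_{i=0}^{c−2} (c! · (c − i − 1)/(c − i)!) · X_{K_{c−i}} · X_{K(a 1^{b+i})}. -/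
open Finset

/-- fibre-size distribution of a coloring -/
noncomputable def fibd {V : Type} [Fintype V] (f : V → ℕ) : ℕ →₀ ℕ :=
  ∑ v, Finsupp.single (f v) 1

def IsProperC {V : Type} (G : SimpleGraph V) (κ : V → ℕ) : Prop :=
  ∀ v w, G.Adj v w → κ v ≠ κ w

def chainP (m j : ℕ) (f : Fin m → ℕ) : Prop :=
  (∀ h : 0 < m, f ⟨0, h⟩ ≠ j) ∧
  (∀ x : ℕ, ∀ h : x + 1 < m, f ⟨x, by omega⟩ ≠ f ⟨x + 1, h⟩)

noncomputable def Pcnt (m j : ℕ) (e : ℕ →₀ ℕ) : ℕ :=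
  Nat.card {f : Fin m → ℕ // chainP m j f ∧ fibd f = e}

noncomputable def Icnt (m : ℕ) (B : Finset ℕ) (e : ℕ →₀ ℕ) : ℕ :=
  Nat.card {f : Fin m → ℕ // Function.Injective f ∧ (∀ i, f i ∉ B) ∧ fibd f = e}

open Classical in
noncomputable def SFi (m : ℕ) (e : ℕ →₀ ℕ) : ℕ :=
  if (e.sum fun _ x => x) = m ∧ (∀ k, e k ≤ 1) then 1 else 0

lemma fibd_apply {V : Type} [Fintype V] (f : V → ℕ) (k : ℕ) :
    fibd f k = (Finset.univ.filter fun v => f v = k).card := by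
  classical
  rw [fibd, Finsupp.finset_sum_apply, Finset.card_filter]
  refine Finset.sum_congr rfl fun v _ => ?_
  rw [Finsupp.single_apply]

lemma fibd_sum {V : Type} [Fintype V] (f : V → ℕ) :
    ((fibd f).sum fun _ x => x) = Fintype.card V := by
  classical
  rw [fibd, ← Finsupp.sum_finset_sum_index (by simp) (by simp)]
  simp

lemma fibd_pos {V : Type} [Fintype V] (f : V → ℕ) (v : V) : 0 < fibd f (f v) := by
  classical
  rw [fibd_apply]
  exact Finset.card_pos.2 ⟨v, by simp⟩

lemma nat_card_fiberwise {α ι : Type*} (S : Set α) (hS : S.Finite) (φ : α → ι)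
    (t : Finset ι) (h : ∀ x ∈ S, φ x ∈ t) :
    Nat.card S = ∑ i ∈ t, Nat.card {x : α | x ∈ S ∧ φ x = i} := by
  classical
  rw [Nat.card_coe_set_eq, Set.ncard_eq_toFinset_card S hS,
    Finset.card_eq_sum_card_fiberwise (f := φ) (t := t)
      (fun x hx => h x (hS.mem_toFinset.1 hx))]
  refine Finset.sum_congr rfl fun i _ => ?_
  have he : {x : α | x ∈ S ∧ φ x = i} = ↑(hS.toFinset.filter fun a => φ a = i) := by
    ext x; simp [hS.mem_toFinset]
  rw [he, Nat.card_coe_set_eq, Set.ncard_coe_finset]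
lemma colorings_finite {V : Type} [Fintype V] (P : (V → ℕ) → Prop) (e : ℕ →₀ ℕ) :
    {f : V → ℕ | P f ∧ fibd f = e}.Finite := by
  classical
  apply Set.Finite.subset (Set.Finite.pi (t := fun _ : V => (↑e.support : Set ℕ))
    (fun _ => (e.support : Finset ℕ).finite_toSet))
  intro f hf
  simp only [Set.mem_pi, Set.mem_univ, forall_true_left]
  intro v
  have := fibd_pos f v
  rw [hf.2] at this
  simp [Finsupp.mem_support_iff]
  omega

lemma chain_succ (m j : ℕ) (f : Fin (m + 1) → ℕ) :
    chainP (m + 1) j f ↔ f 0 ≠ j ∧ chainP m (f 0) (Fin.tail f) := by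
  constructor
  · rintro ⟨h1, h2⟩
    refine ⟨h1 (by omega), fun h => ?_, fun x h => ?_⟩
    · have := (h2 0 (by omega)).symm
      simpa [Fin.tail] using this
    · have := h2 (x + 1) (by omega)
      simpa [Fin.tail] using this
  · rintro ⟨h0, h1, h2⟩
    refine ⟨fun _ => h0, fun x h => ?_⟩
    match x with
    | 0 =>
      have := h1 (by omega)
      simp only [Fin.tail] at this
      intro hx
      exact this (by convert hx.symm using 2 <;> exact Fin.ext (by simp))
    | Nat.succ y =>
      have := h2 y (by omega)
      simp only [Fin.tail] at this
      intro hx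
      exact this (by convert hx using 2 <;> exact Fin.ext (by simp))

lemma fibd_succ (m : ℕ) (f : Fin (m + 1) → ℕ) :
    fibd f = Finsupp.single (f 0) 1 + fibd (Fin.tail f) := by
  rw [fibd, Fin.sum_univ_succ]
  rfl

lemma Pcnt_zero (j : ℕ) (e : ℕ →₀ ℕ) : Pcnt 0 j e = if e = 0 then 1 else 0 := by
  classical
  rw [Pcnt]
  split
  · rename_i he
    haveI : Unique {f : Fin 0 → ℕ // chainP 0 j f ∧ fibd f = e} := by
      refine ⟨⟨⟨fun i => i.elim0, ⟨fun h => absurd h (by omega), fun x h => absurd h (by omega)⟩,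
        ?_⟩⟩, fun g => Subtype.ext (funext fun i => i.elim0)⟩
      rw [he]; rw [fibd]; simp
    exact Nat.card_unique
  · rename_i he
    rw [Nat.card_eq_zero]
    left
    constructor
    rintro ⟨f, _, hf⟩
    apply he
    rw [← hf, fibd]
    simp

lemma Pcnt_succ (m j : ℕ) (e : ℕ →₀ ℕ) :
    Pcnt (m + 1) j e = ∑ k ∈ e.support \ {j}, Pcnt m k (e - Finsupp.single k 1) := by
  classical
  have hcard : Nat.card {f : Fin (m+1) → ℕ // chainP (m+1) j f ∧ fibd f = e}
      = Nat.card {f : Fin (m+1) → ℕ | chainP (m+1) j f ∧ fibd f = e} := rfl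
  rw [Pcnt, hcard,
    nat_card_fiberwise _ (colorings_finite _ e) (fun f => f 0) (e.support \ {j}) ?side]
  case side =>
    rintro f ⟨hc, hf⟩
    have hp := fibd_pos f 0
    rw [hf] at hp
    simp only [Finset.mem_sdiff, Finsupp.mem_support_iff, Finset.mem_singleton]
    exact ⟨by omega, hc.1 (by omega)⟩
  refine Finset.sum_congr rfl fun k hk => ?_
  simp only [Finset.mem_sdiff, Finsupp.mem_support_iff, Finset.mem_singleton] at hk
  have hle : Finsupp.single k 1 ≤ e := by
    rw [Finsupp.single_le_iff]; omega
  rw [Pcnt]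
  apply Nat.card_congr
  refine ⟨fun x => ⟨Fin.tail x.1, ?_, ?_⟩, fun y => ⟨Fin.cons k y.1, ⟨?_, ?_⟩, ?_⟩, ?_, ?_⟩
  · obtain ⟨⟨hc, hf⟩, h0⟩ := x.2
    have := ((chain_succ m j x.1).1 hc).2
    rwa [h0] at this
  · obtain ⟨⟨hc, hf⟩, h0⟩ := x.2
    have := fibd_succ m x.1
    rw [hf, h0] at this
    rw [eq_tsub_iff_add_eq_of_le hle, add_comm]
    exact this.symm
  · obtain ⟨hc, hf⟩ := y.2
    rw [chain_succ]
    refine ⟨by simpa using hk.2, by simpa [Fin.tail_cons] using hc⟩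
  · obtain ⟨hc, hf⟩ := y.2
    rw [fibd_succ, Fin.tail_cons, hf]
    simp only [Fin.cons_zero]
    rw [add_comm, tsub_add_cancel_of_le hle]
  · simp
  · rintro ⟨f, ⟨hc, hf⟩, h0⟩
    exact Subtype.ext (by simp only []; rw [← h0, Fin.cons_self_tail])
  · rintro ⟨g, hg⟩
    exact Subtype.ext (by simp)
open Classical in
lemma Icnt_eq (m : ℕ) (B : Finset ℕ) (e : ℕ →₀ ℕ) :
    Icnt m B e = if ((e.sum fun _ x => x) = m ∧ (∀ k, e k ≤ 1) ∧ ∀ k ∈ B, e k = 0)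
      then m.factorial else 0 := by
  classical
  rw [Icnt]
  split
  · rename_i h
    obtain ⟨hsum, hsf, hB⟩ := h
    have hcardsupp : e.support.card = m := by
      have hs : (e.sum fun _ x => x) = ∑ k ∈ e.support, e k := rfl
      rw [hs] at hsum
      calc e.support.card = ∑ _k ∈ e.support, 1 := by simp
        _ = ∑ k ∈ e.support, e k := Finset.sum_congr rfl (fun k hk => by
            have h1 := hsf k
            have h2 : e k ≠ 0 := Finsupp.mem_support_iff.1 hk
            omega)
        _ = m := hsum
    have hQ : Nat.card {f : Fin m → ℕ // Function.Injective f ∧ (∀ i, f i ∉ B) ∧ fibd f = e}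
        = Nat.card (Fin m ≃ ↥(e.support : Finset ℕ)) := by
      apply Nat.card_congr
      refine ⟨fun x => Equiv.ofBijective
          (fun v => (⟨x.1 v, ?_⟩ : ↥(e.support : Finset ℕ))) ?_,
        fun σ => ⟨fun v => (σ v : ℕ), ?_, ?_, ?_⟩, ?_, ?_⟩
      · have := fibd_pos x.1 v
        rw [x.2.2.2] at this
        simp only [Finset.mem_coe, Finsupp.mem_support_iff]
        omega
      · rw [Fintype.bijective_iff_injective_and_card]
        constructor
        · intro v w hvw
          exact x.2.1 (congrArg Subtype.val hvw)
        · simp [hcardsupp]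
      · intro v w hvw
        exact σ.injective (Subtype.coe_injective hvw)
      · intro i hiB
        have h2 : e ((σ i : ℕ)) ≠ 0 := Finsupp.mem_support_iff.1 (σ i).2
        exact h2 (hB _ hiB)
      · ext k
        rw [fibd_apply]
        by_cases hk : k ∈ e.support
        · have hfil : (Finset.univ.filter fun v => (σ v : ℕ) = k) = {σ.symm ⟨k, hk⟩} := by
            ext v
            simp only [Finset.mem_filter, Finset.mem_univ, true_and, Finset.mem_singleton]
            constructor
            · intro hvk
              apply_fun σ
              rw [Equiv.apply_symm_apply]
              exact Subtype.ext hvk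
            · intro hv
              rw [hv, Equiv.apply_symm_apply]
          rw [hfil, Finset.card_singleton]
          have h1 := hsf k
          have h2 : e k ≠ 0 := Finsupp.mem_support_iff.1 hk
          omega
        · have hfil : (Finset.univ.filter fun v => (σ v : ℕ) = k) = ∅ := by
            ext v
            simp only [Finset.mem_filter, Finset.mem_univ, true_and, Finset.notMem_empty,
              iff_false]
            intro hvk
            exact hk (hvk ▸ (σ v).2)
          rw [hfil]
          simp [Finsupp.notMem_support_iff.1 hk]
      · intro x
        exact Subtype.ext (funext fun v => rfl)
      · intro σ
        exact Equiv.ext fun v => Subtype.ext rfl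
    rw [hQ, Nat.card_eq_fintype_card,
      Fintype.card_equiv (Fintype.equivOfCardEq (by simp [hcardsupp]))]
    simp
  · rename_i h
    rw [Nat.card_eq_zero]
    left
    constructor
    rintro ⟨f, hinj, hB, hfib⟩
    apply h
    refine ⟨by rw [← hfib, fibd_sum]; simp, fun k => ?_, fun k hk => ?_⟩
    · rw [← hfib, fibd_apply]
      apply Finset.card_le_one.2
      intro v hv w hw
      simp only [Finset.mem_filter] at hv hw
      exact hinj (hv.2.trans hw.2.symm)
    · by_contra hek
      have : 0 < e k := by omega
      rw [← hfib, fibd_apply, Finset.card_pos] at this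
      obtain ⟨v, hv⟩ := this
      simp only [Finset.mem_filter] at hv
      exact hB v (hv.2 ▸ hk)
lemma supp_card_of_sf (e : ℕ →₀ ℕ) (hsf : ∀ k, e k ≤ 1) :
    e.support.card = e.sum fun _ x => x := by
  rw [Finsupp.sum, Finset.card_eq_sum_ones]
  refine Finset.sum_congr rfl fun k hk => ?_
  have h1 := hsf k
  have h2 : e k ≠ 0 := Finsupp.mem_support_iff.1 hk
  omega

lemma sum_sub_single (e : ℕ →₀ ℕ) (k : ℕ) (hk : e k ≠ 0) :
    ((e - Finsupp.single k 1).sum fun _ x => x) + 1 = e.sum fun _ x => x := by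
  have hle : Finsupp.single k 1 ≤ e := Finsupp.single_le_iff.2 (by omega)
  conv_rhs => rw [← tsub_add_cancel_of_le hle]
  rw [Finsupp.sum_add_index' (fun _ => rfl) (fun _ _ _ => rfl)]
  simp

lemma sub_single_apply (e : ℕ →₀ ℕ) (k l : ℕ) :
    (e - Finsupp.single k 1 : ℕ →₀ ℕ) l = e l - if k = l then 1 else 0 := by
  rw [Finsupp.tsub_apply, Finsupp.single_apply]

lemma claimA (c j : ℕ) (e : ℕ →₀ ℕ) :
    (c + 1) * ∑ k ∈ e.support \ {j}, Icnt c {k} (e - Finsupp.single k 1)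
      = Icnt (c + 1) {j} e + (c + 1).factorial * c * SFi (c + 1) e := by
  classical
  by_cases hcond : (e.sum fun _ x => x) = c + 1 ∧ (∀ k, e k ≤ 1)
  · obtain ⟨hsum, hsf⟩ := hcond
    have hsupp : e.support.card = c + 1 := by rw [supp_card_of_sf e hsf, hsum]
    have hterm : ∀ k ∈ e.support \ {j}, Icnt c {k} (e - Finsupp.single k 1) = c.factorial := by
      intro k hk
      simp only [Finset.mem_sdiff, Finsupp.mem_support_iff, Finset.mem_singleton] at hk
      rw [Icnt_eq, if_pos]
      refine ⟨?_, fun l => ?_, fun l hl => ?_⟩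
      · have := sum_sub_single e k hk.1
        omega
      · rw [sub_single_apply]
        have := hsf l
        omega
      · rw [Finset.mem_singleton] at hl
        subst hl
        rw [sub_single_apply, if_pos rfl]
        have := hsf l
        omega
    rw [Finset.sum_congr rfl hterm, Finset.sum_const, smul_eq_mul]
    rw [SFi, if_pos ⟨hsum, hsf⟩, Icnt_eq]
    by_cases hj : j ∈ e.support
    · have hcards : (e.support \ {j}).card = c := by
        rw [Finset.card_sdiff_of_subset (by simpa using hj), hsupp, Finset.card_singleton]
        omega
      have hij : ¬((e.sum fun _ x => x) = c + 1 ∧ (∀ k, e k ≤ 1) ∧ ∀ l ∈ ({j} : Finset ℕ), e l = 0) := by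
        rintro ⟨-, -, h⟩
        exact Finsupp.mem_support_iff.1 hj (h j (Finset.mem_singleton_self j))
      rw [if_neg hij, hcards, Nat.factorial_succ]
      ring
    · have hcards : (e.support \ {j}).card = c + 1 := by
        rw [Finset.sdiff_eq_self_of_disjoint (by simpa using hj), hsupp]
      have hij : ((e.sum fun _ x => x) = c + 1 ∧ (∀ k, e k ≤ 1) ∧ ∀ l ∈ ({j} : Finset ℕ), e l = 0) := by
        refine ⟨hsum, hsf, fun l hl => ?_⟩
        rw [Finset.mem_singleton] at hl
        subst hl
        exact Finsupp.notMem_support_iff.1 hj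
      rw [if_pos hij, hcards, Nat.factorial_succ]
      ring
  · have h1 : Icnt (c + 1) {j} e = 0 := by
      rw [Icnt_eq, if_neg]
      rintro ⟨hs, hf, -⟩
      exact hcond ⟨hs, hf⟩
    have h2 : SFi (c + 1) e = 0 := by
      rw [SFi, if_neg hcond]
    rw [h1, h2, Finset.sum_eq_zero, mul_zero, mul_zero, add_zero]
    intro k hk
    simp only [Finset.mem_sdiff, Finsupp.mem_support_iff, Finset.mem_singleton] at hk
    rw [Icnt_eq, if_neg]
    rintro ⟨hs, hf, hz⟩
    apply hcond
    constructor
    · have := sum_sub_single e k hk.1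
      omega
    · intro l
      have h3 := hf l
      rw [sub_single_apply] at h3
      have h4 := hz k (Finset.mem_singleton_self k)
      rw [sub_single_apply, if_pos rfl] at h4
      by_cases hlk : k = l
      · subst hlk; omega
      · rw [if_neg hlk] at h3; omega

lemma sumswap (j : ℕ) (e : ℕ →₀ ℕ) (F : ℕ → (ℕ →₀ ℕ) → (ℕ →₀ ℕ) → ℕ) :
    ∑ r ∈ Finset.HasAntidiagonal.antidiagonal e, ∑ k ∈ r.2.support \ {j}, F k r.1 (r.2 - Finsupp.single k 1)
      = ∑ k ∈ e.support \ {j}, ∑ r ∈ Finset.HasAntidiagonal.antidiagonal (e - Finsupp.single k 1), F k r.1 r.2 := by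
  classical
  rw [Finset.sum_sigma', Finset.sum_sigma']
  refine Finset.sum_nbij' (i := fun x => ⟨x.2, (x.1.1, x.1.2 - Finsupp.single x.2 1)⟩)
    (j := fun x => ⟨(x.2.1, x.2.2 + Finsupp.single x.1 1), x.1⟩) ?_ ?_ ?_ ?_ ?_
  · rintro ⟨r, k⟩ hx
    simp only [Finset.mem_sigma, Finset.HasAntidiagonal.mem_antidiagonal, Finset.mem_sdiff,
      Finsupp.mem_support_iff, Finset.mem_singleton] at hx ⊢
    obtain ⟨hr, hk1, hk2⟩ := hx
    have hek : e k ≠ 0 := by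
      have : e k = r.1 k + r.2 k := by rw [← hr]; simp
      omega
    refine ⟨⟨hek, hk2⟩, ?_⟩
    have hle : Finsupp.single k 1 ≤ r.2 := Finsupp.single_le_iff.2 (by omega)
    rw [← hr, add_tsub_assoc_of_le hle]
  · rintro ⟨k, r⟩ hx
    simp only [Finset.mem_sigma, Finset.HasAntidiagonal.mem_antidiagonal, Finset.mem_sdiff,
      Finsupp.mem_support_iff, Finset.mem_singleton] at hx ⊢
    obtain ⟨⟨hk1, hk2⟩, hr⟩ := hx
    have hle : Finsupp.single k 1 ≤ e := Finsupp.single_le_iff.2 (by omega)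
    refine ⟨?_, ?_, hk2⟩
    · rw [← add_assoc, hr, tsub_add_cancel_of_le hle]
    · have : (r.2 + Finsupp.single k 1 : ℕ →₀ ℕ) k = r.2 k + 1 := by simp
      omega
  · rintro ⟨r, k⟩ hx
    simp only [Finset.mem_sigma, Finset.HasAntidiagonal.mem_antidiagonal, Finset.mem_sdiff,
      Finsupp.mem_support_iff, Finset.mem_singleton] at hx
    obtain ⟨hr, hk1, hk2⟩ := hx
    have hle : Finsupp.single k 1 ≤ r.2 := Finsupp.single_le_iff.2 (by omega)
    simp [tsub_add_cancel_of_le hle]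
  · rintro ⟨k, r⟩ hx
    simp
  · rintro ⟨r, k⟩ hx
    rfl

lemma sum_ad_pzero (j : ℕ) (e : ℕ →₀ ℕ) (g : (ℕ →₀ ℕ) → ℕ) :
    ∑ r ∈ Finset.HasAntidiagonal.antidiagonal e, g r.1 * Pcnt 0 j r.2 = g e := by
  classical
  rw [Finset.sum_eq_single (e, (0 : ℕ →₀ ℕ))]
  · rw [Pcnt_zero, if_pos rfl, mul_one]
  · rintro ⟨r1, r2⟩ hr hne
    rw [Finset.HasAntidiagonal.mem_antidiagonal] at hr
    rw [Pcnt_zero, if_neg, mul_zero]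
    intro h2
    apply hne
    have h2' : r2 = 0 := h2
    subst h2'
    simp only [Prod.mk.injEq]
    exact ⟨by simpa using hr, trivial⟩
  · intro h
    exact absurd (by rw [Finset.HasAntidiagonal.mem_antidiagonal, add_zero]) h

lemma local_id (c : ℕ) (hc : 1 ≤ c) (j : ℕ) (e : ℕ →₀ ℕ) :
    c.factorial * Pcnt c j e = Icnt c {j} e + ∑ i ∈ Finset.range (c - 1),
      c.factorial * (c - i - 1) * ∑ r ∈ Finset.HasAntidiagonal.antidiagonal e, SFi (c - i) r.1 * Pcnt i j r.2 := by
  classical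
  induction c generalizing j e with
  | zero => omega
  | succ n ih =>
    rcases Nat.eq_zero_or_pos n with hn | hn
    · subst hn
      simp only [show (0 : ℕ) + 1 = 1 from rfl, Nat.factorial_one, one_mul,
        show (1 : ℕ) - 1 = 0 from rfl, Finset.range_zero, Finset.sum_empty, add_zero]
      rw [Pcnt, Icnt]
      apply Nat.card_congr
      apply Equiv.subtypeEquivRight
      intro f
      constructor
      · rintro ⟨⟨h1, h2⟩, hf⟩
        refine ⟨fun v w _ => Subsingleton.elim v w, fun i => ?_, hf⟩
        rw [Finset.mem_singleton, Subsingleton.elim i ⟨0, by omega⟩]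
        exact h1 (by omega)
      · rintro ⟨h1, h2, hf⟩
        refine ⟨⟨fun h => ?_, fun x h => absurd h (by omega)⟩, hf⟩
        simpa using h2 ⟨0, by omega⟩
    · -- inductive step, n ≥ 1
      have hrange : (n + 1) - 1 = n := rfl
      rw [hrange]
      set K := e.support \ {j} with hK
      set G : ℕ → ℕ := fun i => (n + 1).factorial * (n + 1 - i - 1) *
        ∑ r ∈ Finset.HasAntidiagonal.antidiagonal e, SFi (n + 1 - i) r.1 * Pcnt i j r.2 with hGdef
      have hsplit : ∑ i ∈ Finset.range n, G i
          = ∑ i ∈ Finset.range (n - 1), G (i + 1) + G 0 := by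
        conv_lhs => rw [show n = (n - 1) + 1 by omega]
        exact Finset.sum_range_succ' G (n - 1)
      have hG0 : G 0 = (n + 1).factorial * n * SFi (n + 1) e := by
        rw [hGdef]
        simp only [Nat.sub_zero, Nat.add_sub_cancel]
        rw [sum_ad_pzero j e (fun x => SFi (n + 1) x)]
      have hGi : ∀ i, G (i + 1) = (n + 1) * ∑ k ∈ K, (n.factorial * (n - i - 1) *
          ∑ r ∈ Finset.HasAntidiagonal.antidiagonal (e - Finsupp.single k 1), SFi (n - i) r.1 * Pcnt i k r.2) := by
        intro i
        rw [hGdef]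
        simp only [Nat.succ_sub_succ]
        have h1 : ∀ r : (ℕ →₀ ℕ) × (ℕ →₀ ℕ), SFi (n - i) r.1 * Pcnt (i + 1) j r.2
            = ∑ k ∈ r.2.support \ {j}, SFi (n - i) r.1 * Pcnt i k (r.2 - Finsupp.single k 1) := by
          intro r
          rw [Pcnt_succ, Finset.mul_sum]
        rw [Finset.sum_congr rfl fun r _ => h1 r,
          sumswap j e (fun k x y => SFi (n - i) x * Pcnt i k y)]
        rw [Finset.mul_sum, Finset.mul_sum]
        refine Finset.sum_congr rfl fun k _ => ?_
        rw [Nat.factorial_succ]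
        ring
      rw [hsplit, hG0]
      rw [Pcnt_succ, Finset.mul_sum]
      have hterm : ∀ k ∈ K, (n + 1).factorial * Pcnt n k (e - Finsupp.single k 1)
          = (n + 1) * Icnt n {k} (e - Finsupp.single k 1)
            + (n + 1) * ∑ i ∈ Finset.range (n - 1), n.factorial * (n - i - 1) *
                ∑ r ∈ Finset.HasAntidiagonal.antidiagonal (e - Finsupp.single k 1), SFi (n - i) r.1 * Pcnt i k r.2 := by
        intro k _
        rw [Nat.factorial_succ, mul_assoc, ih hn k _, mul_add]
      rw [Finset.sum_congr rfl hterm, Finset.sum_add_distrib, ← Finset.mul_sum, ← Finset.mul_sum]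
      rw [claimA n j e]
      have hswap : (n + 1) * ∑ k ∈ K, ∑ i ∈ Finset.range (n - 1), n.factorial * (n - i - 1) *
            ∑ r ∈ Finset.HasAntidiagonal.antidiagonal (e - Finsupp.single k 1), SFi (n - i) r.1 * Pcnt i k r.2
          = ∑ i ∈ Finset.range (n - 1), G (i + 1) := by
        rw [Finset.sum_comm, Finset.mul_sum]
        exact Finset.sum_congr rfl fun i _ => (hGi i).symm
      rw [Finset.mul_sum] at hswap ⊢
      rw [hswap]
      ring
lemma ncard_fib {V : Type} [Fintype V] (κ : V → ℕ) (i : ℕ) :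
    {v | κ v = i}.ncard = fibd κ i := by
  classical
  rw [fibd_apply, Set.ncard_eq_toFinset_card']
  congr 1
  ext v
  simp

lemma csf_coeff {n : ℕ} (G : SimpleGraph (Fin n)) (d : ℕ →₀ ℕ) :
    csf G d = (Nat.card {κ : Fin n → ℕ // IsProperC G κ ∧ fibd κ = d} : ℚ) := by
  have hset : {κ : Fin n → ℕ | (∀ v w, G.Adj v w → κ v ≠ κ w) ∧
      ∀ i : ℕ, {v | κ v = i}.ncard = d i}
      = {κ : Fin n → ℕ | IsProperC G κ ∧ fibd κ = d} := by
    ext κ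
    simp only [Set.mem_setOf_eq, IsProperC]
    refine and_congr_right fun _ => ?_
    rw [DFunLike.ext_iff]
    constructor
    · intro h i; rw [← ncard_fib]; exact h i
    · intro h i; rw [ncard_fib]; exact h i
  simp only [csf]
  rw [hset, ← Nat.card_coe_set_eq]
  rfl

lemma csf_top (M : ℕ) (d : ℕ →₀ ℕ) :
    csf (⊤ : SimpleGraph (Fin M)) d = (Icnt M ∅ d : ℚ) := by
  rw [csf_coeff, Icnt]
  norm_cast
  apply Nat.card_congr
  apply Equiv.subtypeEquivRight
  intro f
  simp only [IsProperC, SimpleGraph.top_adj, Finset.notMem_empty, not_false_iff,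
    implies_true, true_and]
  constructor
  · rintro ⟨h, hf⟩
    refine ⟨fun v w hvw => by_contra fun hne => h v w hne hvw, hf⟩
  · rintro ⟨h, hf⟩
    exact ⟨fun v w hne heq => hne (h heq), hf⟩

noncomputable def Acnt (a b : ℕ) (hab : 0 < a + b) (d : ℕ →₀ ℕ) (j : ℕ) : ℕ :=
  Nat.card {κ : Fin (a + b + 0) → ℕ // IsProperC (barbellG a b 0) κ ∧ fibd κ = d ∧
    κ ⟨a + b - 1, by omega⟩ = j}

lemma Acnt_zero (a b : ℕ) (hab : 0 < a + b) (d : ℕ →₀ ℕ) (j : ℕ)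
    (hj : j ∉ d.support) : Acnt a b hab d j = 0 := by
  rw [Acnt, Nat.card_eq_zero]
  left
  constructor
  rintro ⟨κ, hp, hf, hv⟩
  apply hj
  rw [Finsupp.mem_support_iff, ← hf, ← hv]
  have := fibd_pos κ ⟨a + b - 1, by omega⟩
  omega

lemma fibd_split (N n m : ℕ) (hN : N = n + m) (κ : Fin N → ℕ) :
    fibd κ = fibd (fun i : Fin n => κ ⟨i, by omega⟩)
      + fibd (fun t : Fin m => κ ⟨n + t, by omega⟩) := by
  subst hN
  rw [fibd, Fin.sum_univ_add]
  congr 1 <;> rw [fibd] <;>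
    refine Finset.sum_congr rfl fun i _ => by congr 1 <;> exact congrArg κ (Fin.ext (by simp))

def glueF (a b m : ℕ) (g1 : Fin (a + b + 0) → ℕ) (g2 : Fin m → ℕ) : Fin (a + b + m) → ℕ :=
  fun z => if h : (z : ℕ) < a + b then g1 ⟨z, h⟩ else g2 ⟨(z : ℕ) - (a + b), by omega⟩

lemma glue_leftf (a b m : ℕ) (g1 : Fin (a + b + 0) → ℕ) (g2 : Fin m → ℕ) :
    (fun i : Fin (a + b + 0) => glueF a b m g1 g2 ⟨i, by omega⟩) = g1 := by
  funext i
  have hi : (i : ℕ) < a + b := by have := i.isLt; omega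
  rw [glueF]
  dsimp only
  rw [dif_pos hi]

lemma glue_rightf (a b m : ℕ) (g1 : Fin (a + b + 0) → ℕ) (g2 : Fin m → ℕ) :
    (fun t : Fin m => glueF a b m g1 g2 ⟨a + b + t, by omega⟩) = g2 := by
  funext t
  rw [glueF]
  dsimp only
  rw [dif_neg (by omega)]
  congr 1
  exact Fin.ext (by simp)

lemma glue_v (a b m : ℕ) (hab : 0 < a + b) (g1 : Fin (a + b + 0) → ℕ) (g2 : Fin m → ℕ) :
    glueF a b m g1 g2 ⟨a + b - 1, by omega⟩ = g1 ⟨a + b - 1, by omega⟩ := by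
  rw [glueF]
  dsimp only
  rw [dif_pos (by omega : a + b - 1 < a + b)]

lemma split_count (a b m N : ℕ) (hab : 0 < a + b) (hN : N = a + b + m)
    (G : SimpleGraph (Fin N)) (Q : ℕ → (Fin m → ℕ) → Prop)
    (hG : ∀ κ : Fin N → ℕ, IsProperC G κ ↔
       (IsProperC (barbellG a b 0) (fun i : Fin (a + b + 0) => κ ⟨i, by omega⟩) ∧
        Q (κ ⟨a + b - 1, by omega⟩) (fun t : Fin m => κ ⟨a + b + t, by omega⟩)))
    (d : ℕ →₀ ℕ) :
    Nat.card {κ : Fin N → ℕ // IsProperC G κ ∧ fibd κ = d} =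
      ∑ p ∈ Finset.HasAntidiagonal.antidiagonal d, ∑ j ∈ d.support,
        Acnt a b hab p.1 j * Nat.card {g : Fin m → ℕ // Q j g ∧ fibd g = p.2} := by
  classical
  subst hN
  have hfib : ∀ κ : Fin (a + b + m) → ℕ, fibd κ = fibd (fun i : Fin (a + b + 0) => κ ⟨i, by omega⟩)
      + fibd (fun t : Fin m => κ ⟨a + b + t, by omega⟩) :=
    fun κ => fibd_split (a + b + m) (a + b) m rfl κ
  have hcard : Nat.card {κ : Fin (a + b + m) → ℕ // IsProperC G κ ∧ fibd κ = d}
      = Nat.card {κ : Fin (a + b + m) → ℕ | IsProperC G κ ∧ fibd κ = d} := rfl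
  rw [hcard, nat_card_fiberwise _ (colorings_finite _ d)
    (fun κ => ((fibd (fun i : Fin (a + b + 0) => κ ⟨i, by omega⟩),
        fibd (fun t : Fin m => κ ⟨a + b + t, by omega⟩)), κ ⟨a + b - 1, by omega⟩))
    ((Finset.HasAntidiagonal.antidiagonal d) ×ˢ d.support) ?mem]
  case mem =>
    rintro κ ⟨hp, hf⟩
    rw [Finset.mem_product, Finset.HasAntidiagonal.mem_antidiagonal]
    constructor
    · exact (hfib κ).symm.trans hf
    · rw [Finsupp.mem_support_iff, ← hf]
      exact (fibd_pos κ ⟨a + b - 1, by omega⟩).ne'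
  rw [Finset.sum_product]
  refine Finset.sum_congr rfl fun p hp => Finset.sum_congr rfl fun j hj => ?_
  rw [Finset.HasAntidiagonal.mem_antidiagonal] at hp
  rw [Acnt, ← Nat.card_prod]
  apply Nat.card_congr
  refine ⟨fun x => (⟨fun i : Fin (a + b + 0) => x.1 ⟨i, by omega⟩, ?_, ?_, ?_⟩,
      ⟨fun t : Fin m => x.1 ⟨a + b + t, by omega⟩, ?_, ?_⟩),
    fun y => ⟨glueF a b m y.1.1 y.2.1, ?_⟩, ?_, ?_⟩
  · exact ((hG x.1).1 x.2.1.1).1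
  · have heq := x.2.2
    rw [Prod.mk.injEq, Prod.mk.injEq] at heq
    exact heq.1.1
  · have heq := x.2.2
    rw [Prod.mk.injEq, Prod.mk.injEq] at heq
    exact heq.2
  · have heq := x.2.2
    rw [Prod.mk.injEq, Prod.mk.injEq] at heq
    have hQ := ((hG x.1).1 x.2.1.1).2
    rwa [heq.2] at hQ
  · have heq := x.2.2
    rw [Prod.mk.injEq, Prod.mk.injEq] at heq
    exact heq.1.2
  · -- glue belongs to fiber
    have hleft := glue_leftf a b m y.1.1 y.2.1
    have hright := glue_rightf a b m y.1.1 y.2.1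
    have hvv : glueF a b m y.1.1 y.2.1 ⟨a + b - 1, by omega⟩ = j :=
      (glue_v a b m hab y.1.1 y.2.1).trans y.1.2.2.2
    refine ⟨⟨?_, ?_⟩, ?_⟩
    · apply (hG _).2
      rw [hleft, hright, hvv]
      exact ⟨y.1.2.1, y.2.2.1⟩
    · rw [hfib, hleft, hright, y.1.2.2.1, y.2.2.2, hp]
    · rw [hleft, hright, hvv, y.1.2.2.1, y.2.2.2]
  · -- left inverse
    rintro ⟨κ, hκ⟩
    apply Subtype.ext
    funext z
    dsimp only [glueF]
    by_cases h : (z : ℕ) < a + b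
    · rw [dif_pos h]
    · rw [dif_neg h]
      congr 1
      exact Fin.ext (by simp; omega)
  · -- right inverse
    intro y
    refine Prod.ext (Subtype.ext ?_) (Subtype.ext ?_)
    · exact glue_leftf a b m y.1.1 y.2.1
    · exact glue_rightf a b m y.1.1 y.2.1
def relN (a b x y : ℕ) : Prop :=
  (x < a ∧ y < a) ∨ (x + 1 = y ∧ a ≤ y ∧ y + 1 ≤ a + b) ∨ (a + b ≤ x + 1 ∧ a + b ≤ y + 1)

lemma barbell_adj {a b c : ℕ} (x y : Fin (a + b + c)) :
    (barbellG a b c).Adj x y ↔ ((x : ℕ) ≠ (y : ℕ) ∧ (relN a b x y ∨ relN a b y x)) := by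
  rw [barbellG, SimpleGraph.fromRel_adj]
  constructor
  · rintro ⟨h1, h2⟩
    exact ⟨fun h => h1 (Fin.ext h), h2⟩
  · rintro ⟨h1, h2⟩
    exact ⟨fun h => h1 (congrArg Fin.val h), h2⟩

lemma barbell_adj_mk {a b c : ℕ} (x y : ℕ) (hx : x < a + b + c) (hy : y < a + b + c) :
    (barbellG a b c).Adj ⟨x, hx⟩ ⟨y, hy⟩ ↔ (x ≠ y ∧ (relN a b x y ∨ relN a b y x)) :=
  barbell_adj _ _

lemma kapp_eq {N : ℕ} (κ : Fin N → ℕ) (u : Fin N) (x : ℕ) (hx : x < N)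
    (h : (u : ℕ) = x) : κ u = κ ⟨x, hx⟩ := by
  congr 1
  exact Fin.ext h

lemma propSplit_lollipop (a b m : ℕ) (ha : 1 ≤ a) (κ : Fin (a + (b + m) + 0) → ℕ) :
    IsProperC (barbellG a (b + m) 0) κ ↔
      (IsProperC (barbellG a b 0) (fun i : Fin (a + b + 0) => κ ⟨i, by omega⟩) ∧
       chainP m (κ ⟨a + b - 1, by omega⟩) (fun t : Fin m => κ ⟨a + b + t, by omega⟩)) := by
  constructor
  · intro H
    refine ⟨?_, ?_, ?_⟩
    · intro x y hxy
      rw [barbell_adj] at hxy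
      obtain ⟨hne, hr⟩ := hxy
      have key : ∀ u w : Fin (a + b + 0), (u : ℕ) ≠ (w : ℕ) → relN a b u w →
          κ ⟨u, by omega⟩ ≠ κ ⟨w, by omega⟩ := by
        intro u w hne hr
        apply H ⟨u, by omega⟩ ⟨w, by omega⟩
        apply (barbell_adj_mk _ _ _ _).2
        refine ⟨hne, Or.inl ?_⟩
        rcases hr with ⟨h1, h2⟩ | ⟨h1, h2, h3⟩ | ⟨h1, h2⟩
        · exact Or.inl ⟨h1, h2⟩
        · exact Or.inr (Or.inl ⟨h1, h2, by omega⟩)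
        · exfalso
          have hu := u.isLt
          have hw := w.isLt
          exact hne (by omega)
      rcases hr with h | h
      · exact key x y hne h
      · exact (key y x (Ne.symm hne) h).symm
    · intro hm
      show κ ⟨a + b + 0, by omega⟩ ≠ κ ⟨a + b - 1, by omega⟩
      refine (H ⟨a + b - 1, by omega⟩ ⟨a + b + 0, by omega⟩ ((barbell_adj_mk _ _ _ _).2
        ⟨by omega, Or.inl (Or.inr (Or.inl ⟨by omega, by omega, by omega⟩))⟩)).symm
    · intro x hx
      show κ ⟨a + b + x, by omega⟩ ≠ κ ⟨a + b + (x + 1), by omega⟩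
      exact H ⟨a + b + x, by omega⟩ ⟨a + b + (x + 1), by omega⟩ ((barbell_adj_mk _ _ _ _).2
        ⟨by omega, Or.inl (Or.inr (Or.inl ⟨by omega, by omega, by omega⟩))⟩)
  · rintro ⟨hbase, hc1, hc2⟩
    intro x y hxy
    rw [barbell_adj] at hxy
    obtain ⟨hne, hr⟩ := hxy
    have key : ∀ u w : Fin (a + (b + m) + 0), (u : ℕ) ≠ (w : ℕ) → relN a (b + m) u w →
        κ u ≠ κ w := by
      intro u w hneuw hruw
      rcases hruw with ⟨h1, h2⟩ | ⟨h1, h2, h3⟩ | ⟨h1, h2⟩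
      · have hadj : (barbellG a b 0).Adj ⟨(u : ℕ), by omega⟩ ⟨(w : ℕ), by omega⟩ :=
          (barbell_adj_mk _ _ _ _).2 ⟨hneuw, Or.inl (Or.inl ⟨h1, h2⟩)⟩
        have hb := hbase _ _ hadj
        exact hb
      · rcases lt_trichotomy (w : ℕ) (a + b) with hw | hw | hw
        · have hadj : (barbellG a b 0).Adj ⟨(u : ℕ), by omega⟩ ⟨(w : ℕ), by omega⟩ :=
            (barbell_adj_mk _ _ _ _).2 ⟨hneuw, Or.inl (Or.inr (Or.inl ⟨h1, h2, by omega⟩))⟩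
          have hb := hbase _ _ hadj
          exact hb
        · have hm : 0 < m := by have := w.isLt; omega
          have h4 : κ ⟨a + b + (0 : ℕ), by omega⟩ ≠ κ ⟨a + b - 1, by omega⟩ := hc1 hm
          rw [kapp_eq κ u (a + b - 1) (by omega) (by omega),
            kapp_eq κ w (a + b + 0) (by omega) (by omega)]
          exact h4.symm
        · have ht : (u : ℕ) - (a + b) + 1 < m := by have := w.isLt; omega
          have h4 : κ ⟨a + b + ((u : ℕ) - (a + b)), by omega⟩
              ≠ κ ⟨a + b + ((u : ℕ) - (a + b) + 1), by omega⟩ := hc2 ((u : ℕ) - (a + b)) ht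
          rw [kapp_eq κ u (a + b + ((u : ℕ) - (a + b))) (by omega) (by omega),
            kapp_eq κ w (a + b + ((u : ℕ) - (a + b) + 1)) (by omega) (by omega)]
          exact h4
      · exfalso
        have := u.isLt
        have := w.isLt
        exact hneuw (by omega)
    rcases hr with h | h
    · exact key x y hne h
    · exact (key y x (Ne.symm hne) h).symm

lemma propSplit_barbell (a b c : ℕ) (ha : 1 ≤ a) (κ : Fin (a + b + c) → ℕ) :
    IsProperC (barbellG a b c) κ ↔
      (IsProperC (barbellG a b 0) (fun i : Fin (a + b + 0) => κ ⟨i, by omega⟩) ∧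
       (Function.Injective (fun t : Fin c => κ ⟨a + b + t, by omega⟩) ∧
        ∀ t : Fin c, (fun t : Fin c => κ ⟨a + b + t, by omega⟩) t ∉
          ({κ ⟨a + b - 1, by omega⟩} : Finset ℕ))) := by
  constructor
  · intro H
    refine ⟨?_, ?_, ?_⟩
    · intro x y hxy
      rw [barbell_adj] at hxy
      obtain ⟨hne, hr⟩ := hxy
      have key : ∀ u w : Fin (a + b + 0), (u : ℕ) ≠ (w : ℕ) → relN a b u w →
          κ ⟨u, by omega⟩ ≠ κ ⟨w, by omega⟩ := by
        intro u w hne hr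
        apply H ⟨u, by omega⟩ ⟨w, by omega⟩
        apply (barbell_adj_mk _ _ _ _).2
        refine ⟨hne, Or.inl ?_⟩
        rcases hr with ⟨h1, h2⟩ | ⟨h1, h2, h3⟩ | ⟨h1, h2⟩
        · exact Or.inl ⟨h1, h2⟩
        · exact Or.inr (Or.inl ⟨h1, h2, by omega⟩)
        · exact Or.inr (Or.inr ⟨by omega, by omega⟩)
      rcases hr with h | h
      · exact key x y hne h
      · exact (key y x (Ne.symm hne) h).symm
    · intro s t hst
      by_contra hne
      have hvne : (s : ℕ) ≠ (t : ℕ) := fun h => hne (Fin.ext h)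
      have hs := s.isLt
      have ht := t.isLt
      refine H ⟨a + b + s, by omega⟩ ⟨a + b + t, by omega⟩ ((barbell_adj_mk _ _ _ _).2
        ⟨by omega, Or.inl (Or.inr (Or.inr ⟨by omega, by omega⟩))⟩) ?_
      exact hst
    · intro t
      rw [Finset.mem_singleton]
      show κ ⟨a + b + t, by omega⟩ ≠ κ ⟨a + b - 1, by omega⟩
      have ht := t.isLt
      exact H ⟨a + b + t, by omega⟩ ⟨a + b - 1, by omega⟩ ((barbell_adj_mk _ _ _ _).2
        ⟨by omega, Or.inl (Or.inr (Or.inr ⟨by omega, by omega⟩))⟩)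
  · rintro ⟨hbase, hinj, hnot⟩
    intro x y hxy
    rw [barbell_adj] at hxy
    obtain ⟨hne, hr⟩ := hxy
    have key : ∀ u w : Fin (a + b + c), (u : ℕ) ≠ (w : ℕ) → relN a b u w →
        κ u ≠ κ w := by
      intro u w hneuw hruw
      rcases hruw with ⟨h1, h2⟩ | ⟨h1, h2, h3⟩ | ⟨h1, h2⟩
      · have hadj : (barbellG a b 0).Adj ⟨(u : ℕ), by omega⟩ ⟨(w : ℕ), by omega⟩ :=
          (barbell_adj_mk _ _ _ _).2 ⟨hneuw, Or.inl (Or.inl ⟨h1, h2⟩)⟩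
        have hb := hbase _ _ hadj
        exact hb
      · have hadj : (barbellG a b 0).Adj ⟨(u : ℕ), by omega⟩ ⟨(w : ℕ), by omega⟩ :=
          (barbell_adj_mk _ _ _ _).2 ⟨hneuw, Or.inl (Or.inr (Or.inl ⟨h1, h2, h3⟩))⟩
        have hb := hbase _ _ hadj
        exact hb
      · rcases Nat.lt_or_ge (u : ℕ) (a + b) with hu | hu
        · have hw : a + b ≤ (w : ℕ) := by omega
          have h4 := hnot ⟨(w : ℕ) - (a + b), by have := w.isLt; omega⟩
          rw [Finset.mem_singleton] at h4
          have h4' : κ ⟨a + b + ((w : ℕ) - (a + b)), by have := w.isLt; omega⟩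
              ≠ κ ⟨a + b - 1, by omega⟩ := h4
          rw [kapp_eq κ u (a + b - 1) (by omega) (by omega),
            kapp_eq κ w (a + b + ((w : ℕ) - (a + b))) (by have := w.isLt; omega)
              (by omega)]
          exact h4'.symm
        · rcases Nat.lt_or_ge (w : ℕ) (a + b) with hw | hw
          · have h4 := hnot ⟨(u : ℕ) - (a + b), by have := u.isLt; omega⟩
            rw [Finset.mem_singleton] at h4
            have h4' : κ ⟨a + b + ((u : ℕ) - (a + b)), by have := u.isLt; omega⟩
                ≠ κ ⟨a + b - 1, by omega⟩ := h4
            rw [kapp_eq κ u (a + b + ((u : ℕ) - (a + b))) (by have := u.isLt; omega)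
                (by omega),
              kapp_eq κ w (a + b - 1) (by omega) (by omega)]
            exact h4'
          · intro heq
            apply hneuw
            have hlt_u := u.isLt
            have hlt_w := w.isLt
            have heq' : κ ⟨a + b + ((u : ℕ) - (a + b)), by omega⟩
                = κ ⟨a + b + ((w : ℕ) - (a + b)), by omega⟩ := by
              rw [← kapp_eq κ u (a + b + ((u : ℕ) - (a + b))) (by omega) (by omega),
                ← kapp_eq κ w (a + b + ((w : ℕ) - (a + b))) (by omega) (by omega)]
              exact heq
            have hind : (⟨(u : ℕ) - (a + b), by omega⟩ : Fin c)
                = ⟨(w : ℕ) - (a + b), by omega⟩ := hinj heq'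
            have hval : (u : ℕ) - (a + b) = (w : ℕ) - (a + b) := congrArg Fin.val hind
            omega
    rcases hr with h | h
    · exact key x y hne h
    · exact (key y x (Ne.symm hne) h).symm
lemma csf_lollipop (a b m : ℕ) (ha : 1 ≤ a) (hab : 0 < a + b) (d : ℕ →₀ ℕ) :
    csf (barbellG a (b + m) 0) d = ∑ p ∈ Finset.HasAntidiagonal.antidiagonal d, ∑ j ∈ d.support,
      ((Acnt a b hab p.1 j * Pcnt m j p.2 : ℕ) : ℚ) := by
  rw [csf_coeff]
  rw [split_count a b m (a + (b + m) + 0) hab (by omega) (barbellG a (b + m) 0)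
    (fun j g => chainP m j g) (fun κ => propSplit_lollipop a b m ha κ) d]
  push_cast
  rfl

lemma csf_barbell (a b c : ℕ) (ha : 1 ≤ a) (hab : 0 < a + b) (d : ℕ →₀ ℕ) :
    csf (barbellG a b c) d = ∑ p ∈ Finset.HasAntidiagonal.antidiagonal d, ∑ j ∈ d.support,
      ((Acnt a b hab p.1 j * Icnt c {j} p.2 : ℕ) : ℚ) := by
  rw [csf_coeff]
  rw [split_count a b c (a + b + c) hab (by omega) (barbellG a b c)
    (fun j g => Function.Injective g ∧ ∀ t, g t ∉ ({j} : Finset ℕ))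
    (fun κ => propSplit_barbell a b c ha κ) d]
  push_cast
  refine Finset.sum_congr rfl fun p _ => Finset.sum_congr rfl fun j _ => ?_
  congr 1
  rw [Icnt]
  norm_cast
  apply Nat.card_congr
  apply Equiv.subtypeEquivRight
  intro g
  constructor
  · rintro ⟨⟨h1, h2⟩, h3⟩
    exact ⟨h1, fun t => by simpa using h2 t, h3⟩
  · rintro ⟨h1, h2, h3⟩
    exact ⟨⟨h1, fun t => by simpa using h2 t⟩, h3⟩

lemma Icnt_empty (M : ℕ) (x : ℕ →₀ ℕ) :
    Icnt M ∅ x = M.factorial * SFi M x := by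
  rw [Icnt_eq, SFi]
  by_cases h : (x.sum fun _ y => y) = M ∧ ∀ k, x k ≤ 1
  · rw [if_pos ⟨h.1, h.2, fun k hk => absurd hk (Finset.notMem_empty k)⟩, if_pos h, mul_one]
  · rw [if_neg, if_neg h, mul_zero]
    rintro ⟨h1, h2, h3⟩
    exact h ⟨h1, h2⟩

lemma rotate_sum {M : Type*} [AddCommMonoid M] (d : ℕ →₀ ℕ)
    (F : (ℕ →₀ ℕ) → (ℕ →₀ ℕ) → (ℕ →₀ ℕ) → M) :
    ∑ q ∈ Finset.HasAntidiagonal.antidiagonal d, ∑ r ∈ Finset.HasAntidiagonal.antidiagonal q.2, F q.1 r.1 r.2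
      = ∑ p ∈ Finset.HasAntidiagonal.antidiagonal d, ∑ r ∈ Finset.HasAntidiagonal.antidiagonal p.2, F r.1 p.1 r.2 := by
  classical
  rw [Finset.sum_sigma', Finset.sum_sigma']
  refine Finset.sum_nbij' (i := fun x => ⟨(x.2.1, x.1.1 + x.2.2), (x.1.1, x.2.2)⟩)
    (j := fun x => ⟨(x.2.1, x.1.1 + x.2.2), (x.1.1, x.2.2)⟩) ?_ ?_ ?_ ?_ ?_
  · rintro ⟨⟨q1, q2⟩, ⟨r1, r2⟩⟩ hx
    simp only [Finset.mem_sigma, Finset.HasAntidiagonal.mem_antidiagonal] at hx ⊢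
    obtain ⟨hq, hr⟩ := hx
    exact ⟨by rw [add_left_comm, hr, hq], trivial⟩
  · rintro ⟨⟨q1, q2⟩, ⟨r1, r2⟩⟩ hx
    simp only [Finset.mem_sigma, Finset.HasAntidiagonal.mem_antidiagonal] at hx ⊢
    obtain ⟨hq, hr⟩ := hx
    exact ⟨by rw [add_left_comm, hr, hq], trivial⟩
  · rintro ⟨⟨q1, q2⟩, ⟨r1, r2⟩⟩ hx
    simp only [Finset.mem_sigma, Finset.HasAntidiagonal.mem_antidiagonal] at hx
    obtain ⟨hq, hr⟩ := hx
    simp [hr]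
  · rintro ⟨⟨q1, q2⟩, ⟨r1, r2⟩⟩ hx
    simp only [Finset.mem_sigma, Finset.HasAntidiagonal.mem_antidiagonal] at hx
    obtain ⟨hq, hr⟩ := hx
    simp [hr]
  · rintro ⟨⟨q1, q2⟩, ⟨r1, r2⟩⟩ _
    rfl
lemma extend_support (a b : ℕ) (hab : 0 < a + b) (d e x : ℕ →₀ ℕ) (he : e ≤ d) (hx : x ≤ e)
    (w : ℕ → ℕ) :
    ∑ j ∈ e.support, ((Acnt a b hab x j * w j : ℕ) : ℚ)
      = ∑ j ∈ d.support, ((Acnt a b hab x j * w j : ℕ) : ℚ) := by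
  apply Finset.sum_subset (Finsupp.support_mono he)
  intro j _ hje
  have hjx : j ∉ x.support := fun hj => hje (Finsupp.support_mono hx hj)
  rw [Acnt_zero a b hab x j hjx, zero_mul, Nat.cast_zero]

lemma coef_icnt (c i : ℕ) (x : ℕ →₀ ℕ) :
    (((c.factorial * (c - i - 1) : ℕ) : ℚ) / ((c - i).factorial : ℚ)) * ((Icnt (c - i) ∅ x : ℕ) : ℚ)
      = ((c.factorial * (c - i - 1) * SFi (c - i) x : ℕ) : ℚ) := by
  rw [Icnt_empty]
  have hne : (((c - i).factorial : ℚ)) ≠ 0 := Nat.cast_ne_zero.2 (Nat.factorial_ne_zero _)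
  push_cast
  field_simp

/-- For `a ≥ 1`, `b ≥ 0` and `c ≥ 2`,
`X_{K(a1^b c)} = c! X_{K(a1^{b+c})} - Σ_{i=0}^{c-2} (c!(c-i-1)/(c-i)!) X_{K_{c-i}} X_{K(a1^{b+i})}`,
where the lollipop `K(a1^{b+i})` is the barbell with `c = 0` and `K_{c-i}` is complete. -/
theorem stmt_19 (a b c : ℕ) (ha : 1 ≤ a) (hc : 2 ≤ c) :
    csf (barbellG a b c) =
      (c.factorial : ℚ) • csf (barbellG a (b + c) 0) -
        ∑ i ∈ Finset.range (c - 1),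
          (((c.factorial * (c - i - 1) : ℕ) : ℚ) / ((c - i).factorial : ℚ)) •
            (csf (⊤ : SimpleGraph (Fin (c - i))) * csf (barbellG a (b + i) 0)) := by
  classical
  have hab : 0 < a + b := by omega
  funext d
  have hEsmul : ∀ (q : ℚ) (f : SymF), (q • f) d = q * f d := fun _ _ => rfl
  rw [show (((c.factorial : ℚ) • csf (barbellG a (b + c) 0) -
        ∑ i ∈ Finset.range (c - 1),
          (((c.factorial * (c - i - 1) : ℕ) : ℚ) / ((c - i).factorial : ℚ)) •
            (csf (⊤ : SimpleGraph (Fin (c - i))) * csf (barbellG a (b + i) 0))) d)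
      = (c.factorial : ℚ) * csf (barbellG a (b + c) 0) d -
        (∑ i ∈ Finset.range (c - 1),
          (((c.factorial * (c - i - 1) : ℕ) : ℚ) / ((c - i).factorial : ℚ)) •
            (csf (⊤ : SimpleGraph (Fin (c - i))) * csf (barbellG a (b + i) 0))) d from rfl]
  erw [Finset.sum_apply d (Finset.range (c - 1)) (fun i =>
    (((c.factorial * (c - i - 1) : ℕ) : ℚ) / ((c - i).factorial : ℚ)) •
      (csf (⊤ : SimpleGraph (Fin (c - i))) * csf (barbellG a (b + i) 0)))]
  -- rewrite the subtracted terms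
  have hterm : ∀ i ∈ Finset.range (c - 1),
      ((((c.factorial * (c - i - 1) : ℕ) : ℚ) / ((c - i).factorial : ℚ)) •
        (csf (⊤ : SimpleGraph (Fin (c - i))) * csf (barbellG a (b + i) 0))) d
      = ∑ p ∈ Finset.HasAntidiagonal.antidiagonal d, ∑ r ∈ Finset.HasAntidiagonal.antidiagonal p.2, ∑ j ∈ d.support,
          ((c.factorial * (c - i - 1) * SFi (c - i) r.1 * Acnt a b hab p.1 j * Pcnt i j r.2
            : ℕ) : ℚ) := by
    intro i _
    rw [hEsmul]
    have hmul : (csf (⊤ : SimpleGraph (Fin (c - i))) * csf (barbellG a (b + i) 0)) d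
        = ∑ q ∈ Finset.HasAntidiagonal.antidiagonal d,
            csf (⊤ : SimpleGraph (Fin (c - i))) q.1 * csf (barbellG a (b + i) 0) q.2 :=
      MvPowerSeries.coeff_mul d _ _
    rw [hmul, Finset.mul_sum]
    have hq : ∀ q ∈ Finset.HasAntidiagonal.antidiagonal d,
        (((c.factorial * (c - i - 1) : ℕ) : ℚ) / ((c - i).factorial : ℚ)) *
          (csf (⊤ : SimpleGraph (Fin (c - i))) q.1 * csf (barbellG a (b + i) 0) q.2)
        = ∑ r ∈ Finset.HasAntidiagonal.antidiagonal q.2, ∑ j ∈ d.support,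
            ((c.factorial * (c - i - 1) * SFi (c - i) q.1 * Acnt a b hab r.1 j * Pcnt i j r.2
              : ℕ) : ℚ) := by
      intro q hq
      rw [Finset.HasAntidiagonal.mem_antidiagonal] at hq
      rw [csf_top, csf_lollipop a b i ha hab q.2]
      have hsupp : ∀ r ∈ Finset.HasAntidiagonal.antidiagonal q.2,
          ∑ j ∈ q.2.support, ((Acnt a b hab r.1 j * Pcnt i j r.2 : ℕ) : ℚ)
          = ∑ j ∈ d.support, ((Acnt a b hab r.1 j * Pcnt i j r.2 : ℕ) : ℚ) := by
        intro r hr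
        rw [Finset.HasAntidiagonal.mem_antidiagonal] at hr
        exact extend_support a b hab d q.2 r.1 (by rw [← hq]; exact le_add_self)
          (by rw [← hr]; exact le_self_add) _
      rw [Finset.sum_congr rfl hsupp, ← mul_assoc, coef_icnt c i q.1, Finset.mul_sum]
      refine Finset.sum_congr rfl fun r _ => ?_
      rw [Finset.mul_sum]
      refine Finset.sum_congr rfl fun j _ => ?_
      push_cast
      ring
    rw [Finset.sum_congr rfl hq]
    exact rotate_sum d (fun x y z => ∑ j ∈ d.support,
      ((c.factorial * (c - i - 1) * SFi (c - i) x * Acnt a b hab y j * Pcnt i j z : ℕ) : ℚ))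
  rw [Finset.sum_congr rfl hterm]
  rw [csf_barbell a b c ha hab d, csf_lollipop a b c ha hab d]
  rw [eq_sub_iff_add_eq]
  -- reorder sums : ∑_i ∑_p ∑_r ∑_j → ∑_p ∑_j ∑_i ∑_r
  rw [Finset.sum_comm (s := Finset.range (c - 1)) (t := Finset.HasAntidiagonal.antidiagonal d)]
  have hreorder : ∀ p ∈ Finset.HasAntidiagonal.antidiagonal d,
      ∑ i ∈ Finset.range (c - 1), ∑ r ∈ Finset.HasAntidiagonal.antidiagonal p.2, ∑ j ∈ d.support,
        ((c.factorial * (c - i - 1) * SFi (c - i) r.1 * Acnt a b hab p.1 j * Pcnt i j r.2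
          : ℕ) : ℚ)
      = ∑ j ∈ d.support, ∑ i ∈ Finset.range (c - 1), ∑ r ∈ Finset.HasAntidiagonal.antidiagonal p.2,
        ((c.factorial * (c - i - 1) * SFi (c - i) r.1 * Acnt a b hab p.1 j * Pcnt i j r.2
          : ℕ) : ℚ) := by
    intro p _
    have h1 : ∀ i ∈ Finset.range (c - 1),
        ∑ r ∈ Finset.HasAntidiagonal.antidiagonal p.2, ∑ j ∈ d.support,
          ((c.factorial * (c - i - 1) * SFi (c - i) r.1 * Acnt a b hab p.1 j * Pcnt i j r.2
            : ℕ) : ℚ)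
        = ∑ j ∈ d.support, ∑ r ∈ Finset.HasAntidiagonal.antidiagonal p.2,
          ((c.factorial * (c - i - 1) * SFi (c - i) r.1 * Acnt a b hab p.1 j * Pcnt i j r.2
            : ℕ) : ℚ) := fun i _ => Finset.sum_comm
    rw [Finset.sum_congr rfl h1]
    exact Finset.sum_comm
  rw [Finset.sum_congr rfl hreorder, ← Finset.sum_add_distrib, Finset.mul_sum]
  refine Finset.sum_congr rfl fun p hp => ?_
  rw [← Finset.sum_add_distrib, Finset.mul_sum]
  refine Finset.sum_congr rfl fun j hj => ?_
  have hnat : c.factorial * (Acnt a b hab p.1 j * Pcnt c j p.2)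
      = Acnt a b hab p.1 j * Icnt c {j} p.2
        + ∑ i ∈ Finset.range (c - 1), ∑ r ∈ Finset.HasAntidiagonal.antidiagonal p.2,
            c.factorial * (c - i - 1) * SFi (c - i) r.1 * Acnt a b hab p.1 j * Pcnt i j r.2 := by
    have h := local_id c (by omega) j p.2
    calc c.factorial * (Acnt a b hab p.1 j * Pcnt c j p.2)
        = Acnt a b hab p.1 j * (c.factorial * Pcnt c j p.2) := by ring
      _ = Acnt a b hab p.1 j * (Icnt c {j} p.2 + ∑ i ∈ Finset.range (c - 1),
            c.factorial * (c - i - 1) * ∑ r ∈ Finset.HasAntidiagonal.antidiagonal p.2,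
              SFi (c - i) r.1 * Pcnt i j r.2) := by rw [h]
      _ = _ := by
          rw [mul_add]
          congr 1
          rw [Finset.mul_sum]
          refine Finset.sum_congr rfl fun i _ => ?_
          simp only [Finset.mul_sum]
          refine Finset.sum_congr rfl fun r _ => ?_
          ring
  calc ((Acnt a b hab p.1 j * Icnt c {j} p.2 : ℕ) : ℚ)
        + ∑ i ∈ Finset.range (c - 1), ∑ r ∈ Finset.HasAntidiagonal.antidiagonal p.2,
            ((c.factorial * (c - i - 1) * SFi (c - i) r.1 * Acnt a b hab p.1 j * Pcnt i j r.2
              : ℕ) : ℚ)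
      = ((c.factorial * (Acnt a b hab p.1 j * Pcnt c j p.2) : ℕ) : ℚ) := by
        rw [hnat]; push_cast; ring
    _ = (c.factorial : ℚ) * ((Acnt a b hab p.1 j * Pcnt c j p.2 : ℕ) : ℚ) := by
        push_cast; ring
end
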